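/- arXiv:2410.15000 — 9 statements merged into one kernel-verified Lean document; each statement's English description precedes it below -/
import Mathlib

section
/- Let G be a finite simple connected graph of order n and diameter d that is not a complete graph, and let u ≠ v be two vertices of G with N_G[u] = N_G[v]. Then the graph G − v obtained by deleting v is connected with diameter d, and m_G(−1) = n − d − 1 holds if and only if m_{G−v}(−1) = (n − 1) − d − 1 holds. -/
attribute [local instance] Classical.propDecidable

/-- The multiplicity of `-1` as an eigenvalue of the adjacency matrix of `G`,
i.e. the dimension over `ℝ` of the kernel of `A + I`. -/
noncomputable def multNegOne {V : Type*} [Fintype V] (G : SimpleGraph V) : ℕ :=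
  Module.finrank ℝ (LinearMap.ker (Matrix.toLin' (G.adjMatrix ℝ + 1)))

set_option linter.unusedSectionVars false
set_option maxHeartbeats 1600000

section AuxTwin
variable {V : Type*} [Fintype V] {G : SimpleGraph V} {u w : V}

lemma step_lemma (hconn : G.Connected) {x y : V} (hxy : x ≠ y) :
    ∃ z, G.Adj x z ∧ G.dist z y + 1 ≤ G.dist x y := by
  obtain ⟨p, hp⟩ := hconn.exists_walk_length_eq_dist x y
  obtain ⟨z, h, q, rfl⟩ := SimpleGraph.Walk.exists_eq_cons_of_ne hxy p
  refine ⟨z, h, ?_⟩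
  have := SimpleGraph.dist_le q
  simp [SimpleGraph.Walk.length_cons] at hp
  omega


lemma twin_adj (huw : u ≠ w) (hN : ∀ z : V, (z = u ∨ G.Adj u z) ↔ (z = w ∨ G.Adj w z)) :
    G.Adj u w := by
  have := (hN w).mpr (Or.inl rfl)
  rcases this with h | h
  · exact absurd h.symm huw
  · exact h


lemma twin_adj_iff (hN : ∀ z : V, (z = u ∨ G.Adj u z) ↔ (z = w ∨ G.Adj w z))
    {z : V} (hzu : z ≠ u) (hzw : z ≠ w) : G.Adj u z ↔ G.Adj w z := by
  have := hN z
  constructor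
  · intro h; rcases this.mp (Or.inr h) with h' | h'
    · exact absurd h' hzw
    · exact h'
  · intro h; rcases this.mpr (Or.inr h) with h' | h'
    · exact absurd h' hzu
    · exact h'


lemma twin_dist_le (hconn : G.Connected) (huw : u ≠ w)
    (hN : ∀ z : V, (z = u ∨ G.Adj u z) ↔ (z = w ∨ G.Adj w z))
    {x : V} (hxu : x ≠ u) (hxw : x ≠ w) : G.dist x u ≤ G.dist x w := by
  obtain ⟨z, hz, hd⟩ := step_lemma hconn (Ne.symm hxw)
  have e1 : G.dist z x = G.dist x z := SimpleGraph.dist_comm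
  have e2 : G.dist w x = G.dist x w := SimpleGraph.dist_comm
  have e3 : G.dist x u = G.dist u x := SimpleGraph.dist_comm
  rcases eq_or_ne z u with rfl | hzu
  · omega
  · have hzw : z ≠ w := G.ne_of_adj (G.adj_symm hz)
    have hadj : G.Adj u z := (twin_adj_iff hN hzu hzw).mpr hz
    have h1 : G.dist z u ≤ 1 := by
      rw [SimpleGraph.dist_eq_one_iff_adj.mpr (G.adj_symm hadj)]
    have := hconn.dist_triangle (u := x) (v := z) (w := u)
    omega


lemma twin_dist (hconn : G.Connected) (huw : u ≠ w)
    (hN : ∀ z : V, (z = u ∨ G.Adj u z) ↔ (z = w ∨ G.Adj w z))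
    {x : V} (hxu : x ≠ u) (hxw : x ≠ w) : G.dist x u = G.dist x w :=
  le_antisymm (twin_dist_le hconn huw hN hxu hxw)
    (twin_dist_le hconn (Ne.symm huw) (fun z => (hN z).symm) hxw hxu)


lemma induced_walk (hconn : G.Connected) (huw : u ≠ w)
    (hN : ∀ z : V, (z = u ∨ G.Adj u z) ↔ (z = w ∨ G.Adj w z)) :
    ∀ (m : ℕ) (a b : V) (ha : a ≠ w) (hb : b ≠ w), G.dist a b ≤ m →
      ∃ p : (G.induce {x : V | x ≠ w}).Walk ⟨a, ha⟩ ⟨b, hb⟩, p.length ≤ G.dist a b := by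
  intro m
  induction m with
  | zero =>
    intro a b ha hb hd
    have : G.dist a b = 0 := Nat.le_zero.mp hd
    have hab : a = b := ((hconn a b).dist_eq_zero_iff).mp this
    subst hab
    exact ⟨SimpleGraph.Walk.nil, by simp⟩
  | succ m ih =>
    intro a b ha hb hd
    rcases eq_or_ne a b with rfl | hab
    · exact ⟨SimpleGraph.Walk.nil, by simp⟩
    obtain ⟨z, hz, hzd⟩ := step_lemma hconn hab
    rcases eq_or_ne z w with hzw | hzw
    · -- z = w
      rw [hzw] at hz hzd
      rcases eq_or_ne b u with hbu | hbu
      · -- b = u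
        subst b
        have hau : a ≠ u := hab
        have hadj : G.Adj a u := by
          have := (twin_adj_iff hN hau ha).mpr (G.adj_symm hz)
          exact G.adj_symm this
        have hpos : 1 ≤ G.dist a u := (hconn.pos_dist_of_ne hab)
        refine ⟨SimpleGraph.Walk.cons (v := ⟨u, huw⟩) ?_ SimpleGraph.Walk.nil, ?_⟩
        · simpa using hadj
        · simpa using hpos
      · -- b ≠ u
        have hdub : G.dist u b = G.dist w b := by
          have h0 := twin_dist hconn huw hN hbu hb
          have h1 : G.dist u b = G.dist b u := SimpleGraph.dist_comm
          have h2 : G.dist w b = G.dist b w := SimpleGraph.dist_comm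
          omega
        rcases eq_or_ne a u with hau | hau
        · rw [hau] at hzd
          exact (by omega : False).elim
        · have hadj : G.Adj a u := by
            have := (twin_adj_iff hN hau ha).mpr (G.adj_symm hz)
            exact G.adj_symm this
          have hle : G.dist u b ≤ m := by omega
          obtain ⟨q, hq⟩ := ih u b huw hb hle
          refine ⟨SimpleGraph.Walk.cons ?_ q, ?_⟩
          · simpa using hadj
          · simp only [SimpleGraph.Walk.length_cons]
            omega
    · -- z ≠ w
      have hle : G.dist z b ≤ m := by omega
      obtain ⟨q, hq⟩ := ih z b hzw hb hle
      refine ⟨SimpleGraph.Walk.cons ?_ q, ?_⟩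
      · simpa using hz
      · simp only [SimpleGraph.Walk.length_cons]
        omega


lemma induced_reachable (hconn : G.Connected) (huw : u ≠ w)
    (hN : ∀ z : V, (z = u ∨ G.Adj u z) ↔ (z = w ∨ G.Adj w z))
    (a b : {x : V | x ≠ w}) : (G.induce {x : V | x ≠ w}).Reachable a b := by
  obtain ⟨p, -⟩ := induced_walk hconn huw hN (G.dist ↑a ↑b) ↑a ↑b a.2 b.2 le_rfl
  exact ⟨p⟩


lemma induced_connected (hconn : G.Connected) (huw : u ≠ w)
    (hN : ∀ z : V, (z = u ∨ G.Adj u z) ↔ (z = w ∨ G.Adj w z)) :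
    (G.induce {x : V | x ≠ w}).Connected := by
  rw [SimpleGraph.connected_iff]
  exact ⟨fun a b => induced_reachable hconn huw hN a b, ⟨⟨u, huw⟩⟩⟩


lemma induced_dist (hconn : G.Connected) (huw : u ≠ w)
    (hN : ∀ z : V, (z = u ∨ G.Adj u z) ↔ (z = w ∨ G.Adj w z))
    (a b : {x : V | x ≠ w}) : (G.induce {x : V | x ≠ w}).dist a b = G.dist ↑a ↑b := by
  apply le_antisymm
  · obtain ⟨p, hp⟩ := induced_walk hconn huw hN (G.dist ↑a ↑b) ↑a ↑b a.2 b.2 le_rfl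
    exact le_trans (SimpleGraph.dist_le p) hp
  · obtain ⟨p, hp⟩ :=
      (induced_reachable hconn huw hN a b).exists_walk_length_eq_dist
    have := SimpleGraph.dist_le (p.map (SimpleGraph.Embedding.induce {x : V | x ≠ w}).toHom)
    rwa [SimpleGraph.Walk.length_map, hp] at this


lemma exists_dist_eq' (hconn : G.Connected) (c : V) :
    ∀ (m : ℕ) (t : V), G.dist c t = m → ∀ k ≤ m, ∃ x, G.dist c x = k := by
  intro m
  induction m with
  | zero =>
    intro t _ k hk
    exact ⟨c, by simpa [Nat.le_zero.mp hk] using SimpleGraph.dist_self⟩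
  | succ m ih =>
    intro t ht k hk
    rcases eq_or_ne k (m + 1) with rfl | hkm
    · exact ⟨t, ht⟩
    · have htc : t ≠ c := by
        intro h; subst h; simp [SimpleGraph.dist_self] at ht
      obtain ⟨z, hz, hzd⟩ := step_lemma hconn htc
      have h1 : G.dist c z ≤ m := by
        have : G.dist t c = G.dist c t := SimpleGraph.dist_comm
        have : G.dist z c = G.dist c z := SimpleGraph.dist_comm
        omega
      have h2 : m ≤ G.dist c z := by
        have htr := hconn.dist_triangle (u := c) (v := z) (w := t)
        have hd1 : G.dist z t ≤ 1 := le_of_eq (SimpleGraph.dist_eq_one_iff_adj.mpr (G.adj_symm hz))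
        omega
      exact ih z (le_antisymm h1 h2) k (by omega)


lemma card_ge (hconn : G.Connected) (huw : u ≠ w)
    (hN : ∀ z : V, (z = u ∨ G.Adj u z) ↔ (z = w ∨ G.Adj w z))
    {d : ℕ} (hdle : ∀ a b : V, G.dist a b ≤ d)
    {c t : V} (hct : G.dist c t = d) (hcu : c ≠ u) (hcw : c ≠ w) :
    d + 2 ≤ Fintype.card V := by
  have levels : ∀ k ≤ d, ∃ x, G.dist c x = k := exists_dist_eq' hconn c d t hct
  set ℓ := G.dist c u with hℓ
  have hlw : G.dist c w = ℓ := (twin_dist hconn huw hN hcu hcw).symm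
  have hld : ℓ ≤ d := hdle c u
  let F : ℕ → V := fun k => if h : k ≤ d then Classical.choose (levels k h) else c
  have hF : ∀ k (h : k ≤ d), G.dist c (F k) = k := by
    intro k h
    simp only [F, dif_pos h]
    exact Classical.choose_spec (levels k h)
  let g : Fin (d + 2) → V := fun i =>
    if (i : ℕ) = d + 1 then w else if (i : ℕ) = ℓ then u else F i
  have hdg : ∀ i : Fin (d + 2), (i : ℕ) ≠ d + 1 → G.dist c (g i) = (i : ℕ) := by
    intro i hi
    have hik : (i : ℕ) ≤ d := by omega
    by_cases h : (i : ℕ) = ℓ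
    · simp only [g, if_neg hi, if_pos h]; omega
    · simp only [g, if_neg hi, if_neg h]; exact hF i hik
  have hginj : Function.Injective g := by
    intro i j hij
    by_cases hi : (i : ℕ) = d + 1 <;> by_cases hj : (j : ℕ) = d + 1
    · exact Fin.ext (by omega)
    · exfalso
      have hgi : g i = w := by simp only [g, if_pos hi]
      have hd1 : G.dist c (g j) = (j : ℕ) := hdg j hj
      by_cases h : (j : ℕ) = ℓ
      · have : g j = u := by simp only [g, if_neg hj, if_pos h]
        rw [hgi, this] at hij; exact huw hij.symm
      · rw [← hij, hgi, hlw] at hd1; omega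
    · exfalso
      have hgj : g j = w := by simp only [g, if_pos hj]
      have hd1 : G.dist c (g i) = (i : ℕ) := hdg i hi
      by_cases h : (i : ℕ) = ℓ
      · have : g i = u := by simp only [g, if_neg hi, if_pos h]
        rw [hgj, this] at hij; exact huw hij
      · rw [hij, hgj, hlw] at hd1; omega
    · have h1 := hdg i hi
      have h2 := hdg j hj
      rw [hij] at h1
      exact Fin.ext (by omega)
  calc d + 2 = Fintype.card (Fin (d + 2)) := (Fintype.card_fin _).symm
    _ ≤ Fintype.card V := Fintype.card_le_of_injective g hginj


lemma addOne_apply {W : Type*} [DecidableEq W] (H : SimpleGraph W) [DecidableRel H.Adj] (a b : W) :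
    (H.adjMatrix ℝ + 1) a b = if (b = a ∨ H.Adj a b) then 1 else 0 := by
  by_cases h1 : b = a
  · subst h1
    simp [Matrix.add_apply, Matrix.one_apply]
  · by_cases h2 : H.Adj a b <;>
      simp [Matrix.add_apply, Matrix.one_apply, h1, h2, Ne.symm h1]


lemma sum_split (w : V) (f : V → ℝ) :
    ∑ x, f x = f w + ∑ x : {x : V | x ≠ w}, f ↑x := by
  rw [Fintype.sum_eq_add_sum_compl w f]
  congr 1
  exact Finset.sum_subtype _ (by simp) f


lemma finrank_ker_toLin'_irrel {W : Type*} [Fintype W] (i1 i2 : DecidableEq W)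
    (A B : Matrix W W ℝ) (h : A = B) :
    Module.finrank ℝ (LinearMap.ker (@Matrix.toLin' ℝ _ W W i1 _ A)) =
    Module.finrank ℝ (LinearMap.ker (@Matrix.toLin' ℝ _ W W i2 _ B)) := by
  subst h; rw [Subsingleton.elim i1 i2]


lemma mult_eq (huw : u ≠ w)
    (hN : ∀ z : V, (z = u ∨ G.Adj u z) ↔ (z = w ∨ G.Adj w z)) :
    multNegOne G = multNegOne (G.induce {x : V | x ≠ w}) + 1 := by
  unfold multNegOne
  set S : Set V := {x : V | x ≠ w} with hS
  set M : Matrix V V ℝ := G.adjMatrix ℝ + 1 with hMdef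
  set M' : Matrix S S ℝ := (G.induce S).adjMatrix ℝ + 1 with hM'def
  -- entry facts
  have hrow : ∀ z, M u z = M w z := by
    intro z
    rw [hMdef, addOne_apply, addOne_apply]
    exact if_congr (hN z) rfl rfl
  have hsym : ∀ a b, M a b = M b a := by
    intro a b
    rw [hMdef, addOne_apply, addOne_apply]
    apply if_congr _ rfl rfl
    constructor
    · rintro (rfl | h); exact Or.inl rfl; exact Or.inr (G.adj_symm h)
    · rintro (rfl | h); exact Or.inl rfl; exact Or.inr (G.adj_symm h)
  have hcol : ∀ z, M z u = M z w := by
    intro z; rw [hsym z u, hrow z, ← hsym z w]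
  have hM' : ∀ a b : S, M' a b = M (↑a) (↑b) := by
    intro a b
    rw [hM'def, hMdef, addOne_apply, addOne_apply]
    apply if_congr _ rfl rfl
    constructor
    · rintro (rfl | h); exact Or.inl rfl
      exact Or.inr (by simpa using h)
    · rintro (h | h)
      · exact Or.inl (Subtype.ext h)
      · exact Or.inr (by simpa using h)
  -- mulVec as sums
  have hmv : ∀ {W : Type _} [Fintype W] (N : Matrix W W ℝ) (y : W → ℝ) (a : W),
      N.mulVec y a = ∑ x, N a x * y x := by
    intro W _ N y a
    simp [Matrix.mulVec, dotProduct]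
  -- the linear map ψ
  set ψ : (V → ℝ) →ₗ[ℝ] (S → ℝ) :=
    { toFun := fun y x => y ↑x + y w * (if (x : V) = u then 1 else 0),
      map_add' := by
        intro y z; funext x
        simp only [Pi.add_apply]
        split_ifs <;> ring
      map_smul' := by
        intro c y; funext x
        simp only [Pi.smul_apply, smul_eq_mul, RingHom.id_apply]
        split_ifs <;> ring } with hψdef
  have hψ_apply : ∀ (y : V → ℝ) (x : S), ψ y x = y ↑x + y w * (if (x : V) = u then 1 else 0) :=
    fun y x => rfl
  set T := Matrix.toLin' M with hT
  set T' := Matrix.toLin' M' with hT'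
  -- ψ maps ker T into ker T'
  have key_sum : ∀ (c : V), ∑ x : V, M c x * (if x = u then (1:ℝ) else 0) = M c u := by
    intro c
    rw [Finset.sum_congr rfl (fun x _ => by rw [mul_ite, mul_one, mul_zero])]
    simp
  have h1 : ∀ y : V → ℝ, T y = 0 → T' (ψ y) = 0 := by
    intro y hy
    have hy' : ∀ a : V, ∑ x, M a x * y x = 0 := by
      intro a
      have := congrFun hy a
      rwa [hT, Matrix.toLin'_apply, hmv] at this
    funext a
    rw [hT', Matrix.toLin'_apply, hmv]
    have estep : ∀ x : S, M' a x * ψ y x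
        = M ↑a ↑x * (y ↑x + y w * (if (x : V) = u then 1 else 0)) := by
      intro x; rw [hM', hψ_apply]
    rw [Finset.sum_congr rfl (fun x _ => estep x)]
    have hsplit := sum_split w (fun x => M ↑a x * (y x + y w * (if x = u then 1 else 0)))
    have hfull : ∑ x : V, M ↑a x * (y x + y w * (if x = u then 1 else 0))
        = y w * M ↑a u := by
      calc ∑ x : V, M ↑a x * (y x + y w * (if x = u then 1 else 0))
          = ∑ x : V, (M ↑a x * y x + y w * (M ↑a x * (if x = u then 1 else 0))) := by
            apply Finset.sum_congr rfl; intros; ring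
        _ = (∑ x : V, M ↑a x * y x) + y w * ∑ x : V, M ↑a x * (if x = u then 1 else 0) := by
            rw [Finset.sum_add_distrib, Finset.mul_sum]
        _ = 0 + y w * M ↑a u := by rw [hy' a, key_sum]
        _ = y w * M ↑a u := by ring
    have hwterm : M ↑a w * (y w + y w * (if w = u then 1 else 0)) = M ↑a u * y w := by
      rw [if_neg (Ne.symm huw), hcol ↑a]
      ring
    rw [hfull, hwterm] at hsplit
    show (∑ x : S, M ↑a ↑x * (y ↑x + y w * (if (x : V) = u then 1 else 0))) = 0
    have := hsplit
    linarith [hsplit]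
  -- surjectivity data
  have h2 : ∀ x' : S → ℝ, T' x' = 0 →
      ∃ y : V → ℝ, T y = 0 ∧ ψ y = x' := by
    intro x' hx'
    have hx'' : ∀ a : S, ∑ x : S, M' a x * x' x = 0 := by
      intro a
      have := congrFun hx' a
      rwa [hT', Matrix.toLin'_apply, hmv] at this
    set y : V → ℝ := fun z => if h : z = w then 0 else x' ⟨z, h⟩ with hy
    have hyw : y w = 0 := by simp [hy]
    have hyz : ∀ x : S, y ↑x = x' x := by
      intro x
      simp only [hy, dif_neg x.2]
    have claim : ∀ a : V, a ≠ w → ∑ x : V, M a x * y x = 0 := by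
      intro a haw
      have hsplit := sum_split w (fun x => M a x * y x)
      rw [hyw, mul_zero] at hsplit
      have : ∑ x : S, M a ↑x * y ↑x = ∑ x : S, M' ⟨a, haw⟩ x * x' x := by
        apply Finset.sum_congr rfl
        intro x _
        rw [hM', hyz]
      rw [hsplit, this, hx'' ⟨a, haw⟩]
      norm_num
    refine ⟨y, ?_, ?_⟩
    · funext a
      rw [hT, Matrix.toLin'_apply, hmv]
      show (∑ x : V, M a x * y x) = 0
      by_cases haw : a = w
      · subst haw
        rw [Finset.sum_congr rfl (fun x _ => by rw [← hrow x])]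
        exact claim u huw
      · exact claim a haw
    · funext x
      rw [hψ_apply, hyw, hyz]
      ring
  -- the special kernel vector
  set f : V → ℝ := fun z => (if z = u then 1 else 0) - (if z = w then 1 else 0) with hf
  have hfu : f u = 1 := by simp [hf, huw]
  have hfw : f w = -1 := by simp [hf, Ne.symm huw]
  have hfz : ∀ z, z ≠ u → z ≠ w → f z = 0 := by
    intro z h1 h2; simp [hf, h1, h2]
  have hfK : T f = 0 := by
    funext a
    rw [hT, Matrix.toLin'_apply, hmv]
    have : ∀ x : V, M a x * f x
        = M a x * (if x = u then (1:ℝ) else 0) - M a x * (if x = w then (1:ℝ) else 0) := by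
      intro x; rw [hf]; ring
    rw [Finset.sum_congr rfl (fun x _ => this x), Finset.sum_sub_distrib, key_sum]
    have key_sum2 : ∑ x : V, M a x * (if x = w then (1:ℝ) else 0) = M a w := by
      rw [Finset.sum_congr rfl (fun x _ => by rw [mul_ite, mul_one, mul_zero])]
      simp
    rw [key_sum2, hcol]
    show M a w - M a w = 0
    ring
  have hfψ : ψ f = 0 := by
    funext x
    rw [hψ_apply, hfw, Pi.zero_apply]
    rcases eq_or_ne (x : V) u with hxu | hxu
    · rw [if_pos hxu, hxu, hfu]; ring
    · rw [if_neg hxu, hfz ↑x hxu x.2]; ring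
  have hker_char : ∀ y : V → ℝ, ψ y = 0 → y = (-(y w)) • f := by
    intro y hy0
    funext z
    have happ : ∀ x : S, y ↑x + y w * (if (x : V) = u then 1 else 0) = 0 := by
      intro x
      have := congrFun hy0 x
      rwa [hψ_apply] at this
    rcases eq_or_ne z w with rfl | hzw
    · simp only [Pi.smul_apply, smul_eq_mul, hfw]; ring
    · have := happ ⟨z, hzw⟩
      rcases eq_or_ne z u with rfl | hzu
      · rw [if_pos rfl] at this
        simp only [Pi.smul_apply, smul_eq_mul, hfu]
        linarith
      · rw [if_neg hzu] at this
        simp only [Pi.smul_apply, smul_eq_mul, hfz z hzu hzw]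
        linarith
  -- assemble with rank-nullity
  set K := LinearMap.ker T with hK
  set K' := LinearMap.ker T' with hK'
  have hmemK : ∀ y : V → ℝ, y ∈ K ↔ T y = 0 := fun y => LinearMap.mem_ker
  have hmemK' : ∀ x' : S → ℝ, x' ∈ K' ↔ T' x' = 0 := fun x' => LinearMap.mem_ker
  set φ : K →ₗ[ℝ] K' :=
    LinearMap.codRestrict K' (ψ.comp K.subtype)
      (fun y => (hmemK' _).mpr (h1 _ ((hmemK _).mp y.2))) with hφ
  have hφ_apply : ∀ y : K, (φ y : S → ℝ) = ψ ↑y := fun y => rfl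
  have hsurj : Function.Surjective φ := by
    rintro ⟨x', hx'⟩
    obtain ⟨y, hyT, hyψ⟩ := h2 x' ((hmemK' _).mp hx')
    exact ⟨⟨y, (hmemK _).mpr hyT⟩, Subtype.ext (by rw [hφ_apply]; exact hyψ)⟩
  have hfK' : f ∈ K := (hmemK _).mpr hfK
  have hfne : (⟨f, hfK'⟩ : K) ≠ 0 := by
    intro h
    have : f = 0 := congrArg Subtype.val h
    have := congrFun this u
    rw [hfu] at this
    norm_num at this
  have hkerφ : LinearMap.ker φ = Submodule.span ℝ {(⟨f, hfK'⟩ : K)} := by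
    ext x
    simp only [LinearMap.mem_ker, Submodule.mem_span_singleton]
    constructor
    · intro h
      have hψy : ψ ↑x = 0 := by
        have := congrArg Subtype.val h
        rw [hφ_apply] at this
        exact this
      refine ⟨-((x : V → ℝ) w), Subtype.ext ?_⟩
      rw [Submodule.coe_smul]
      exact (hker_char _ hψy).symm
    · rintro ⟨c, hc⟩
      apply Subtype.ext
      rw [hφ_apply]
      have hcoe := congrArg Subtype.val hc
      rw [Submodule.coe_smul] at hcoe
      have hyc : (x : V → ℝ) = c • f := hcoe.symm
      rw [hyc, map_smul, hfψ, smul_zero]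
      rfl
  have hrank : Module.finrank ℝ K = Module.finrank ℝ K' + 1 := by
    have hrn := LinearMap.finrank_range_add_finrank_ker φ
    rw [LinearMap.range_eq_top.mpr hsurj, finrank_top, hkerφ,
        finrank_span_singleton hfne] at hrn
    exact hrn.symm
  rw [hK', hT', hM'def] at hrank
  rw [hrank]
  congr 1
  refine finrank_ker_toLin'_irrel _ _ _ _ ?_
  ext a b
  by_cases h : a = b <;>
    simp [Matrix.add_apply, Matrix.one_apply, SimpleGraph.adjMatrix_apply, h]


end AuxTwin

theorem stmt_1 {V : Type*} [Fintype V] (G : SimpleGraph V) (n d : ℕ)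
    (hconn : G.Connected)
    (hcard : Fintype.card V = n)
    (hdiam_le : ∀ a b : V, G.dist a b ≤ d)
    (hdiam_ex : ∃ a b : V, G.dist a b = d)
    (hnotcomplete : ∃ a b : V, a ≠ b ∧ ¬ G.Adj a b)
    (u w : V) (huw : u ≠ w)
    (hN : ∀ z : V, (z = u ∨ G.Adj u z) ↔ (z = w ∨ G.Adj w z)) :
    (G.induce {x : V | x ≠ w}).Connected ∧
    (∀ a b : {x : V | x ≠ w}, (G.induce {x : V | x ≠ w}).dist a b ≤ d) ∧
    (∃ a b : {x : V | x ≠ w}, (G.induce {x : V | x ≠ w}).dist a b = d) ∧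
    (multNegOne G = n - d - 1 ↔ multNegOne (G.induce {x : V | x ≠ w}) = (n - 1) - d - 1) := by
  obtain ⟨p, q, hpq, hnadj⟩ := hnotcomplete
  have hd2 : 2 ≤ d := by
    have h1 : G.dist p q ≤ d := hdiam_le p q
    have h0 : G.dist p q ≠ 0 := fun h => hpq ((hconn p q).dist_eq_zero_iff.mp h)
    have h1' : G.dist p q ≠ 1 := fun h => hnadj (SimpleGraph.dist_eq_one_iff_adj.mp h)
    omega
  obtain ⟨a, b, hab⟩ := hdiam_ex
  have huwadj : G.Adj u w := twin_adj huw hN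
  have hduw : G.dist u w = 1 := SimpleGraph.dist_eq_one_iff_adj.mpr huwadj
  have hdwu : G.dist w u = 1 := SimpleGraph.dist_eq_one_iff_adj.mpr (G.adj_symm huwadj)
  have hpair : ∃ (a' b' : V), a' ≠ w ∧ b' ≠ w ∧ G.dist a' b' = d := by
    by_cases haw : a = w
    · rw [haw] at hab
      have hbw : b ≠ w := by
        rintro rfl
        rw [SimpleGraph.dist_self] at hab
        omega
      have hbu : b ≠ u := by
        intro h
        rw [h] at hab
        omega
      refine ⟨u, b, huw, hbw, ?_⟩
      have h1 : G.dist b u = G.dist b w := twin_dist hconn huw hN hbu hbw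
      have h2 : G.dist u b = G.dist b u := SimpleGraph.dist_comm
      have h3 : G.dist w b = G.dist b w := SimpleGraph.dist_comm
      omega
    · by_cases hbw : b = w
      · rw [hbw] at hab
        have hau : a ≠ u := by
          intro h
          rw [h] at hab
          omega
        refine ⟨a, u, haw, huw, ?_⟩
        have h1 : G.dist a u = G.dist a w := twin_dist hconn huw hN hau haw
        omega
      · exact ⟨a, b, haw, hbw, hab⟩
  obtain ⟨a', b', ha', hb', hd'⟩ := hpair
  have hcardge : d + 2 ≤ Fintype.card V := by
    by_cases hau : a' = u
    · subst hau
      have hbu : b' ≠ a' := by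
        rintro rfl
        rw [SimpleGraph.dist_self] at hd'
        omega
      have hda : G.dist b' a' = d := by
        have : G.dist a' b' = G.dist b' a' := SimpleGraph.dist_comm
        omega
      exact card_ge hconn huw hN hdiam_le hda hbu hb'
    · exact card_ge hconn huw hN hdiam_le hd' hau ha'
  have hn : d + 2 ≤ n := hcard ▸ hcardge
  refine ⟨induced_connected hconn huw hN, ?_, ?_, ?_⟩
  · intro x y
    rw [induced_dist hconn huw hN]
    exact hdiam_le _ _
  · exact ⟨⟨a', ha'⟩, ⟨b', hb'⟩, by rw [induced_dist hconn huw hN]; exact hd'⟩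
  · rw [mult_eq huw hN]
    omega
end

section
/- Let G be a finite simple connected graph of order n and diameter d with m_G(−1) = n − d − 1, let P be a diameter path of G (an induced path on d + 1 vertices realizing the diameter), and let H be an induced subgraph of G with V(P) ⊆ V(H). Then rank(A(H) + I) ≥ rank(A(G) + I) − 1, where A(·) denotes the adjacency matrix over ℝ and I the identity matrix. -/
attribute [local instance] Classical.propDecidable

theorem stmt_2 {V : Type*} [Fintype V] (G : SimpleGraph V) (n d : ℕ)
    (hconn : G.Connected)
    (hcard : Fintype.card V = n)
    (hdiam : ∀ a b : V, G.dist a b ≤ d)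
    (v : ℕ → V)
    (hpath : ∀ i ∈ Finset.Icc 1 (d + 1), ∀ j ∈ Finset.Icc 1 (d + 1),
      G.dist (v i) (v j) = max i j - min i j)
    (hmult : multNegOne G = n - d - 1)
    (s : Set V) (hs : ∀ i ∈ Finset.Icc 1 (d + 1), v i ∈ s) :
    Matrix.rank (G.adjMatrix ℝ + 1) - 1 ≤ Matrix.rank ((G.induce s).adjMatrix ℝ + 1) := by
  classical
  -- injectivity of v on the path
  have hinj : ∀ i ∈ Finset.Icc 1 (d + 1), ∀ j ∈ Finset.Icc 1 (d + 1), v i = v j → i = j := by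
    intro i hi j hj hv
    have h := hpath i hi j hj
    rw [hv, hconn.dist_eq_zero_iff.mpr rfl] at h
    omega
  -- n ≥ d + 1
  have hn : d + 1 ≤ n := by
    have hcle : (Finset.Icc 1 (d + 1)).card ≤ Fintype.card V := by
      have := Finset.card_le_card_of_injOn v (fun a _ => Finset.mem_univ (v a))
        (fun a ha b hb hab => hinj a ha b hb hab)
      simpa [Finset.card_univ] using this
    simpa [hcard, Nat.card_Icc] using hcle
  -- rank + nullity = n for A(G) + I
  have hrk : (G.adjMatrix ℝ + 1).rank + multNegOne G = n := by
    have h := LinearMap.finrank_range_add_finrank_ker (Matrix.toLin' (G.adjMatrix ℝ + 1))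
    rw [Matrix.toLin'_apply'] at h
    rw [Matrix.rank, multNegOne, Matrix.toLin'_apply']
    simpa [Module.finrank_fintype_fun_eq_card, hcard] using h
  have hrkG : (G.adjMatrix ℝ + 1).rank ≤ d + 1 := by omega
  -- it suffices to show d ≤ rank of the induced matrix
  suffices hd : (d : ℕ) ≤ Matrix.rank ((G.induce s).adjMatrix ℝ + 1) by omega
  set B : Matrix s s ℝ := (G.induce s).adjMatrix ℝ + 1 with hB
  have hmem : ∀ k : ℕ, 1 ≤ k → k ≤ d + 1 → v k ∈ s := fun k h1 h2 =>
    hs k (Finset.mem_Icc.mpr ⟨h1, h2⟩)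
  let r : Fin d → s := fun i => ⟨v (i.1 + 1), hmem _ (by omega) (by omega)⟩
  let c : Fin d → s := fun j => ⟨v (j.1 + 2), hmem _ (by omega) (by omega)⟩
  set M : Matrix (Fin d) (Fin d) ℝ := B.submatrix r c with hM
  have hBentry : ∀ x y : s, B x y =
      (if G.Adj (x : V) (y : V) then (1 : ℝ) else 0) + (if x = y then 1 else 0) := by
    intro x y
    simp [hB, Matrix.one_apply, Matrix.add_apply]
  have hmemIcc : ∀ k : ℕ, 1 ≤ k → k ≤ d + 1 → k ∈ Finset.Icc 1 (d + 1) := fun k h1 h2 =>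
    Finset.mem_Icc.mpr ⟨h1, h2⟩
  -- entries of M
  have hMentry : ∀ i j : Fin d, M i j =
      (if G.Adj (v (i.1 + 1)) (v (j.1 + 2)) then (1 : ℝ) else 0) +
      (if v (i.1 + 1) = v (j.1 + 2) then 1 else 0) := by
    intro i j
    rw [hM, Matrix.submatrix_apply, hBentry]
    congr 1
    simp [r, c, Subtype.ext_iff]
  have hAdj : ∀ a b : ℕ, a ∈ Finset.Icc 1 (d + 1) → b ∈ Finset.Icc 1 (d + 1) →
      (G.Adj (v a) (v b) ↔ max a b - min a b = 1) := by
    intro a b ha hb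
    rw [← SimpleGraph.dist_eq_one_iff_adj, hpath a ha b hb]
  -- M is lower triangular with 1's on the diagonal
  have htri : M.BlockTriangular OrderDual.toDual := by
    intro i j hij
    have hij' : (i : ℕ) < (j : ℕ) := hij
    rw [hMentry]
    have h1 : ¬ G.Adj (v (i.1 + 1)) (v (j.1 + 2)) := by
      rw [hAdj _ _ (hmemIcc _ (by omega) (by omega)) (hmemIcc _ (by omega) (by omega))]
      omega
    have h2 : v (i.1 + 1) ≠ v (j.1 + 2) := by
      intro h
      have := hinj _ (hmemIcc _ (by omega) (by omega)) _ (hmemIcc _ (by omega) (by omega)) h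
      omega
    simp [h1, h2]
  have hdiag : ∀ i : Fin d, M i i = 1 := by
    intro i
    rw [hMentry]
    have h1 : G.Adj (v (i.1 + 1)) (v (i.1 + 2)) := by
      rw [hAdj _ _ (hmemIcc _ (by omega) (by omega)) (hmemIcc _ (by omega) (by omega))]
      omega
    have h2 : v (i.1 + 1) ≠ v (i.1 + 2) := by
      intro h
      have := hinj _ (hmemIcc _ (by omega) (by omega)) _ (hmemIcc _ (by omega) (by omega)) h
      omega
    simp [h1, h2]
  have hdet : M.det = 1 := by
    rw [Matrix.det_of_lowerTriangular M htri]
    simp [hdiag]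
  have hUnit : IsUnit M := by
    rw [Matrix.isUnit_iff_isUnit_det, hdet]
    exact isUnit_one
  -- columns of M are linearly independent
  have hcolsM : LinearIndependent ℝ (fun j => M.transpose j) :=
    Matrix.linearIndependent_cols_iff_isUnit.mpr hUnit
  -- hence the corresponding columns of B are linearly independent
  let f : Fin d → (s → ℝ) := fun j => B.transpose (c j)
  have hfcomp : (LinearMap.funLeft ℝ ℝ r : (s → ℝ) →ₗ[ℝ] (Fin d → ℝ)) ∘ f = fun j => M.transpose j := by
    funext j
    funext i
    simp [f, LinearMap.funLeft, hM, Matrix.transpose_apply, Matrix.submatrix_apply]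
  have hcolsB : LinearIndependent ℝ f := by
    apply LinearIndependent.of_comp (LinearMap.funLeft ℝ ℝ r)
    rw [show (⇑(LinearMap.funLeft ℝ ℝ r) ∘ f) = (LinearMap.funLeft ℝ ℝ r : (s → ℝ) →ₗ[ℝ] (Fin d → ℝ)) ∘ f from rfl, hfcomp]
    exact hcolsM
  -- conclude: rank B ≥ d
  have hspan : Submodule.span ℝ (Set.range f) ≤ Submodule.span ℝ (Set.range B.transpose) := by
    apply Submodule.span_mono
    rintro _ ⟨j, rfl⟩
    exact ⟨c j, rfl⟩
  have hfr : Module.finrank ℝ (Submodule.span ℝ (Set.range f)) = d := by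
    rw [finrank_span_eq_card hcolsB, Fintype.card_fin]
  rw [Matrix.rank_eq_finrank_span_cols]
  calc d = Module.finrank ℝ (Submodule.span ℝ (Set.range f)) := hfr.symm
    _ ≤ Module.finrank ℝ (Submodule.span ℝ (Set.range B.transpose)) := Submodule.finrank_mono hspan
end

section
/- Let G be a finite simple connected graph of order n and diameter d. If d is not congruent to 1 modulo 3 (equivalently, −1 is not an eigenvalue of the path on d + 1 vertices), then m_G(−1) ≤ n − d − 1. -/
attribute [local instance] Classical.propDecidable


lemma distGetVertLe {V : Type*} {G : SimpleGraph V} (hconn : G.Connected) {a b : V}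
    (w : G.Walk a b) (i k : ℕ) : G.dist (w.getVert i) (w.getVert (i + k)) ≤ k := by
  induction k with
  | zero => simp
  | succ k ih =>
    by_cases h : i + k < w.length
    · have hadj := w.adj_getVert_succ h
      have h1 : G.dist (w.getVert (i+k)) (w.getVert (i+k+1)) = 1 :=
        SimpleGraph.dist_eq_one_iff_adj.mpr hadj
      have := hconn.dist_triangle (u := w.getVert i) (v := w.getVert (i+k)) (w := w.getVert (i+k+1))
      rw [show i + (k+1) = i + k + 1 by omega]
      omega
    · rw [show i + (k+1) = (i+k) + 1 by omega,
        w.getVert_of_length_le (by omega : w.length ≤ i + k + 1)]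
      have := ih
      rw [w.getVert_of_length_le (by omega : w.length ≤ i + k)] at this
      omega


noncomputable def pcoef (k : ℕ) : ℝ := if k % 3 = 0 then 1 else if k % 3 = 1 then -1 else 0

lemma pcoef_rec (m : ℕ) : pcoef (m+2) = -pcoef (m+1) - pcoef m := by
  unfold pcoef
  have h : m % 3 = 0 ∨ m % 3 = 1 ∨ m % 3 = 2 := by omega
  rcases h with h|h|h <;>
    rw [show (m+1)%3 = (m%3+1)%3 by omega, show (m+2)%3 = (m%3+2)%3 by omega, h] <;> norm_num

lemma pathKer {d : ℕ} (hd3 : d % 3 ≠ 1) (B : Matrix (Fin (d+1)) (Fin (d+1)) ℝ)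
    (hB : ∀ i j : Fin (d+1), B i j =
      (if i = j then 1 else 0) + (if (i:ℕ)+1 = j ∨ (j:ℕ)+1 = i then 1 else 0))
    (x : Fin (d+1) → ℝ) (hx : B.mulVec x = 0) : x = 0 := by
  classical
  set y : ℕ → ℝ := fun k => if h : k < d + 1 then x ⟨k, h⟩ else 0 with hy
  have hsum : ∀ c : ℕ, (∑ j : Fin (d+1), (if c = (j:ℕ) then (1:ℝ) else 0) * x j) = y c := by
    intro c
    by_cases h : c < d + 1
    · rw [show y c = x ⟨c, h⟩ from dif_pos h]
      rw [Finset.sum_eq_single (⟨c, h⟩ : Fin (d+1))]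
      · simp
      · intro j _ hj
        have : c ≠ (j:ℕ) := by
          intro hc; apply hj; exact Fin.ext hc.symm
        simp [this]
      · simp
    · have h2 : ∀ j : Fin (d+1), c ≠ (j:ℕ) := fun j hc => h (hc ▸ j.isLt)
      rw [show y c = 0 from dif_neg h]
      apply Finset.sum_eq_zero
      intro j _
      simp [h2 j]
  -- row equations
  have hrow : ∀ i : Fin (d+1),
      x i + y ((i:ℕ)+1) + (∑ j : Fin (d+1), (if (j:ℕ)+1 = (i:ℕ) then (1:ℝ) else 0) * x j) = 0 := by
    intro i
    have h0 : B.mulVec x i = 0 := congrFun hx i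
    rw [Matrix.mulVec, dotProduct] at h0
    have hexp : ∀ j : Fin (d+1), B i j * x j =
        (if i = j then x j else 0) + (if (i:ℕ)+1 = (j:ℕ) then (1:ℝ) else 0) * x j
          + (if (j:ℕ)+1 = (i:ℕ) then (1:ℝ) else 0) * x j := by
      intro j
      rw [hB i j]
      by_cases hij : i = j
      · subst hij
        simp [show ¬((i:ℕ)+1 = (i:ℕ)) from by omega]
      · have hij' : (i:ℕ) ≠ (j:ℕ) := fun h => hij (Fin.ext h)
        by_cases hP : (i:ℕ)+1 = (j:ℕ) <;> by_cases hQ : (j:ℕ)+1 = (i:ℕ) <;>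
          first
          | omega
          | (simp [hij, hP, hQ]; try ring)
    rw [Finset.sum_congr rfl (fun j _ => hexp j)] at h0
    rw [Finset.sum_add_distrib, Finset.sum_add_distrib, Finset.sum_ite_eq] at h0
    rw [hsum ((i:ℕ)+1)] at h0
    simpa using h0
  have hx0 : ∀ k : ℕ, (h : k < d + 1) → x ⟨k, h⟩ = y k := by intro k h; simp only [hy]; rw [dif_pos h]
  have hrow0 : y 0 + y 1 = 0 := by
    have := hrow ⟨0, by omega⟩
    rw [hx0 0 (by omega)] at this
    simpa using this
  have hrowS : ∀ m : ℕ, m + 1 ≤ d → y m + y (m+1) + y (m+2) = 0 := by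
    intro m hm
    have := hrow ⟨m+1, by omega⟩
    rw [hx0 (m+1) (by omega)] at this
    have hconv : (∑ j : Fin (d+1), (if (j:ℕ)+1 = ((⟨m+1, by omega⟩ : Fin (d+1)):ℕ) then (1:ℝ) else 0) * x j)
        = y m := by
      rw [← hsum m]
      apply Finset.sum_congr rfl
      intro j _
      have hiff : ((j:ℕ) + 1 = ((⟨m+1, by omega⟩ : Fin (d+1)):ℕ)) ↔ (m = (j:ℕ)) := by
        simp only [Fin.val_mk]; omega
      simp only [hiff]
    rw [hconv] at this
    push_cast at this
    linarith
  -- solve recurrence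
  have hk : ∀ k : ℕ, k ≤ d → y k = y 0 * pcoef k := by
    intro k
    induction k using Nat.strong_induction_on with
    | _ k ih =>
      intro hkd
      match k with
      | 0 => simp [pcoef]
      | 1 =>
        have : pcoef 1 = -1 := by norm_num [pcoef]
        rw [this]; linarith [hrow0]
      | (m+2) =>
        have h1 := ih m (by omega) (by omega)
        have h2 := ih (m+1) (by omega) (by omega)
        have h3 := hrowS m (by omega)
        rw [pcoef_rec]
        rw [h1, h2] at h3
        linarith
  -- boundary
  have hy0 : y 0 = 0 := by
    rcases Nat.eq_zero_or_pos d with hd0 | hd0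
    · subst hd0
      have h1 : y 1 = 0 := dif_neg (by omega)
      linarith [hrow0]
    · obtain ⟨m, rfl⟩ : ∃ m, d = m + 1 := ⟨d - 1, by omega⟩
      have h3 := hrowS m (le_refl _)
      have h4 : y (m+2) = 0 := dif_neg (by omega)
      have h5 := hk m (by omega)
      have h6 := hk (m+1) (by omega)
      rw [h4, h5, h6] at h3
      have hm3 : m % 3 = 1 ∨ m % 3 = 2 := by omega
      have hpm : pcoef m + pcoef (m+1) ≠ 0 := by
        unfold pcoef
        rcases hm3 with h|h <;>
          rw [show (m+1)%3 = (m%3+1)%3 from by omega, h] <;> norm_num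
      have hmul : y 0 * (pcoef m + pcoef (m+1)) = 0 := by linarith
      rcases mul_eq_zero.mp hmul with h|h
      · exact h
      · exact absurd h hpm
  funext i
  have := hk i (by omega)
  rw [hy0, zero_mul] at this
  rw [← hx0 i i.isLt] at this
  simpa using this


theorem stmt_3 {V : Type*} [Fintype V] (G : SimpleGraph V) (n d : ℕ)
    (hconn : G.Connected)
    (hcard : Fintype.card V = n)
    (hd3 : d % 3 ≠ 1)
    (hdiam_le : ∀ a b : V, G.dist a b ≤ d)
    (hdiam_ex : ∃ a b : V, G.dist a b = d) :
    multNegOne G ≤ n - d - 1 := by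
  obtain ⟨a, b, hab⟩ := hdiam_ex
  obtain ⟨w, hw⟩ := hconn.exists_walk_length_eq_dist a b
  rw [hab] at hw
  set p : Fin (d+1) → V := fun i => w.getVert i with hp
  have hpdef : ∀ i : Fin (d+1), p i = w.getVert i := fun i => rfl
  have hdistp : ∀ i j : Fin (d+1), (i:ℕ) ≤ (j:ℕ) → G.dist (p i) (p j) = (j:ℕ) - (i:ℕ) := by
    intro i j hij
    have hjd := j.isLt
    have hid := i.isLt
    have hle : G.dist (p i) (p j) ≤ (j:ℕ) - (i:ℕ) := by
      have := distGetVertLe hconn w i ((j:ℕ) - (i:ℕ))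
      rwa [show (i:ℕ) + ((j:ℕ) - (i:ℕ)) = (j:ℕ) from by omega] at this
    have h1 : G.dist a (p i) ≤ (i:ℕ) := by
      have := distGetVertLe hconn w 0 (i:ℕ)
      rwa [Nat.zero_add, w.getVert_zero] at this
    have h2 : G.dist (p j) b ≤ d - (j:ℕ) := by
      have := distGetVertLe hconn w (j:ℕ) (d - (j:ℕ))
      rwa [show (j:ℕ) + (d - (j:ℕ)) = w.length from by omega, w.getVert_length] at this
    have ht1 := hconn.dist_triangle (u := a) (v := p i) (w := p j)
    have ht2 := hconn.dist_triangle (u := a) (v := p j) (w := b)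
    rw [hab] at ht2
    omega
  have hpinj : Function.Injective p := by
    intro i j hij
    rcases le_total (i:ℕ) (j:ℕ) with h|h
    · have := hdistp i j h; rw [hij, SimpleGraph.dist_self] at this
      exact Fin.ext (by omega)
    · have := hdistp j i h; rw [hij, SimpleGraph.dist_self] at this
      exact Fin.ext (by omega)
  have hadj : ∀ i j : Fin (d+1), G.Adj (p i) (p j) ↔ ((i:ℕ)+1 = (j:ℕ) ∨ (j:ℕ)+1 = (i:ℕ)) := by
    intro i j
    constructor
    · intro h
      have h1 : G.dist (p i) (p j) = 1 := SimpleGraph.dist_eq_one_iff_adj.mpr h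
      rcases le_total (i:ℕ) (j:ℕ) with hle|hle
      · left; have := hdistp i j hle; omega
      · right
        have := hdistp j i hle
        rw [SimpleGraph.dist_comm] at h1
        omega
    · intro h
      have hjd := j.isLt
      have hid := i.isLt
      rcases h with h|h
      · have hlt : (i:ℕ) < w.length := by omega
        have hA := w.adj_getVert_succ hlt
        have hj : w.getVert ((i:ℕ)+1) = p j := by rw [hpdef, h]
        rwa [hj, ← hpdef] at hA
      · have hlt : (j:ℕ) < w.length := by omega
        have hA := w.adj_getVert_succ hlt
        have hi : w.getVert ((j:ℕ)+1) = p i := by rw [hpdef, h]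
        rw [hi, ← hpdef] at hA
        exact hA.symm
  set M : Matrix V V ℝ := G.adjMatrix ℝ + 1 with hM
  set B : Matrix (Fin (d+1)) (Fin (d+1)) ℝ := M.submatrix p p with hBdef
  have hBentry : ∀ i j : Fin (d+1), B i j =
      (if i = j then 1 else 0) + (if (i:ℕ)+1 = (j:ℕ) ∨ (j:ℕ)+1 = (i:ℕ) then 1 else 0) := by
    intro i j
    have e0 : B i j = (if G.Adj (p i) (p j) then (1:ℝ) else 0) + (if p i = p j then (1:ℝ) else 0) := by
      rw [hBdef, Matrix.submatrix_apply, hM]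
      simp [Matrix.one_apply]
    rw [e0]
    have e1 : (if p i = p j then (1:ℝ) else 0) = (if i = j then (1:ℝ) else 0) := by
      simp [hpinj.eq_iff]
    have e2 : (if G.Adj (p i) (p j) then (1:ℝ) else 0)
        = (if (i:ℕ)+1 = (j:ℕ) ∨ (j:ℕ)+1 = (i:ℕ) then (1:ℝ) else 0) := by
      simp only [hadj i j]
    rw [e1, e2, add_comm]
  have hBrank : B.rank = d + 1 := by
    have hker : LinearMap.ker B.mulVecLin = ⊥ := by
      apply LinearMap.ker_eq_bot'.mpr
      intro x hx
      exact pathKer hd3 B hBentry x (by rwa [Matrix.mulVecLin_apply] at hx)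
    have hinj : Function.Injective B.mulVecLin := LinearMap.ker_eq_bot.mp hker
    have hsurj : Function.Surjective B.mulVecLin := (LinearMap.injective_iff_surjective).mp hinj
    have hrtop : LinearMap.range B.mulVecLin = ⊤ := LinearMap.range_eq_top.mpr hsurj
    show Module.finrank ℝ (LinearMap.range B.mulVecLin) = d + 1
    rw [hrtop, finrank_top, Module.finrank_fintype_fun_eq_card, Fintype.card_fin]
  have hchain : B.rank ≤ M.rank := by
    have key : B = (1 : Matrix V V ℝ).submatrix p (⇑(Equiv.refl V)) * M.submatrix (⇑(Equiv.refl V)) p := by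
      rw [Matrix.submatrix_mul_equiv, Matrix.one_mul, hBdef]
    have key2 : M.submatrix (⇑(Equiv.refl V)) p = M * (1 : Matrix V V ℝ).submatrix (⇑(Equiv.refl V)) p := by
      have h := Matrix.submatrix_mul_equiv M (1 : Matrix V V ℝ) _root_.id (Equiv.refl V) p
      rw [Matrix.mul_one] at h
      simp only [Equiv.coe_refl] at h ⊢
      rw [Matrix.submatrix_id_id] at h
      rw [← h]
    calc B.rank = ((1 : Matrix V V ℝ).submatrix p (⇑(Equiv.refl V)) * M.submatrix (⇑(Equiv.refl V)) p).rank := by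
          rw [← key]
      _ ≤ (M.submatrix (⇑(Equiv.refl V)) p).rank := Matrix.rank_mul_le_right _ _
      _ = (M * (1 : Matrix V V ℝ).submatrix (⇑(Equiv.refl V)) p).rank := by rw [key2]
      _ ≤ M.rank := Matrix.rank_mul_le_left _ _
  have htl : Matrix.toLin' M = M.mulVecLin := by
    apply LinearMap.ext
    intro x
    rw [Matrix.toLin'_apply, Matrix.mulVecLin_apply]
  have hmult : multNegOne G = Module.finrank ℝ (LinearMap.ker M.mulVecLin) := by
    unfold multNegOne
    rw [← hM, htl]
  have hrn := LinearMap.finrank_range_add_finrank_ker (M.mulVecLin)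
  have hfr : Module.finrank ℝ (V → ℝ) = n := by
    rw [Module.finrank_fintype_fun_eq_card, hcard]
  have hMrank : M.rank = Module.finrank ℝ (LinearMap.range M.mulVecLin) := rfl
  rw [hfr] at hrn
  omega
end

section
/- Let G be a finite simple connected C-canonical graph of order n and diameter d with d not congruent to 1 modulo 3 and m_G(−1) = n − d − 1, and let P = v_1 v_2 ⋯ v_{d+1} be a diameter path of G. Then every vertex of G not on P has exactly one or exactly two neighbors among the vertices of P. -/
attribute [local instance] Classical.propDecidable

/-- The set of indices `i ∈ {1, …, d+1}` such that `x` is adjacent to the vertex `v i`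
of the diameter path `v 1, v 2, …, v (d+1)`. -/
noncomputable def pathNbrs {V : Type*} (G : SimpleGraph V) (d : ℕ) (v : ℕ → V) (x : V) :
    Finset ℕ :=
  (Finset.Icc 1 (d + 1)).filter fun i => G.Adj x (v i)


noncomputable def c3 : ℕ → ℝ := fun k => if k % 3 = 0 then 1 else if k % 3 = 1 then -1 else 0

noncomputable def triC (m : ℕ) : Matrix (Fin m) (Fin m) ℝ :=
  fun l k => if (l : ℕ) = k ∨ (l : ℕ) + 1 = k ∨ (k : ℕ) + 1 = l then 1 else 0

noncomputable def pad1 (m : ℕ) (w : Fin m → ℝ) : ℕ → ℝ :=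
  fun j => if h : 1 ≤ j ∧ j ≤ m then w ⟨j - 1, by omega⟩ else 0

lemma sum_if_eq {m : ℕ} (w : Fin m → ℝ) (t : ℕ) :
    (∑ l : Fin m, if (l : ℕ) = t then w l else 0) = if h : t < m then w ⟨t, h⟩ else 0 := by
  by_cases h : t < m
  · rw [dif_pos h, Finset.sum_eq_single (⟨t, h⟩ : Fin m)]
    · simp
    · intro b _ hb
      rw [if_neg]
      intro hbv
      exact hb (Fin.ext hbv)
    · simp
  · rw [dif_neg h]
    apply Finset.sum_eq_zero
    intro l _
    rw [if_neg]
    omega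

lemma triC_row {m : ℕ} (w : Fin m → ℝ) (k : Fin m) :
    (triC m).mulVec w k = pad1 m w k + pad1 m w (k + 1) + pad1 m w (k + 2) := by
  unfold Matrix.mulVec dotProduct triC
  have hsplit : ∀ l : Fin m,
      (if (k : ℕ) = l ∨ (k : ℕ) + 1 = l ∨ (l : ℕ) + 1 = k then (1:ℝ) else 0) * w l
      = (if (l : ℕ) + 1 = (k : ℕ) then w l else 0) + ((if (l : ℕ) = k then w l else 0)
          + (if (l : ℕ) = (k : ℕ) + 1 then w l else 0)) := by
    intro l
    by_cases h2 : (l : ℕ) = (k : ℕ)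
    · rw [if_pos (Or.inl h2.symm), if_neg (by omega), if_pos h2, if_neg (by omega)]; ring
    · by_cases h1 : (l : ℕ) + 1 = (k : ℕ)
      · rw [if_pos (Or.inr (Or.inr h1)), if_pos h1, if_neg h2, if_neg (by omega)]; ring
      · by_cases h3 : (l : ℕ) = (k : ℕ) + 1
        · rw [if_pos (Or.inr (Or.inl h3.symm)), if_neg h1, if_neg h2, if_pos h3]; ring
        · rw [if_neg (by omega), if_neg h1, if_neg h2, if_neg h3]; ring
  have h1 : (∑ l : Fin m, if (l : ℕ) + 1 = (k : ℕ) then w l else 0) = pad1 m w k := by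
    by_cases hk : (k : ℕ) = 0
    · rw [Finset.sum_eq_zero, pad1]
      · simp only [hk]
        rw [dif_neg (by omega)]
      · intro l _; rw [if_neg]; omega
    · have heq : ∀ l : Fin m, ((l : ℕ) + 1 = (k : ℕ)) = ((l : ℕ) = (k : ℕ) - 1) := by
        intro l; apply propext; omega
      simp only [heq]
      rw [sum_if_eq, pad1, dif_pos (show (k:ℕ) - 1 < m by omega),
        dif_pos (show 1 ≤ (k:ℕ) ∧ (k:ℕ) ≤ m by omega)]
  have hS2 : (∑ l : Fin m, if (l : ℕ) = (k : ℕ) then w l else 0) = pad1 m w ((k : ℕ) + 1) := by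
    rw [sum_if_eq, dif_pos k.isLt, pad1, dif_pos (show 1 ≤ (k:ℕ)+1 ∧ (k:ℕ)+1 ≤ m by omega)]
    exact congrArg w (Fin.ext rfl)
  have hS3 : (∑ l : Fin m, if (l : ℕ) = (k : ℕ) + 1 then w l else 0)
      = pad1 m w ((k : ℕ) + 2) := by
    rw [sum_if_eq]
    by_cases h2 : (k : ℕ) + 1 < m
    · rw [dif_pos h2, pad1, dif_pos (show 1 ≤ (k:ℕ)+2 ∧ (k:ℕ)+2 ≤ m by omega)]
      exact congrArg w (Fin.ext rfl)
    · rw [dif_neg h2, pad1, dif_neg (by omega)]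
  rw [Finset.sum_congr rfl (fun l _ => hsplit l), Finset.sum_add_distrib,
    Finset.sum_add_distrib, h1, hS2, hS3]
  ring

lemma triC_ker {m : ℕ} (hm : m % 3 ≠ 2) (w : Fin m → ℝ)
    (hw : (triC m).mulVec w = 0) : w = 0 := by
  set W := pad1 m w with hWdef
  have hrow : ∀ k : ℕ, k < m → W k + W (k + 1) + W (k + 2) = 0 := by
    intro k hk
    have h := congrFun hw ⟨k, hk⟩
    rw [triC_row] at h
    simpa using h
  have hW0 : W 0 = 0 := dif_neg (by omega)
  have key : ∀ k, k ≤ m → W (k + 1) = c3 k * W 1 := by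
    intro k
    induction k using Nat.strong_induction_on with
    | _ k ih =>
      intro hk
      match k, hk with
      | 0, hk => simp [c3]
      | 1, hk =>
        have h := hrow 0 (by omega)
        rw [hW0] at h
        have : c3 1 = -1 := by norm_num [c3]
        rw [this]; linarith
      | (k+2), hk =>
        have h := hrow (k + 1) (by omega)
        have e1 := ih k (by omega) (by omega)
        have e2 := ih (k + 1) (by omega) (by omega)
        rw [e1, e2] at h
        have hc : c3 k + c3 (k + 1) + c3 (k + 2) = 0 := by
          have h3 : k % 3 = 0 ∨ k % 3 = 1 ∨ k % 3 = 2 := by omega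
          rcases h3 with h3 | h3 | h3 <;>
            · have ha : (k + 1) % 3 = (k % 3 + 1) % 3 := by omega
              have hb : (k + 2) % 3 = (k % 3 + 2) % 3 := by omega
              simp only [c3]
              rw [ha, hb, h3]
              norm_num
        linear_combination h - W 1 * hc
  have hW1 : W 1 = 0 := by
    have hkey := key m le_rfl
    have hz : W (m + 1) = 0 := dif_neg (by omega)
    rw [hz] at hkey
    have hc : c3 m = 1 ∨ c3 m = -1 := by
      have h3 : m % 3 = 0 ∨ m % 3 = 1 := by omega
      rcases h3 with h3 | h3 <;> simp [c3, h3]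
    rcases hc with hc | hc <;> rw [hc] at hkey <;> linarith
  funext l
  have hl : w l = W ((l : ℕ) + 1) := by
    rw [hWdef, pad1, dif_pos (show 1 ≤ (l:ℕ)+1 ∧ (l:ℕ)+1 ≤ m by omega)]
    exact congrArg w (Fin.ext rfl).symm
  rw [Pi.zero_apply, hl, key l.val (by omega), hW1, mul_zero]

theorem stmt_5 {V : Type*} [Fintype V] (G : SimpleGraph V) (n d : ℕ)
    (hconn : G.Connected)
    (hcard : Fintype.card V = n)
    (hcanon : ∀ a b : V, (∀ z : V, (z = a ∨ G.Adj a z) ↔ (z = b ∨ G.Adj b z)) → a = b)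
    (hd3 : d % 3 ≠ 1)
    (hdiam : ∀ a b : V, G.dist a b ≤ d)
    (v : ℕ → V)
    (hpath : ∀ i ∈ Finset.Icc 1 (d + 1), ∀ j ∈ Finset.Icc 1 (d + 1),
      G.dist (v i) (v j) = max i j - min i j)
    (hmult : multNegOne G = n - d - 1)
    (x : V) (hxP : ∀ i ∈ Finset.Icc 1 (d + 1), x ≠ v i) :
    (pathNbrs G d v x).card = 1 ∨ (pathNbrs G d v x).card = 2 := by
  set A : Matrix V V ℝ := G.adjMatrix ℝ + 1 with hA
  set p : Fin (d + 1) → V := fun k => v ((k : ℕ) + 1) with hp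
  set S : Finset ℕ := pathNbrs G d v x with hS
  have hmemIcc : ∀ i : ℕ, i ∈ Finset.Icc 1 (d + 1) ↔ 1 ≤ i ∧ i ≤ d + 1 := by
    intro i; exact Finset.mem_Icc
  -- injectivity of v on the path
  have hvne : ∀ i j : ℕ, 1 ≤ i → i ≤ d + 1 → 1 ≤ j → j ≤ d + 1 → v i = v j → i = j := by
    intro i j hi1 hi2 hj1 hj2 hveq
    have h := hpath i ((hmemIcc i).mpr ⟨hi1, hi2⟩) j ((hmemIcc j).mpr ⟨hj1, hj2⟩)
    rw [hveq, SimpleGraph.dist_self] at h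
    omega
  -- adjacency on the path
  have hadjP : ∀ i j : ℕ, 1 ≤ i → i ≤ d + 1 → 1 ≤ j → j ≤ d + 1 →
      (G.Adj (v i) (v j) ↔ (i + 1 = j ∨ j + 1 = i)) := by
    intro i j hi1 hi2 hj1 hj2
    have h := hpath i ((hmemIcc i).mpr ⟨hi1, hi2⟩) j ((hmemIcc j).mpr ⟨hj1, hj2⟩)
    constructor
    · intro hadj
      have h1 : G.dist (v i) (v j) = 1 := SimpleGraph.dist_eq_one_iff_adj.mpr hadj
      omega
    · intro hij
      apply SimpleGraph.dist_eq_one_iff_adj.mp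
      omega
  -- entries of A
  have hAentry : ∀ z y : V, A z y = if (z = y ∨ G.Adj z y) then 1 else 0 := by
    intro z y
    rw [hA, Matrix.add_apply, SimpleGraph.adjMatrix_apply, Matrix.one_apply]
    by_cases hzy : z = y
    · subst hzy
      rw [if_pos rfl, if_neg (G.irrefl), if_pos (Or.inl rfl)]
      norm_num
    · rw [if_neg hzy]
      by_cases hadj : G.Adj z y
      · rw [if_pos hadj, if_pos (Or.inr hadj)]; norm_num
      · rw [if_neg hadj, if_neg (by tauto)]; norm_num
  -- the path submatrix is triC
  have hsubm : ∀ l k : Fin (d + 1), A (p l) (p k) = triC (d + 1) l k := by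
    intro l k
    rw [hAentry, triC]
    have hl : 1 ≤ (l : ℕ) + 1 ∧ (l : ℕ) + 1 ≤ d + 1 := by omega
    have hk : 1 ≤ (k : ℕ) + 1 ∧ (k : ℕ) + 1 ≤ d + 1 := by omega
    have he : p l = p k ↔ (l : ℕ) = (k : ℕ) := by
      constructor
      · intro h
        have := hvne _ _ hl.1 hl.2 hk.1 hk.2 h
        omega
      · intro h; rw [hp]; simp only [h]
    have ha : G.Adj (p l) (p k) ↔ ((l : ℕ) + 1 = k ∨ (k : ℕ) + 1 = l) := by
      rw [hp]
      rw [hadjP _ _ hl.1 hl.2 hk.1 hk.2]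
      omega
    by_cases h : (l : ℕ) = (k : ℕ) ∨ (l : ℕ) + 1 = (k : ℕ) ∨ (k : ℕ) + 1 = (l : ℕ)
    · rw [if_pos h, if_pos (by rw [he, ha]; tauto)]
    · rw [if_neg h, if_neg (by rw [he, ha]; tauto)]
  -- rank computations
  have hC3 : (d + 1) % 3 ≠ 2 := by omega
  set f := Matrix.toLin' A with hf
  have hker : Module.finrank ℝ (LinearMap.ker f) = n - (d + 1) := by
    have : multNegOne G = Module.finrank ℝ (LinearMap.ker f) := rfl
    omega
  have hrn : Module.finrank ℝ (LinearMap.range f) + Module.finrank ℝ (LinearMap.ker f)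
      = n := by
    rw [LinearMap.finrank_range_add_finrank_ker f, Module.finrank_fintype_fun_eq_card, hcard]
  have hn : d + 2 ≤ n := by
    classical
    have hinj : Set.InjOn v (Finset.Icc 1 (d + 1)) := by
      intro i hi j hj hij
      rw [Finset.mem_coe, hmemIcc] at hi hj
      exact hvne i j hi.1 hi.2 hj.1 hj.2 hij
    have hximg : x ∉ (Finset.Icc 1 (d + 1)).image v := by
      intro hmem
      obtain ⟨i, hi, hvi⟩ := Finset.mem_image.mp hmem
      exact hxP i hi hvi.symm
    have hcard2 : (insert x ((Finset.Icc 1 (d + 1)).image v)).card = d + 2 := by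
      rw [Finset.card_insert_of_notMem hximg, Finset.card_image_of_injOn hinj,
        Nat.card_Icc]
      omega
    calc d + 2 = (insert x ((Finset.Icc 1 (d + 1)).image v)).card := hcard2.symm
      _ ≤ Fintype.card V := Finset.card_le_univ _
      _ = n := hcard
  have hrange : Module.finrank ℝ (LinearMap.range f) = d + 1 := by omega
  set B : Matrix V (Fin (d + 1)) ℝ := A.submatrix id p with hB
  set g := Matrix.toLin' B with hg
  -- restriction of columns of B to path rows gives triC
  have hrestr : ∀ c : Fin (d + 1) → ℝ, ∀ l : Fin (d + 1),
      (triC (d + 1)).mulVec c l = B.mulVec c (p l) := by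
    intro c l
    unfold Matrix.mulVec dotProduct
    apply Finset.sum_congr rfl
    intro k _
    show triC (d + 1) l k * c k = B (p l) k * c k
    rw [← hsubm l k]
    rfl
  have hginj : Function.Injective g := by
    rw [← LinearMap.ker_eq_bot]
    rw [Submodule.eq_bot_iff]
    intro c hc
    rw [LinearMap.mem_ker, hg, Matrix.toLin'_apply] at hc
    apply triC_ker hC3
    funext l
    rw [hrestr c l, hc]
    rfl
  have hle : LinearMap.range g ≤ LinearMap.range f := by
    rintro y ⟨c, rfl⟩
    refine ⟨fun z => ∑ k : Fin (d + 1), if p k = z then c k else 0, ?_⟩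
    rw [hf, hg, Matrix.toLin'_apply, Matrix.toLin'_apply]
    funext z
    unfold Matrix.mulVec dotProduct
    calc (∑ y : V, A z y * ∑ k : Fin (d + 1), if p k = y then c k else 0)
        = ∑ y : V, ∑ k : Fin (d + 1), if p k = y then A z y * c k else 0 := by
          apply Finset.sum_congr rfl
          intro y _
          rw [Finset.mul_sum]
          apply Finset.sum_congr rfl
          intro k _
          rw [mul_ite, mul_zero]
      _ = ∑ k : Fin (d + 1), ∑ y : V, if p k = y then A z y * c k else 0 :=
          Finset.sum_comm
      _ = ∑ k : Fin (d + 1), A z (p k) * c k := by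
          apply Finset.sum_congr rfl
          intro k _
          rw [Finset.sum_ite_eq]
          simp
      _ = ∑ k : Fin (d + 1), B z k * c k := rfl
  have hgfin : Module.finrank ℝ (LinearMap.range g) = d + 1 := by
    rw [LinearMap.finrank_range_of_inj hginj, Module.finrank_fintype_fun_eq_card,
      Fintype.card_fin]
  have heqr : LinearMap.range g = LinearMap.range f :=
    Submodule.eq_of_le_of_finrank_le hle (by rw [hgfin, hrange])
  -- the column of x is a combination of path columns
  have hcolmem : f (Pi.single x 1) ∈ LinearMap.range g := by
    rw [heqr]; exact ⟨Pi.single x 1, rfl⟩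
  obtain ⟨c, hc⟩ := hcolmem
  have hcolval : ∀ z : V, f (Pi.single x 1) z = A z x := by
    intro z
    rw [hf, Matrix.toLin'_apply, Matrix.mulVec_single]
    show A z x * 1 = A z x
    rw [mul_one]
  have hCb : (triC (d + 1)).mulVec c = fun l => A (p l) x := by
    funext l
    rw [hrestr c l]
    have : B.mulVec c = f (Pi.single x 1) := by
      rw [← hc, hg, Matrix.toLin'_apply]
    rw [this, hcolval]
  -- entries of b
  have hbval : ∀ l : Fin (d + 1), A (p l) x = if ((l : ℕ) + 1) ∈ S then 1 else 0 := by
    intro l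
    rw [hAentry]
    have hne : ¬ (p l = x) := by
      intro h
      exact hxP ((l : ℕ) + 1) ((hmemIcc _).mpr (by omega)) h.symm
    have hiff : G.Adj (p l) x ↔ ((l : ℕ) + 1) ∈ S := by
      rw [hS, pathNbrs, Finset.mem_filter, hmemIcc]
      constructor
      · intro h; exact ⟨by omega, h.symm⟩
      · intro h; exact h.2.symm
    by_cases h : ((l : ℕ) + 1) ∈ S
    · rw [if_pos h, if_pos (Or.inr (hiff.mpr h))]
    · rw [if_neg h, if_neg (by tauto)]
  -- members of S, window bound
  have hSIcc : ∀ i ∈ S, 1 ≤ i ∧ i ≤ d + 1 ∧ G.Adj x (v i) := by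
    intro i hi
    rw [hS, pathNbrs, Finset.mem_filter, hmemIcc] at hi
    exact ⟨hi.1.1, hi.1.2, hi.2⟩
  have hwin : ∀ i ∈ S, ∀ j ∈ S, j ≤ i + 2 := by
    intro i hi j hj
    obtain ⟨hi1, hi2, hia⟩ := hSIcc i hi
    obtain ⟨hj1, hj2, hja⟩ := hSIcc j hj
    have h1 : G.dist (v i) x = 1 := SimpleGraph.dist_eq_one_iff_adj.mpr hia.symm
    have h2 : G.dist x (v j) = 1 := SimpleGraph.dist_eq_one_iff_adj.mpr hja
    have htri : G.dist (v i) (v j) ≤ G.dist (v i) x + G.dist x (v j) :=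
      hconn.dist_triangle
    have hdij := hpath i ((hmemIcc i).mpr ⟨hi1, hi2⟩) j ((hmemIcc j).mpr ⟨hj1, hj2⟩)
    omega
  -- card ≤ 3
  have hcard3 : S.card ≤ 3 := by
    rcases Finset.eq_empty_or_nonempty S with h | h
    · rw [h]; simp
    · have hmin := S.min'_mem h
      have hsub2 : S ⊆ Finset.Icc (S.min' h) (S.min' h + 2) := by
        intro i hi
        rw [Finset.mem_Icc]
        exact ⟨S.min'_le i hi, hwin _ hmin i hi⟩
      calc S.card ≤ (Finset.Icc (S.min' h) (S.min' h + 2)).card := Finset.card_le_card hsub2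
        _ = 3 := by rw [Nat.card_Icc]; omega
  -- card ≠ 0
  have hne0 : S.card ≠ 0 := by
    intro h0
    have hSe : S = ∅ := Finset.card_eq_zero.mp h0
    have hb0 : (triC (d + 1)).mulVec c = 0 := by
      rw [hCb]
      funext l
      rw [hbval l, if_neg (by rw [hSe]; exact Finset.notMem_empty _)]
      rfl
    have hc0 : c = 0 := triC_ker hC3 c hb0
    have : f (Pi.single x 1) = 0 := by
      rw [← hc, hc0, map_zero]
    have h1 : A x x = 0 := by
      rw [← hcolval x, this]; rfl
    rw [hAentry, if_pos (Or.inl rfl)] at h1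
    norm_num at h1
  -- card ≠ 3
  have hne3 : S.card ≠ 3 := by
    intro h3
    have hSne : S.Nonempty := Finset.card_pos.mp (by omega)
    set a := S.min' hSne with hadef
    have hmin := S.min'_mem hSne
    have hsub2 : S ⊆ Finset.Icc a (a + 2) := by
      intro i hi
      rw [Finset.mem_Icc]
      exact ⟨S.min'_le i hi, hwin _ hmin i hi⟩
    have hSeq : S = Finset.Icc a (a + 2) := by
      apply Finset.eq_of_subset_of_card_le hsub2
      rw [Nat.card_Icc]; omega
    have ha1 : 1 ≤ a := (hSIcc a hmin).1
    have ha2 : a + 2 ≤ d + 1 := by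
      have : a + 2 ∈ S := by rw [hSeq, Finset.mem_Icc]; omega
      exact (hSIcc _ this).2.1
    set k0 : Fin (d + 1) := ⟨a, by omega⟩ with hk0
    have hone : (triC (d + 1)).mulVec (Pi.single k0 1) = fun l => A (p l) x := by
      funext l
      rw [Matrix.mulVec_single]
      show triC (d + 1) l k0 * 1 = _
      rw [mul_one, hbval l, triC]
      have hmem : ((l : ℕ) + 1) ∈ S ↔ (a ≤ (l : ℕ) + 1 ∧ (l : ℕ) + 1 ≤ a + 2) := by
        rw [hSeq, Finset.mem_Icc]
      have hk0v : (k0 : ℕ) = a := rfl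
      by_cases h : (l : ℕ) = (k0 : ℕ) ∨ (l : ℕ) + 1 = (k0 : ℕ) ∨ (k0 : ℕ) + 1 = (l : ℕ)
      · rw [if_pos h, if_pos (hmem.mpr (by omega))]
      · rw [if_neg h, if_neg (by rw [hmem]; omega)]
    have hceq : c = Pi.single k0 1 := by
      have hdiff : (triC (d + 1)).mulVec (c - Pi.single k0 1) = 0 := by
        rw [Matrix.mulVec_sub, hCb, hone, sub_self]
      have := triC_ker hC3 _ hdiff
      rwa [sub_eq_zero] at this
    have hcols : ∀ z : V, A z x = A z (v (a + 1)) := by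
      intro z
      have h1 : B.mulVec c = f (Pi.single x 1) := by
        rw [← hc, hg, Matrix.toLin'_apply]
      have h2 : B.mulVec c z = A z (v (a + 1)) := by
        rw [hceq, Matrix.mulVec_single]
        show B z k0 * 1 = _
        rw [mul_one]
        have : p k0 = v (a + 1) := by rw [hp]
        rw [hB]
        simpa [Matrix.submatrix_apply] using congrArg (A z) this
      rw [← hcolval z, ← h1, h2]
    have hiffz : ∀ z : V, (z = x ∨ G.Adj x z) ↔ (z = v (a + 1) ∨ G.Adj (v (a + 1)) z) := by
      intro z
      have h := hcols z
      rw [hAentry, hAentry] at h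
      constructor
      · intro hzx
        by_cases hq : z = v (a + 1) ∨ G.Adj (v (a + 1)) z
        · exact hq
        · exfalso
          rw [if_pos (by rcases hzx with h' | h'; exact Or.inl h'; exact Or.inr h'.symm),
            if_neg (by rw [G.adj_comm]; tauto)] at h
          norm_num at h
      · intro hzx
        by_cases hq : z = x ∨ G.Adj x z
        · exact hq
        · exfalso
          rw [if_neg (by rw [G.adj_comm]; tauto),
            if_pos (by rcases hzx with h' | h'; exact Or.inl h'; exact Or.inr h'.symm)] at h
          norm_num at h
    have hxeq : x = v (a + 1) := hcanon x (v (a + 1)) hiffz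
    exact hxP (a + 1) ((hmemIcc _).mpr (by omega)) hxeq
  omega
end

section
/- Let G be a finite simple connected C-canonical graph of order n and diameter d with d not congruent to 1 modulo 3 and m_G(−1) = n − d − 1, and let P = v_1 v_2 ⋯ v_{d+1} be a diameter path of G. Then for any two distinct vertices x, y of G not on P, the sets N_P(x) and N_P(y) of their neighbors on P are distinct. -/
attribute [local instance] Classical.propDecidable

lemma aux_ind_iff (p q p' q' : Prop) [Decidable p] [Decidable q] [Decidable p'] [Decidable q']
    (h : ((if p then (1:ℝ) else 0) + (if q then 1 else 0))
      = (if p' then (1:ℝ) else 0) + (if q' then 1 else 0)) :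
    (p ∨ q) ↔ (p' ∨ q') := by
  by_cases hp : p <;> by_cases hq : q <;> by_cases hp' : p' <;> by_cases hq' : q' <;>
    simp only [hp, hq, hp', hq', if_true, if_false] at h ⊢ <;>
    first | tauto | norm_num at h

theorem stmt_6 {V : Type*} [Fintype V] (G : SimpleGraph V) (n d : ℕ)
    (hconn : G.Connected)
    (hcard : Fintype.card V = n)
    (hcanon : ∀ a b : V, (∀ z : V, (z = a ∨ G.Adj a z) ↔ (z = b ∨ G.Adj b z)) → a = b)
    (hd3 : d % 3 ≠ 1)
    (hdiam : ∀ a b : V, G.dist a b ≤ d)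
    (v : ℕ → V)
    (hpath : ∀ i ∈ Finset.Icc 1 (d + 1), ∀ j ∈ Finset.Icc 1 (d + 1),
      G.dist (v i) (v j) = max i j - min i j)
    (hmult : multNegOne G = n - d - 1)
    (x y : V) (hxy : x ≠ y) (hxP : ∀ i ∈ Finset.Icc 1 (d + 1), x ≠ v i) (hyP : ∀ i ∈ Finset.Icc 1 (d + 1), y ≠ v i) :
    pathNbrs G d v x ≠ pathNbrs G d v y := by
  intro hP
  set B : Matrix V V ℝ := G.adjMatrix ℝ + 1 with hB
  set T : (V → ℝ) →ₗ[ℝ] (V → ℝ) := Matrix.toLin' B with hT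
  have hBapp : ∀ z w : V, B z w
      = (if G.Adj z w then (1:ℝ) else 0) + (if z = w then 1 else 0) := by
    intro z w
    simp [hB, Matrix.add_apply, Matrix.one_apply]
  set u : Fin (d+1) → V := fun i => v (i.1 + 1) with hu
  have hmem : ∀ i : Fin (d+1), (i.1 + 1) ∈ Finset.Icc 1 (d+1) := by
    intro i; have := i.isLt; simp only [Finset.mem_Icc]; omega
  have hdist : ∀ i j : Fin (d+1),
      G.dist (u i) (u j) = max (i:ℕ) (j:ℕ) - min (i:ℕ) (j:ℕ) := by
    intro i j
    have h := hpath _ (hmem i) _ (hmem j)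
    rw [show u i = v (i.1+1) from rfl, show u j = v (j.1+1) from rfl, h]
    omega
  have huinj : Function.Injective u := by
    intro i j hij
    have h := hdist i j
    rw [hij, SimpleGraph.dist_self] at h
    exact Fin.ext (by omega)
  have hadj : ∀ i j : Fin (d+1),
      G.Adj (u i) (u j) ↔ max (i:ℕ) (j:ℕ) - min (i:ℕ) (j:ℕ) = 1 := by
    intro i j
    rw [← SimpleGraph.dist_eq_one_iff_adj, hdist i j]
  set M : Matrix (Fin (d+1)) (Fin (d+1)) ℝ := fun i j => B (u i) (u j) with hM
  have hMapp : ∀ i j : Fin (d+1), M i j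
      = (if (j:ℕ) = (i:ℕ) then (1:ℝ) else 0) + (if (j:ℕ) = (i:ℕ)+1 then 1 else 0)
        + (if (j:ℕ)+1 = (i:ℕ) then 1 else 0) := by
    intro i j
    have e1 : (u i = u j) ↔ ((i:ℕ) = (j:ℕ)) := by
      constructor
      · intro h; exact Fin.ext_iff.mp (huinj h)
      · intro h; rw [Fin.ext_iff.mpr h]
    rw [show M i j = B (u i) (u j) from rfl, hBapp,
      if_congr (hadj i j) rfl rfl, if_congr e1 rfl rfl,
      if_congr (show (max (i:ℕ) (j:ℕ) - min (i:ℕ) (j:ℕ) = 1) ↔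
        ((j:ℕ) = (i:ℕ)+1 ∨ (j:ℕ)+1 = (i:ℕ)) from by omega) rfl rfl]
    split_ifs <;> first | (exfalso; omega) | norm_num
  -- M is injective
  have hMinj : Function.Injective (Matrix.toLin' M) := by
    rw [← LinearMap.ker_eq_bot, LinearMap.ker_eq_bot']
    intro c hc
    rw [Matrix.toLin'_apply] at hc
    set c' : ℕ → ℝ := fun k => if h : k < d+1 then c ⟨k, h⟩ else 0 with hc'
    have hc'lt : ∀ (k : ℕ) (h : k < d+1), c' k = c ⟨k, h⟩ := fun k h => dif_pos h
    have hc'ge : ∀ k : ℕ, d+1 ≤ k → c' k = 0 := fun k h => dif_neg (by omega)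
    have hsum : ∀ t : ℕ,
        (∑ j : Fin (d+1), (if (j:ℕ) = t then (1:ℝ) else 0) * c j) = c' t := by
      intro t
      by_cases h : t < d + 1
      · rw [Finset.sum_eq_single (⟨t, h⟩ : Fin (d+1))]
        · rw [if_pos rfl, one_mul, hc'lt t h]
        · intro b _ hb
          rw [if_neg, zero_mul]
          intro hbt
          exact hb (Fin.ext hbt)
        · intro h'; exact absurd (Finset.mem_univ _) h'
      · rw [Finset.sum_eq_zero, hc'ge t (by omega)]
        intro b _
        rw [if_neg (by have := b.isLt; omega), zero_mul]
    have hri : ∀ i : Fin (d+1),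
        c' (i:ℕ) + c' ((i:ℕ)+1)
          + (∑ j : Fin (d+1), (if (j:ℕ)+1 = (i:ℕ) then (1:ℝ) else 0) * c j) = 0 := by
      intro i
      have h0 : M.mulVec c i = 0 := by rw [hc]; rfl
      rw [show M.mulVec c i = ∑ j, M i j * c j from rfl] at h0
      rw [Finset.sum_congr rfl (fun j _ => by rw [hMapp i j])] at h0
      simp only [add_mul, Finset.sum_add_distrib, hsum] at h0
      exact h0
    have hrow0 : c' 0 + c' 1 = 0 := by
      have h : c' 0 + c' (0+1)
          + (∑ j : Fin (d+1), (if (j:ℕ)+1 = 0 then (1:ℝ) else 0) * c j) = 0 :=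
        hri ⟨0, by omega⟩
      rw [Finset.sum_eq_zero (fun j _ => by rw [if_neg (by omega), zero_mul]),
        add_zero] at h
      exact h
    have hrowk : ∀ k : ℕ, k + 1 ≤ d → c' k + c' (k+1) + c' (k+2) = 0 := by
      intro k hk
      have h : c' (k+1) + c' (k+1+1)
          + (∑ j : Fin (d+1), (if (j:ℕ)+1 = k+1 then (1:ℝ) else 0) * c j) = 0 :=
        hri ⟨k+1, by omega⟩
      rw [Finset.sum_congr rfl (fun j _ => by
        rw [if_congr (show ((j:ℕ)+1 = k+1) ↔ ((j:ℕ) = k) from by omega) rfl rfl]),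
        hsum] at h
      have h2 : c' (k+1+1) = c' (k+2) := rfl
      linarith
    set a : ℝ := c' 0 with ha'
    have hg : ∀ k : ℕ, k ≤ d →
        c' k = (if k % 3 = 0 then a else if k % 3 = 1 then -a else 0) := by
      intro k
      induction k using Nat.strong_induction_on with
      | _ k ih =>
        intro hk
        match k with
        | 0 => simp; rfl
        | 1 =>
          have h := hrow0
          norm_num
          linarith
        | (m+2) =>
          have h1 := ih m (by omega) (by omega)
          have h2 := ih (m+1) (by omega) (by omega)
          have h3 := hrowk m (by omega)
          rcases (show m % 3 = 0 ∨ m % 3 = 1 ∨ m % 3 = 2 by omega) with h | h | h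
          · rw [if_neg (by omega), if_neg (by omega)]
            rw [if_pos h] at h1
            rw [if_neg (by omega), if_pos (by omega)] at h2
            linarith
          · rw [if_pos (by omega)]
            rw [if_neg (by omega), if_pos h] at h1
            rw [if_neg (by omega), if_neg (by omega)] at h2
            linarith
          · rw [if_neg (by omega), if_pos (by omega)]
            rw [if_neg (by omega), if_neg (by omega)] at h1
            rw [if_pos (by omega)] at h2
            linarith
    have ha : a = 0 := by
      rcases Nat.eq_zero_or_pos d with hd0 | hdpos
      · have h1 : c' 1 = 0 := hc'ge 1 (by omega)
        have := hrow0; rw [h1] at this; linarith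
      · obtain ⟨e, he⟩ : ∃ e, d = e + 1 := ⟨d - 1, by omega⟩
        have h3 := hrowk e (by omega)
        have hz : c' (e+2) = 0 := hc'ge (e+2) (by omega)
        have g1 := hg e (by omega)
        have g2 := hg (e+1) (by omega)
        rcases (show d % 3 = 0 ∨ d % 3 = 2 by omega) with h | h
        · rw [if_neg (by omega), if_neg (by omega)] at g1
          rw [if_pos (by omega)] at g2
          rw [g1, g2, hz] at h3; linarith
        · rw [if_neg (by omega), if_pos (by omega)] at g1
          rw [if_neg (by omega), if_neg (by omega)] at g2
          rw [g1, g2, hz] at h3; linarith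
    funext i
    have h := hg (i:ℕ) (by have := i.isLt; omega)
    have hcc : c' (i:ℕ) = c i := (hc'lt (i:ℕ) i.isLt).trans (by rw [Fin.eta])
    rw [hcc] at h
    rw [h, ha]
    simp
  have hMsurj : Function.Surjective (Matrix.toLin' M) :=
    LinearMap.injective_iff_surjective.mp hMinj
  -- rank of T is d+1
  have hn : d + 1 ≤ n := by
    rw [← hcard, ← Fintype.card_fin (d+1)]
    exact Fintype.card_le_of_injective u huinj
  have hker : Module.finrank ℝ (LinearMap.ker T) = n - d - 1 := by
    unfold multNegOne at hmult
    exact hmult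
  have hVdim : Module.finrank ℝ (V → ℝ) = n := by
    rw [Module.finrank_fintype_fun_eq_card, hcard]
  have hrank : Module.finrank ℝ (LinearMap.range T) = d + 1 := by
    have h1 := LinearMap.finrank_range_add_finrank_ker T
    rw [hker, hVdim] at h1
    omega
  set π : (V → ℝ) →ₗ[ℝ] (Fin (d+1) → ℝ) := LinearMap.funLeft ℝ ℝ u with hπ
  set ψ : (LinearMap.range T) →ₗ[ℝ] (Fin (d+1) → ℝ)
    := π.comp (LinearMap.range T).subtype with hψ
  have hfr : Module.finrank ℝ (LinearMap.range T)
      = Module.finrank ℝ (Fin (d+1) → ℝ) := by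
    rw [hrank, Module.finrank_fintype_fun_eq_card, Fintype.card_fin]
  have hψsurj : Function.Surjective ψ := by
    intro t
    obtain ⟨c, hc⟩ := hMsurj t
    rw [Matrix.toLin'_apply] at hc
    refine ⟨⟨T (fun z => ∑ j : Fin (d+1), if z = u j then c j else 0),
      LinearMap.mem_range_self T _⟩, ?_⟩
    show π (T (fun z => ∑ j : Fin (d+1), if z = u j then c j else 0)) = t
    funext i
    show (T (fun z => ∑ j : Fin (d+1), if z = u j then c j else 0)) (u i) = t i
    rw [hT, Matrix.toLin'_apply]
    show ∑ z : V, B (u i) z * (∑ j : Fin (d+1), if z = u j then c j else 0) = t i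
    calc ∑ z : V, B (u i) z * (∑ j : Fin (d+1), if z = u j then c j else 0)
        = ∑ z : V, ∑ j : Fin (d+1), (if z = u j then B (u i) z * c j else 0) := by
          refine Finset.sum_congr rfl fun z _ => ?_
          rw [Finset.mul_sum]
          refine Finset.sum_congr rfl fun j _ => ?_
          rw [mul_ite, mul_zero]
      _ = ∑ j : Fin (d+1), ∑ z : V, (if z = u j then B (u i) z * c j else 0) :=
          Finset.sum_comm
      _ = ∑ j : Fin (d+1), B (u i) (u j) * c j := by
          refine Finset.sum_congr rfl fun j _ => ?_
          rw [Finset.sum_ite_eq' Finset.univ (u j) (fun z => B (u i) z * c j),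
            if_pos (Finset.mem_univ _)]
      _ = M.mulVec c i := rfl
      _ = t i := by rw [hc]
  have hψinj : Function.Injective ψ :=
    (LinearMap.injective_iff_surjective_of_finrank_eq_finrank hfr).mpr hψsurj
  -- the vector e_x - e_y
  have hadjxy : ∀ i : Fin (d+1), (G.Adj x (u i) ↔ G.Adj y (u i)) := by
    intro i
    have h1 : ((i:ℕ)+1) ∈ pathNbrs G d v x ↔ ((i:ℕ)+1) ∈ pathNbrs G d v y := by
      rw [hP]
    simp only [pathNbrs, Finset.mem_filter] at h1
    constructor
    · intro h; exact (h1.mp ⟨hmem i, h⟩).2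
    · intro h; exact (h1.mpr ⟨hmem i, h⟩).2
  set f0 : V → ℝ := fun z => (if z = x then 1 else 0) - (if z = y then 1 else 0)
    with hf0
  have hdel : ∀ w : V, ∑ z : V, B w z * f0 z = B w x - B w y := by
    intro w
    have : ∀ t : V, ∑ z : V, B w z * (if z = t then (1:ℝ) else 0) = B w t := by
      intro t
      rw [Finset.sum_congr rfl (fun z _ => by rw [mul_ite, mul_one, mul_zero]),
        Finset.sum_ite_eq' Finset.univ t (fun z => B w z),
        if_pos (Finset.mem_univ _)]
    calc ∑ z : V, B w z * f0 z
        = ∑ z : V, (B w z * (if z = x then 1 else 0)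
            - B w z * (if z = y then 1 else 0)) := by
          refine Finset.sum_congr rfl fun z _ => ?_
          rw [hf0, mul_sub]
      _ = B w x - B w y := by rw [Finset.sum_sub_distrib, this x, this y]
  have hBx : ∀ i : Fin (d+1), B (u i) x = (if G.Adj x (u i) then (1:ℝ) else 0) := by
    intro i
    have hne : u i ≠ x := fun h => (hxP _ (hmem i)) h.symm
    rw [hBapp, if_neg hne, add_zero, if_congr (G.adj_comm (u i) x) rfl rfl]
  have hBy : ∀ i : Fin (d+1), B (u i) y = (if G.Adj y (u i) then (1:ℝ) else 0) := by
    intro i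
    have hne : u i ≠ y := fun h => (hyP _ (hmem i)) h.symm
    rw [hBapp, if_neg hne, add_zero, if_congr (G.adj_comm (u i) y) rfl rfl]
  have hTf0 : π (T f0) = 0 := by
    funext i
    show (T f0) (u i) = 0
    rw [hT, Matrix.toLin'_apply]
    show ∑ z : V, B (u i) z * f0 z = 0
    rw [hdel, hBx i, hBy i, if_congr (hadjxy i) rfl rfl, sub_self]
  have hzero : (⟨T f0, LinearMap.mem_range_self T f0⟩ : LinearMap.range T) = 0 := by
    apply hψinj
    rw [map_zero]
    exact hTf0
  have hT0 : T f0 = 0 := congrArg Subtype.val hzero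
  have hcol : ∀ z : V, B z x = B z y := by
    intro z
    have h := congrFun hT0 z
    rw [hT, Matrix.toLin'_apply] at h
    have h' : ∑ w : V, B z w * f0 w = 0 := h
    rw [hdel] at h'
    linarith
  have hfinal : x = y := by
    apply hcanon
    intro z
    have h := hcol z
    rw [hBapp, hBapp, if_congr (G.adj_comm z x) rfl rfl,
      if_congr (G.adj_comm z y) rfl rfl] at h
    have hiff := aux_ind_iff _ _ _ _ h
    tauto
  exact hxy hfinal
end

section
/- Let G be a finite simple connected C-canonical graph of order n and diameter d with d ≡ 2 (mod 3) and m_G(−1) = n − d − 1, and let P = v_1 v_2 ⋯ v_{d+1} be a diameter path of G. Then no vertex of G outside P has exactly one neighbor on P; that is, every vertex not on P has exactly two neighbors among the vertices of P. -/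
attribute [local instance] Classical.propDecidable

lemma seq_pattern (f : ℕ → ℝ) (k : ℕ) (h0 : f 0 = 0)
    (hrec : ∀ i, 1 ≤ i → i ≤ k → f (i - 1) + f i + f (i + 1) = 0) :
    ∀ i ≤ k + 1, f i = if i % 3 = 0 then 0 else if i % 3 = 1 then f 1 else -f 1 := by
  intro i
  induction i using Nat.strong_induction_on with
  | _ i ih =>
    intro hi
    rcases Nat.lt_or_ge i 2 with h2 | h2
    · interval_cases i <;> simp [h0]
    · have e := hrec (i - 1) (by omega) (by omega)
      have e1 : i - 1 - 1 = i - 2 := by omega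
      have e2 : i - 1 + 1 = i := by omega
      rw [e1, e2] at e
      have r1 := ih (i - 1) (by omega) (by omega)
      have r2 := ih (i - 2) (by omega) (by omega)
      have h3 : i % 3 = 0 ∨ i % 3 = 1 ∨ i % 3 = 2 := by omega
      rcases h3 with h3 | h3 | h3 <;>
      · simp only [h3, show (i-1) % 3 = (i+2) % 3 by omega,
          show (i-2) % 3 = (i+1) % 3 by omega] at r1 r2 ⊢
        norm_num [Nat.add_mod, h3] at r1 r2 ⊢ <;> linarith

lemma exists_kernel_vec {V : Type*} [Fintype V] (G : SimpleGraph V) (n : ℕ)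
    (hcard : Fintype.card V = n) (T : Finset V)
    (hmult : n - T.card + 1 ≤ Module.finrank ℝ
      (LinearMap.ker (Matrix.toLin' (G.adjMatrix ℝ + 1)))) :
    ∃ u : V → ℝ, u ≠ 0 ∧ Matrix.toLin' (G.adjMatrix ℝ + 1) u = 0 ∧ ∀ z ∉ T, u z = 0 := by
  classical
  set K := LinearMap.ker (Matrix.toLin' (G.adjMatrix ℝ + 1)) with hK
  let π : (V → ℝ) →ₗ[ℝ] ({ z // z ∈ Tᶜ } → ℝ) :=
    LinearMap.funLeft ℝ ℝ (fun z => (z : V))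
  let L := π.comp K.subtype
  have hrank := LinearMap.finrank_range_add_finrank_ker L
  have hle : Module.finrank ℝ (LinearMap.range L) ≤ Tᶜ.card := by
    have h1 := Submodule.finrank_le (LinearMap.range L)
    rw [Module.finrank_fintype_fun_eq_card] at h1
    rwa [Fintype.card_coe] at h1
  have hcardc : Tᶜ.card = n - T.card := by
    rw [Finset.card_compl, hcard]
  have hker_pos : 0 < Module.finrank ℝ (LinearMap.ker L) := by omega
  have : Nontrivial (LinearMap.ker L) := Module.finrank_pos_iff.mp hker_pos
  obtain ⟨w, hw0⟩ := exists_ne (0 : LinearMap.ker L)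
  refine ⟨((w : ↥K) : V → ℝ), ?_, (w : ↥K).2, ?_⟩
  · intro h
    apply hw0
    ext z
    exact congrFun h z
  · intro z hz
    have hw := w.2
    rw [LinearMap.mem_ker] at hw
    have h2 : π ((w : ↥K) : V → ℝ) = 0 := hw
    exact congrFun h2 ⟨z, Finset.mem_compl.mpr hz⟩

lemma row_eq {V : Type*} [Fintype V] (G : SimpleGraph V) (u : V → ℝ)
    (hker : Matrix.toLin' (G.adjMatrix ℝ + 1) u = 0) :
    ∀ w : V, u w + ∑ z : V, (if G.Adj w z then u z else 0) = 0 := by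
  classical
  intro w
  have h1 : ((G.adjMatrix ℝ + 1).mulVec u) w = 0 := by
    rw [← Matrix.toLin'_apply]; rw [hker]; rfl
  rw [Matrix.mulVec, dotProduct] at h1
  have h2 : ∀ z : V, (G.adjMatrix ℝ + 1) w z * u z
      = (if G.Adj w z then u z else 0) + (if w = z then u z else 0) := by
    intro z
    simp [Matrix.add_apply, Matrix.one_apply, SimpleGraph.adjMatrix_apply, add_mul]
  rw [Finset.sum_congr rfl (fun z _ => h2 z), Finset.sum_add_distrib] at h1
  rw [Finset.sum_ite_eq] at h1
  simp at h1
  linarith [h1]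

lemma sum_split_s7 {V : Type*} [Fintype V] (G : SimpleGraph V) (u : V → ℝ) (m : ℕ) (v : ℕ → V)
    (x : V)
    (hvinj : ∀ i ∈ Finset.Icc 1 m, ∀ j ∈ Finset.Icc 1 m, v i = v j → i = j)
    (hxP : ∀ i ∈ Finset.Icc 1 m, x ≠ v i)
    (hsupp : ∀ z, z ∉ insert x ((Finset.Icc 1 m).image v) → u z = 0) :
    ∀ w : V, ∑ z : V, (if G.Adj w z then u z else 0)
      = (if G.Adj w x then u x else 0)
        + ∑ j ∈ Finset.Icc 1 m, (if G.Adj w (v j) then u (v j) else 0) := by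
  classical
  intro w
  have h1 : ∑ j ∈ Finset.Icc 1 m, (if G.Adj w (v j) then u (v j) else 0)
      = ∑ z ∈ (Finset.Icc 1 m).image v, (if G.Adj w z then u z else 0) :=
    (Finset.sum_image (f := fun z => if G.Adj w z then u z else 0) hvinj).symm
  have hx : x ∉ (Finset.Icc 1 m).image v := by
    intro hx
    obtain ⟨i, hi, hvi⟩ := Finset.mem_image.mp hx
    exact hxP i hi hvi.symm
  rw [h1, ← Finset.sum_insert (f := fun z => if G.Adj w z then u z else 0) hx]
  symm
  apply Finset.sum_subset (Finset.subset_univ _)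
  intro z _ hz
  rw [hsupp z hz]
  simp

set_option maxHeartbeats 2000000 in
theorem stmt_7 {V : Type*} [Fintype V] (G : SimpleGraph V) (n d : ℕ)
    (hconn : G.Connected)
    (hcard : Fintype.card V = n)
    (hcanon : ∀ a b : V, (∀ z : V, (z = a ∨ G.Adj a z) ↔ (z = b ∨ G.Adj b z)) → a = b)
    (hd3 : d % 3 = 2)
    (hdiam : ∀ a b : V, G.dist a b ≤ d)
    (v : ℕ → V)
    (hpath : ∀ i ∈ Finset.Icc 1 (d + 1), ∀ j ∈ Finset.Icc 1 (d + 1),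
      G.dist (v i) (v j) = max i j - min i j)
    (hmult : multNegOne G = n - d - 1)
    (x : V) (hxP : ∀ i ∈ Finset.Icc 1 (d + 1), x ≠ v i) :
    (pathNbrs G d v x).card ≠ 1 ∧ (pathNbrs G d v x).card = 2 := by
  classical
  set m := d + 1 with hmdef
  have hm3 : m % 3 = 0 := by omega
  have hm2 : 3 ≤ m := by omega
  set N := pathNbrs G d v x with hNdef0
  have hNmem : ∀ j, j ∈ N ↔ (j ∈ Finset.Icc 1 m ∧ G.Adj x (v j)) := by
    intro j
    rw [hNdef0]
    unfold pathNbrs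
    rw [Finset.mem_filter]
  -- distinctness of path vertices
  have hvinj : ∀ i ∈ Finset.Icc 1 m, ∀ j ∈ Finset.Icc 1 m, v i = v j → i = j := by
    intro i hi j hj hij
    have h0 := hpath i hi j hj
    rw [hij, SimpleGraph.dist_self] at h0
    simp only [Finset.mem_Icc] at hi hj
    omega
  -- adjacency on the path
  have hadj : ∀ i ∈ Finset.Icc 1 m, ∀ j ∈ Finset.Icc 1 m,
      (G.Adj (v i) (v j) ↔ (j = i + 1 ∨ i = j + 1)) := by
    intro i hi j hj
    simp only [Finset.mem_Icc] at hi hj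
    constructor
    · intro h
      have h1 : G.dist (v i) (v j) = 1 := SimpleGraph.dist_eq_one_iff_adj.mpr h
      rw [hpath i (by simp [Finset.mem_Icc]; omega) j (by simp [Finset.mem_Icc]; omega)] at h1
      omega
    · intro h
      apply SimpleGraph.dist_eq_one_iff_adj.mp
      rw [hpath i (by simp [Finset.mem_Icc]; omega) j (by simp [Finset.mem_Icc]; omega)]
      omega
  -- window
  have hwin : ∀ i ∈ N, ∀ j ∈ N, j ≤ i + 2 := by
    intro i hi j hj
    rw [hNmem] at hi hj
    have h1 : G.dist (v i) x ≤ 1 := by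
      rw [SimpleGraph.dist_comm]
      exact le_of_eq (SimpleGraph.dist_eq_one_iff_adj.mpr hi.2)
    have h2 : G.dist x (v j) ≤ 1 :=
      le_of_eq (SimpleGraph.dist_eq_one_iff_adj.mpr hj.2)
    have h3 := hconn.dist_triangle (u := v i) (v := x) (w := v j)
    have h4 := hpath i hi.1 j hj.1
    omega
  -- the finset T
  set P : Finset V := (Finset.Icc 1 m).image v with hPdef
  set T : Finset V := insert x P with hTdef
  have hxnotP : x ∉ P := by
    rw [hPdef]
    intro hx
    obtain ⟨i, hi, hvi⟩ := Finset.mem_image.mp hx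
    exact hxP i hi hvi.symm
  have hcardP : P.card = m := by
    rw [hPdef, Finset.card_image_of_injOn (fun i hi j hj h => hvinj i hi j hj h)]
    rw [Nat.card_Icc]
    omega
  have hcardT : T.card = m + 1 := by
    rw [hTdef, Finset.card_insert_of_notMem hxnotP, hcardP]
  have hnm : m + 1 ≤ n := by
    rw [← hcard, ← hcardT]
    exact Finset.card_le_univ T
  -- kernel vector
  obtain ⟨u, hu0, hker, hsupp⟩ := exists_kernel_vec G n hcard T (by
    have : multNegOne G = n - d - 1 := hmult
    unfold multNegOne at this
    rw [this, hcardT]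
    omega)
  have hrow := row_eq G u hker
  have hsum := sum_split_s7 G u m v x hvinj hxP hsupp
  -- the sequence f and value a
  set a : ℝ := u x with hadef
  set f : ℕ → ℝ := fun j => if j ∈ Finset.Icc 1 m then u (v j) else 0 with hfdef
  have hfval : ∀ j ∈ Finset.Icc 1 m, f j = u (v j) := by
    intro j hj; rw [hfdef]; simp [hj]
  have hf0 : ∀ j, j ∉ Finset.Icc 1 m → f j = 0 := by
    intro j hj; rw [hfdef]; simp [hj]
  -- row at x
  have hEx : a + ∑ j ∈ N, f j = 0 := by
    have h1 := hrow x
    rw [hsum x] at h1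
    have h2 : (if G.Adj x x then a else 0) = 0 := by simp
    have h3 : ∑ j ∈ Finset.Icc 1 m, (if G.Adj x (v j) then u (v j) else 0) = ∑ j ∈ N, f j := by
      rw [hNdef0]
      unfold pathNbrs
      rw [Finset.sum_filter]
      apply Finset.sum_congr rfl
      intro j hj
      rw [hfval j hj]
    rw [h2, h3] at h1
    linarith
  -- rows at path vertices
  have hE : ∀ i ∈ Finset.Icc 1 m,
      f (i - 1) + f i + f (i + 1) + (if i ∈ N then a else 0) = 0 := by
    intro i hi
    have hi' := Finset.mem_Icc.mp hi
    have h1 := hrow (v i)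
    rw [hsum (v i)] at h1
    have h2 : (if G.Adj (v i) x then a else 0) = (if i ∈ N then a else 0) := by
      apply if_congr _ rfl rfl
      rw [hNmem i, G.adj_comm]
      simp [hi]
    have h3 : ∑ j ∈ Finset.Icc 1 m, (if G.Adj (v i) (v j) then u (v j) else 0)
        = f (i - 1) + f (i + 1) := by
      have hstep : ∀ j ∈ Finset.Icc 1 m, (if G.Adj (v i) (v j) then u (v j) else 0)
          = (if j = i - 1 then f j else 0) + (if j = i + 1 then f j else 0) := by
        intro j hj
        have hj' := Finset.mem_Icc.mp hj
        have hiff : G.Adj (v i) (v j) ↔ (j = i + 1 ∨ i = j + 1) := hadj i hi j hj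
        by_cases h1 : j = i - 1 <;> by_cases h2 : j = i + 1
        · omega
        · subst h1
          have hax : G.Adj (v i) (v (i - 1)) := hiff.mpr (by omega)
          simp [hax, h2, hfval _ hj]
        · subst h2
          have hax : G.Adj (v i) (v (i + 1)) := hiff.mpr (by omega)
          simp [hax, h1, hfval _ hj]
        · have hax : ¬ G.Adj (v i) (v j) := by rw [hiff]; omega
          simp [hax, h1, h2]
      rw [Finset.sum_congr rfl hstep, Finset.sum_add_distrib]
      rw [Finset.sum_ite_eq' (Finset.Icc 1 m) (i - 1) f,
        Finset.sum_ite_eq' (Finset.Icc 1 m) (i + 1) f]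
      by_cases hb1 : i - 1 ∈ Finset.Icc 1 m <;> by_cases hb2 : i + 1 ∈ Finset.Icc 1 m <;>
        simp [hb1, hb2, hf0]
    rw [h3] at h1
    rw [hfval i hi]
    linarith
  have hE' : ∀ i, 1 ≤ i → i ≤ m → i ∉ N → f (i - 1) + f i + f (i + 1) = 0 := by
    intro i h1 h2 h3
    have := hE i (Finset.mem_Icc.mpr ⟨h1, h2⟩)
    simp [h3] at this
    linarith
  -- rows at off vertices
  have hEy : ∀ y, y ∉ T → (if G.Adj y x then a else 0)
      + ∑ j ∈ Finset.Icc 1 m, (if G.Adj y (v j) then f j else 0) = 0 := by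
    intro y hy
    have h1 := hrow y
    rw [hsum y] at h1
    have h2 : u y = 0 := hsupp y hy
    have h3 : ∑ j ∈ Finset.Icc 1 m, (if G.Adj y (v j) then u (v j) else 0)
        = ∑ j ∈ Finset.Icc 1 m, (if G.Adj y (v j) then f j else 0) := by
      apply Finset.sum_congr rfl
      intro j hj
      rw [hfval j hj]
    rw [h2, h3] at h1
    linarith
  -- u = 0 criterion
  have huzero : a = 0 → (∀ j ∈ Finset.Icc 1 m, f j = 0) → False := by
    intro ha hf
    apply hu0
    funext z
    by_cases hz : z ∈ T
    · rw [hTdef] at hz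
      rcases Finset.mem_insert.mp hz with hz | hz
      · rw [hz]; exact ha
      · rw [hPdef] at hz
        obtain ⟨j, hj, rfl⟩ := Finset.mem_image.mp hz
        have := hf j hj
        rw [hfval j hj] at this
        exact this
    · exact hsupp z hz
  -- f vanishes outside Icc
  have hfz : f 0 = 0 := hf0 0 (by simp)
  have hfm1 : f (m + 1) = 0 := hf0 (m + 1) (by simp [Finset.mem_Icc])
  -- the reversed sequence
  set g : ℕ → ℝ := fun j => f (m + 1 - j) with hgdef
  have hg0 : g 0 = 0 := by rw [hgdef]; simpa using hfm1
  have hg1 : g 1 = f m := by rw [hgdef]; simp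
  have hgf : ∀ i, i ≤ m + 1 → f i = g (m + 1 - i) := by
    intro i hi
    rw [hgdef]
    simp only []
    congr 1
    omega
  have hrecR : ∀ k', (∀ j, 1 ≤ j → j ≤ k' → (m + 1 - j) ∉ N) → k' ≤ m - 1 →
      ∀ j, 1 ≤ j → j ≤ k' → g (j - 1) + g j + g (j + 1) = 0 := by
    intro k' hnotin hk' j hj1 hj2
    have hi : 1 ≤ m + 1 - j ∧ m + 1 - j ≤ m := by omega
    have he := hE' (m + 1 - j) hi.1 hi.2 (hnotin j hj1 hj2)
    have e1 : m + 1 - j - 1 = m + 1 - (j + 1) := by omega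
    have e2 : m + 1 - j + 1 = m + 1 - (j - 1) := by omega
    rw [e1, e2] at he
    rw [hgdef]
    simp only []
    linarith
  -- pattern helpers
  have hL : ∀ p, 1 ≤ p → p ≤ m → (∀ i, 1 ≤ i → i ≤ p - 1 → i ∉ N) →
      ∀ i ≤ p, f i = if i % 3 = 0 then 0 else if i % 3 = 1 then f 1 else -f 1 := by
    intro p hp1 hpm hnot i hi
    exact seq_pattern f (p - 1) hfz
      (fun i h1 h2 => hE' i h1 (by omega) (hnot i h1 h2)) i (by omega)
  have hRaux : ∀ k', k' ≤ m - 1 → (∀ j, 1 ≤ j → j ≤ k' → (m + 1 - j) ∉ N) →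
      ∀ i, m - k' ≤ i → i ≤ m + 1 →
      f i = if (m + 1 - i) % 3 = 0 then 0 else if (m + 1 - i) % 3 = 1 then f m else -f m := by
    intro k' hk' hnot i hi1 hi2
    have hpat := seq_pattern g k' hg0 (hrecR k' hnot hk') (m + 1 - i) (by omega)
    rw [hg1] at hpat
    rw [hgf i hi2, hpat]
  -- N is nonempty
  have hcaseA : N.Nonempty := by
    rcases Finset.eq_empty_or_nonempty N with hNe | h
    · exfalso
      have hpat := seq_pattern f m hfz (fun i h1 h2 => hE' i h1 h2 (by simp [hNe]))
      have h1 : f 1 = 0 := by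
        have hth := hpat (m + 1) (le_refl _)
        rw [hfm1, show (m + 1) % 3 = 1 by omega] at hth
        norm_num at hth
        linarith
      have ha : a = 0 := by
        have hth := hEx
        rw [hNe] at hth
        simpa using hth
      apply huzero ha
      intro j hj
      have hj' := Finset.mem_Icc.mp hj
      have hv := hpat j (by omega)
      split_ifs at hv <;> linarith
    · exact h
  set p := N.min' hcaseA with hpdef
  set q := N.max' hcaseA with hqdef
  have hpN : p ∈ N := N.min'_mem hcaseA
  have hqN : q ∈ N := N.max'_mem hcaseA
  have hpq : q ≤ p + 2 := hwin p hpN q hqN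
  have hNsub : N ⊆ Finset.Icc p q :=
    fun j hj => Finset.mem_Icc.mpr ⟨N.min'_le j hj, N.le_max' j hj⟩
  have hcle : N.card ≤ 3 := by
    have hcc := Finset.card_le_card hNsub
    rw [Nat.card_Icc] at hcc
    omega
  have hpIcc := (hNmem p).mp hpN
  have hqIcc := (hNmem q).mp hqN
  have hp1m := Finset.mem_Icc.mp hpIcc.1
  have hq1m := Finset.mem_Icc.mp hqIcc.1
  -- card ≠ 1
  have hc1 : N.card ≠ 1 := by
    intro hc
    obtain ⟨p0, hp0⟩ := Finset.card_eq_one.mp hc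
    have hmemN : ∀ j, j ∈ N ↔ j = p0 := by intro j; rw [hp0]; simp
    have hp0Icc : p0 ∈ Finset.Icc 1 m := ((hNmem p0).mp ((hmemN p0).mpr rfl)).1
    have hp0' := Finset.mem_Icc.mp hp0Icc
    have hvL := hL p0 hp0'.1 hp0'.2 (fun i h1 h2 => by rw [hmemN]; omega)
    have hvR := hRaux (m - p0) (by omega) (fun j h1 h2 => by rw [hmemN]; omega)
    have e1 := hvL p0 le_rfl
    have e2 := hvL (p0 - 1) (by omega)
    have e3 := hvR p0 (by omega) (by omega)
    have e4 := hvR (p0 + 1) (by omega) (by omega)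
    have eEp : f (p0 - 1) + f p0 + f (p0 + 1) + a = 0 := by
      have hth := hE p0 hp0Icc
      rw [if_pos ((hmemN p0).mpr rfl)] at hth
      exact hth
    have eEx : a + f p0 = 0 := by
      have hth := hEx
      rw [hp0, Finset.sum_singleton] at hth
      exact hth
    have hkey : a = 0 ∧ f 1 = 0 ∧ f m = 0 := by
      have ht3 : p0 % 3 = 0 ∨ p0 % 3 = 1 ∨ p0 % 3 = 2 := by omega
      rcases ht3 with h | h | h
      · simp only [h, show (p0 - 1) % 3 = 2 by omega, show (m + 1 - p0) % 3 = 1 by omega,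
          show (m + 1 - (p0 + 1)) % 3 = 0 by omega] at e1 e2 e3 e4
        norm_num at e1 e2 e3 e4
        refine ⟨by linarith, by linarith, by linarith⟩
      · simp only [h, show (p0 - 1) % 3 = 0 by omega, show (m + 1 - p0) % 3 = 0 by omega,
          show (m + 1 - (p0 + 1)) % 3 = 2 by omega] at e1 e2 e3 e4
        norm_num at e1 e2 e3 e4
        refine ⟨by linarith, by linarith, by linarith⟩
      · simp only [h, show (p0 - 1) % 3 = 1 by omega, show (m + 1 - p0) % 3 = 2 by omega,
          show (m + 1 - (p0 + 1)) % 3 = 1 by omega] at e1 e2 e3 e4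
        norm_num at e1 e2 e3 e4
        refine ⟨by linarith, by linarith, by linarith⟩
    obtain ⟨ha0, ht0, hs0⟩ := hkey
    apply huzero ha0
    intro j hj
    have hj' := Finset.mem_Icc.mp hj
    rcases le_or_gt j p0 with h | h
    · have hv := hvL j h
      split_ifs at hv <;> linarith
    · have hv := hvR j (by omega) (by omega)
      split_ifs at hv <;> linarith
  -- card ≠ 3
  have hc3 : N.card ≠ 3 := by
    intro hc
    have hple : p ≤ q := N.min'_le q hqN
    have hq2 : q = p + 2 := by
      have h1 := Finset.card_le_card hNsub
      rw [Nat.card_Icc] at h1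
      omega
    have hNEq : N = Finset.Icc p q :=
      Finset.eq_of_subset_of_card_le hNsub (by rw [Nat.card_Icc]; omega)
    have hmemN : ∀ j, j ∈ N ↔ (p ≤ j ∧ j ≤ p + 2) := by
      intro j; rw [hNEq, hq2, Finset.mem_Icc]
    have hp2m : p + 2 ≤ m := by omega
    have hp1 : 1 ≤ p := hp1m.1
    have hvL := hL p hp1 (by omega) (fun i h1 h2 => by rw [hmemN]; omega)
    have hvR := hRaux (m - p - 2) (by omega) (fun j h1 h2 => by rw [hmemN]; omega)
    have e1 := hvL p le_rfl
    have e2 := hvL (p - 1) (by omega)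
    have e3 := hvR (p + 2) (by omega) (by omega)
    have e4 := hvR (p + 3) (by omega) (by omega)
    have eEp : f (p - 1) + f p + f (p + 1) + a = 0 := by
      have hth := hE p hpIcc.1
      rw [if_pos hpN] at hth
      exact hth
    have eEp1 : f p + f (p + 1) + f (p + 2) + a = 0 := by
      have hmem1 : p + 1 ∈ N := (hmemN _).mpr (by omega)
      have hth := hE (p + 1) (Finset.mem_Icc.mpr ⟨by omega, by omega⟩)
      rw [if_pos hmem1, show p + 1 - 1 = p by omega] at hth
      exact hth
    have eEp2 : f (p + 1) + f (p + 2) + f (p + 3) + a = 0 := by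
      have hmem2 : p + 2 ∈ N := (hmemN _).mpr (by omega)
      have hth := hE (p + 2) (Finset.mem_Icc.mpr ⟨by omega, by omega⟩)
      rw [if_pos hmem2, show p + 2 - 1 = p + 1 by omega] at hth
      exact hth
    have hkey : f 1 = 0 ∧ f m = 0 ∧ f (p + 1) = -a := by
      have ht3 : p % 3 = 0 ∨ p % 3 = 1 ∨ p % 3 = 2 := by omega
      rcases ht3 with h | h | h
      · simp only [h, show (p - 1) % 3 = 2 by omega, show (m + 1 - (p + 2)) % 3 = 2 by omega,
          show (m + 1 - (p + 3)) % 3 = 1 by omega] at e1 e2 e3 e4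
        norm_num at e1 e2 e3 e4
        refine ⟨by linarith, by linarith, by linarith⟩
      · simp only [h, show (p - 1) % 3 = 0 by omega, show (m + 1 - (p + 2)) % 3 = 1 by omega,
          show (m + 1 - (p + 3)) % 3 = 0 by omega] at e1 e2 e3 e4
        norm_num at e1 e2 e3 e4
        refine ⟨by linarith, by linarith, by linarith⟩
      · simp only [h, show (p - 1) % 3 = 1 by omega, show (m + 1 - (p + 2)) % 3 = 0 by omega,
          show (m + 1 - (p + 3)) % 3 = 2 by omega] at e1 e2 e3 e4
        norm_num at e1 e2 e3 e4
        refine ⟨by linarith, by linarith, by linarith⟩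
    obtain ⟨ht0, hs0, hp1val⟩ := hkey
    have hfzero : ∀ j ∈ Finset.Icc 1 m, j ≠ p + 1 → f j = 0 := by
      intro j hj hjne
      have hj' := Finset.mem_Icc.mp hj
      rcases le_or_gt j p with h | h
      · have hv := hvL j h
        split_ifs at hv <;> linarith
      · have hv := hvR j (by omega) (by omega)
        split_ifs at hv <;> linarith
    have ha0 : a ≠ 0 := by
      intro h
      apply huzero h
      intro j hj
      by_cases hjp : j = p + 1
      · rw [hjp, hp1val, h, neg_zero]
      · exact hfzero j hj hjp
    have hp1Icc : p + 1 ∈ Finset.Icc 1 m := Finset.mem_Icc.mpr ⟨by omega, by omega⟩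
    have hx_p1 : G.Adj x (v (p + 1)) := ((hNmem _).mp ((hmemN _).mpr (by omega))).2
    have hoff : ∀ z, z ∉ T → (G.Adj z x ↔ G.Adj z (v (p + 1))) := by
      intro z hz
      have he := hEy z hz
      have hsumz : ∑ j ∈ Finset.Icc 1 m, (if G.Adj z (v j) then f j else 0)
          = (if G.Adj z (v (p + 1)) then -a else 0) := by
        have hcg : ∀ j ∈ Finset.Icc 1 m, (if G.Adj z (v j) then f j else 0)
            = (if j = p + 1 then (if G.Adj z (v j) then f j else 0) else 0) := by
          intro j hj
          by_cases hjp : j = p + 1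
          · rw [if_pos hjp]
          · rw [if_neg hjp, hfzero j hj hjp, ite_self]
        rw [Finset.sum_congr rfl hcg,
          Finset.sum_ite_eq' (Finset.Icc 1 m) (p + 1)
            (fun j => if G.Adj z (v j) then f j else 0),
          if_pos hp1Icc, hp1val]
      rw [hsumz] at he
      by_cases hA : G.Adj z x <;> by_cases hB : G.Adj z (v (p + 1))
      · exact iff_of_true hA hB
      · exfalso; rw [if_pos hA, if_neg hB] at he; apply ha0; linarith
      · exfalso; rw [if_neg hA, if_pos hB] at he; apply ha0; linarith
      · exact iff_of_false hA hB
    have heq : ∀ z : V, (z = x ∨ G.Adj x z) ↔ (z = v (p + 1) ∨ G.Adj (v (p + 1)) z) := by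
      intro z
      by_cases hz1 : z = x
      · subst hz1
        exact iff_of_true (Or.inl rfl) (Or.inr hx_p1.symm)
      by_cases hz2 : z = v (p + 1)
      · subst hz2
        exact iff_of_true (Or.inr hx_p1) (Or.inl rfl)
      have hmain : G.Adj x z ↔ G.Adj (v (p + 1)) z := by
        by_cases hzP : z ∈ P
        · rw [hPdef] at hzP
          obtain ⟨j, hj, rfl⟩ := Finset.mem_image.mp hzP
          have hjne : j ≠ p + 1 := fun h => hz2 (by rw [h])
          constructor
          · intro h
            have hjN := (hmemN j).mp ((hNmem j).mpr ⟨hj, h⟩)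
            exact (hadj (p + 1) hp1Icc j hj).mpr (by omega)
          · intro h
            have hja := (hadj (p + 1) hp1Icc j hj).mp h
            exact ((hNmem j).mp ((hmemN j).mpr (by omega))).2
        · have hzT : z ∉ T := by
            rw [hTdef]
            simp only [Finset.mem_insert]
            push_neg
            exact ⟨hz1, hzP⟩
          have hof := hoff z hzT
          rw [G.adj_comm x z, G.adj_comm (v (p + 1)) z]
          exact hof
      constructor
      · intro h
        rcases h with h | h
        · exact absurd h hz1
        · exact Or.inr (hmain.mp h)
      · intro h
        rcases h with h | h
        · exact absurd h hz2
        · exact Or.inr (hmain.mpr h)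
    exact hxP (p + 1) hp1Icc (hcanon x (v (p + 1)) heq)
  have hcpos : 0 < N.card := Finset.card_pos.mpr hcaseA
  exact ⟨hc1, by omega⟩
end

section
/- Let G be a finite simple connected C-canonical graph of order n and diameter d with d not congruent to 1 modulo 3 and m_G(−1) = n − d − 1, and let P = v_1 v_2 ⋯ v_{d+1} be a diameter path of G. If a vertex u of G not on P is adjacent to exactly the two vertices v_i and v_j of P with i < j, then j = i + 1. -/
attribute [local instance] Classical.propDecidable

/-- The sequence `0, 1, -1, 0, 1, -1, …` solving `φ(k+2) = -φ(k+1) - φ(k)`. -/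
private def phiAux : ℕ → ℝ
  | 0 => 0
  | 1 => 1
  | (n + 2) => -phiAux (n + 1) - phiAux n

private lemma phiAux_add_three (k : ℕ) : phiAux (k + 3) = phiAux k := by
  show phiAux (k + 1 + 2) = phiAux k
  rw [phiAux, phiAux]
  ring

private lemma phiAux_mod (k : ℕ) : phiAux k = phiAux (k % 3) := by
  induction k using Nat.strong_induction_on with
  | _ k ih =>
    rcases Nat.lt_or_ge k 3 with h | h
    · rw [Nat.mod_eq_of_lt h]
    · obtain ⟨l, rfl⟩ : ∃ l, k = l + 3 := ⟨k - 3, by omega⟩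
      rw [phiAux_add_three, ih l (by omega)]
      congr 1
      omega

private lemma phiAux_zero : phiAux 0 = 0 := rfl
private lemma phiAux_one : phiAux 1 = 1 := rfl
private lemma phiAux_two : phiAux 2 = -1 := by
  show phiAux (0 + 2) = -1
  rw [phiAux, phiAux_one, phiAux_zero]; ring

private lemma sum_range_shift {M : Type*} [AddCommMonoid M] (F : ℕ → M) (d : ℕ) :
    ∑ k ∈ Finset.range (d + 1), F (k + 1) = ∑ l ∈ Finset.Icc 1 (d + 1), F l := by
  induction d with
  | zero => simp
  | succ d ih =>
    rw [Finset.sum_range_succ, ih, ← Finset.sum_Icc_succ_top (by omega)]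

private lemma sum_single_ite (c : ℕ → ℝ) (s : Finset ℕ) (a : ℕ) :
    ∑ l ∈ s, c l * (if l = a then (1:ℝ) else 0) = if a ∈ s then c a else 0 := by
  rw [← Finset.sum_ite_eq' s a c]
  apply Finset.sum_congr rfl
  intro l _
  by_cases h : l = a <;> simp [h]

private lemma tri_sum (c : ℕ → ℝ) (d k : ℕ) (h1 : 1 ≤ k) (h2 : k ≤ d + 1)
    (hc0 : c 0 = 0) (hcm : c (d + 2) = 0) :
    ∑ l ∈ Finset.Icc 1 (d + 1), c l * (if l + 1 = k ∨ k = l ∨ k + 1 = l then (1:ℝ) else 0)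
      = c (k - 1) + c k + c (k + 1) := by
  have key : ∀ l ∈ Finset.Icc 1 (d + 1),
      c l * (if l + 1 = k ∨ k = l ∨ k + 1 = l then (1:ℝ) else 0)
        = c l * (if l = k - 1 then (1:ℝ) else 0) + c l * (if l = k then (1:ℝ) else 0)
          + c l * (if l = k + 1 then (1:ℝ) else 0) := by
    intro l hl
    rw [Finset.mem_Icc] at hl
    by_cases a1 : l + 1 = k
    · rw [if_pos (Or.inl a1), if_pos (show l = k - 1 by omega),
        if_neg (show ¬ l = k by omega), if_neg (show ¬ l = k + 1 by omega)]
      ring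
    · by_cases a2 : k = l
      · rw [if_pos (Or.inr (Or.inl a2)), if_neg (show ¬ l = k - 1 by omega),
          if_pos (show l = k by omega), if_neg (show ¬ l = k + 1 by omega)]
        ring
      · by_cases a3 : k + 1 = l
        · rw [if_pos (Or.inr (Or.inr a3)), if_neg (show ¬ l = k - 1 by omega),
            if_neg (show ¬ l = k by omega), if_pos (show l = k + 1 by omega)]
          ring
        · rw [if_neg (show ¬ (l + 1 = k ∨ k = l ∨ k + 1 = l) by omega),
            if_neg (show ¬ l = k - 1 by omega), if_neg (show ¬ l = k by omega),
            if_neg (show ¬ l = k + 1 by omega)]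
          ring
  rw [Finset.sum_congr rfl key, Finset.sum_add_distrib, Finset.sum_add_distrib,
    sum_single_ite, sum_single_ite, sum_single_ite]
  have e1 : (if k - 1 ∈ Finset.Icc 1 (d + 1) then c (k - 1) else 0) = c (k - 1) := by
    split_ifs with h
    · rfl
    · rw [Finset.mem_Icc] at h
      have : k - 1 = 0 := by omega
      rw [this, hc0]
  have e2 : (if k ∈ Finset.Icc 1 (d + 1) then c k else 0) = c k := by
    rw [if_pos (Finset.mem_Icc.mpr ⟨h1, h2⟩)]
  have e3 : (if k + 1 ∈ Finset.Icc 1 (d + 1) then c (k + 1) else 0) = c (k + 1) := by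
    split_ifs with h
    · rfl
    · rw [Finset.mem_Icc] at h
      have : k + 1 = d + 2 := by omega
      rw [this, hcm]
  rw [e1, e2, e3]

set_option maxHeartbeats 4000000

theorem stmt_8 {V : Type*} [Fintype V] (G : SimpleGraph V) (n d : ℕ)
    (hconn : G.Connected)
    (hcard : Fintype.card V = n)
    (hcanon : ∀ a b : V, (∀ z : V, (z = a ∨ G.Adj a z) ↔ (z = b ∨ G.Adj b z)) → a = b)
    (hd3 : d % 3 ≠ 1)
    (hdiam : ∀ a b : V, G.dist a b ≤ d)
    (v : ℕ → V)
    (hpath : ∀ i ∈ Finset.Icc 1 (d + 1), ∀ j ∈ Finset.Icc 1 (d + 1),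
      G.dist (v i) (v j) = max i j - min i j)
    (hmult : multNegOne G = n - d - 1)
    (u : V) (huP : ∀ i ∈ Finset.Icc 1 (d + 1), u ≠ v i) (i j : ℕ) (hij : i < j)
    (hNP : pathNbrs G d v u = {i, j}) :
    j = i + 1 := by
  by_contra hne
  -- membership facts
  have hmemNP : ∀ k, k ∈ Finset.Icc 1 (d + 1) → (G.Adj u (v k) ↔ (k = i ∨ k = j)) := by
    intro k hk
    constructor
    · intro hadj
      have : k ∈ pathNbrs G d v u := Finset.mem_filter.mpr ⟨hk, hadj⟩
      rw [hNP] at this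
      simpa using this
    · intro hk'
      have : k ∈ pathNbrs G d v u := by
        rw [hNP]; simp [hk']
      exact (Finset.mem_filter.mp this).2
  have hiI : i ∈ Finset.Icc 1 (d + 1) ∧ G.Adj u (v i) := by
    have : i ∈ pathNbrs G d v u := by rw [hNP]; simp
    exact Finset.mem_filter.mp this
  have hjI : j ∈ Finset.Icc 1 (d + 1) ∧ G.Adj u (v j) := by
    have : j ∈ pathNbrs G d v u := by rw [hNP]; simp
    exact Finset.mem_filter.mp this
  rw [Finset.mem_Icc] at hiI hjI
  -- injectivity of v on the path
  have hvinj : ∀ k ∈ Finset.Icc 1 (d + 1), ∀ l ∈ Finset.Icc 1 (d + 1), v k = v l → k = l := by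
    intro k hk l hl he
    have := hpath k hk l hl
    rw [he, SimpleGraph.dist_self] at this
    rw [Finset.mem_Icc] at hk hl
    omega
  -- adjacency along the path
  have hadjv : ∀ k ∈ Finset.Icc 1 (d + 1), ∀ l ∈ Finset.Icc 1 (d + 1),
      (G.Adj (v k) (v l) ↔ (l + 1 = k ∨ k + 1 = l)) := by
    intro k hk l hl
    rw [← SimpleGraph.dist_eq_one_iff_adj, hpath k hk l hl]
    rw [Finset.mem_Icc] at hk hl
    omega
  -- j = i + 2
  have hji2 : j = i + 2 := by
    have hd1 : G.dist (v i) u = 1 :=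
      SimpleGraph.dist_eq_one_iff_adj.mpr hiI.2.symm
    have hd2 : G.dist u (v j) = 1 := SimpleGraph.dist_eq_one_iff_adj.mpr hjI.2
    have htri := hconn.dist_triangle (u := v i) (v := u) (w := v j)
    rw [hd1, hd2] at htri
    have := hpath i (Finset.mem_Icc.mpr ⟨hiI.1.1, hiI.1.2⟩) j (Finset.mem_Icc.mpr ⟨hjI.1.1, hjI.1.2⟩)
    omega
  subst hji2
  -- matrix entries
  set M : Matrix V V ℝ := G.adjMatrix ℝ + 1 with hM
  have hMvv : ∀ k ∈ Finset.Icc 1 (d + 1), ∀ l ∈ Finset.Icc 1 (d + 1),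
      M (v k) (v l) = if l + 1 = k ∨ k = l ∨ k + 1 = l then 1 else 0 := by
    intro k hk l hl
    have hadj := hadjv k hk l hl
    have hinj := hvinj k hk l hl
    rw [hM]
    simp only [Matrix.add_apply, SimpleGraph.adjMatrix_apply, Matrix.one_apply]
    by_cases e : k = l
    · subst e
      simp
    · have hvne : v k ≠ v l := fun h => e (hinj h)
      rw [if_neg hvne, add_zero]
      by_cases h1 : l + 1 = k ∨ k + 1 = l
      · rw [if_pos (hadj.mpr h1), if_pos (by tauto)]
      · rw [if_neg (fun h => h1 (hadj.mp h)), if_neg (by tauto)]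
  have hMvu : ∀ k ∈ Finset.Icc 1 (d + 1),
      M (v k) u = if k = i ∨ k = i + 2 then 1 else 0 := by
    intro k hk
    have hvne : v k ≠ u := fun h => (huP k hk) h.symm
    rw [hM]
    simp only [Matrix.add_apply, SimpleGraph.adjMatrix_apply, Matrix.one_apply]
    rw [if_neg hvne, add_zero, G.adj_comm]
    by_cases h1 : k = i ∨ k = i + 2
    · rw [if_pos ((hmemNP k hk).mpr h1), if_pos h1]
    · rw [if_neg (fun h => h1 ((hmemNP k hk).mp h)), if_neg h1]
  have hMuv : ∀ l ∈ Finset.Icc 1 (d + 1),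
      M u (v l) = if l = i ∨ l = i + 2 then 1 else 0 := by
    intro l hl
    have hvne : u ≠ v l := huP l hl
    rw [hM]
    simp only [Matrix.add_apply, SimpleGraph.adjMatrix_apply, Matrix.one_apply]
    rw [if_neg hvne, add_zero]
    by_cases h1 : l = i ∨ l = i + 2
    · rw [if_pos ((hmemNP l hl).mpr h1), if_pos h1]
    · rw [if_neg (fun h => h1 ((hmemNP l hl).mp h)), if_neg h1]
  have hMuu : M u u = 1 := by
    rw [hM]
    simp
  -- the linearly independent family of columns
  set f : (V → ℝ) →ₗ[ℝ] (V → ℝ) := Matrix.toLin' M with hf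
  set W : Fin (d + 2) → V := fun k => if (k : ℕ) < d + 1 then v ((k : ℕ) + 1) else u with hW
  have hWv : ∀ (k : Fin (d + 2)), (k : ℕ) < d + 1 → W k = v ((k : ℕ) + 1) := by
    intro k hk; rw [hW]; simp [hk]
  have hWu : ∀ (k : Fin (d + 2)), (k : ℕ) = d + 1 → W k = u := by
    intro k hk; rw [hW]; simp [hk]
  have hWinj : Function.Injective W := by
    intro k l hkl
    rcases Nat.lt_or_ge (k : ℕ) (d + 1) with hk | hk <;>
      rcases Nat.lt_or_ge (l : ℕ) (d + 1) with hl | hl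
    · rw [hWv k hk, hWv l hl] at hkl
      have := hvinj _ (Finset.mem_Icc.mpr (by omega)) _ (Finset.mem_Icc.mpr (by omega)) hkl
      exact Fin.ext (by omega)
    · have hl' : (l : ℕ) = d + 1 := by omega
      rw [hWv k hk, hWu l hl'] at hkl
      exact absurd hkl.symm (huP _ (Finset.mem_Icc.mpr (by omega)))
    · have hk' : (k : ℕ) = d + 1 := by omega
      rw [hWu k hk', hWv l hl] at hkl
      exact absurd hkl (huP _ (Finset.mem_Icc.mpr (by omega)))
    · exact Fin.ext (by omega)
  have hLI : LinearIndependent ℝ (fun k : Fin (d + 2) => f (Pi.single (W k) (1 : ℝ))) := by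
    rw [Fintype.linearIndependent_iff]
    intro g hg
    set t : ℝ := g ⟨d + 1, by omega⟩ with ht
    set c : ℕ → ℝ := fun l => if h : 1 ≤ l ∧ l ≤ d + 1 then g ⟨l - 1, by omega⟩ else 0 with hc
    have hc0 : c 0 = 0 := by rw [hc]; simp
    have hcm : c (d + 2) = 0 := by rw [hc]; simp
    have hcg : ∀ k : Fin (d + 2), (k : ℕ) < d + 1 → c ((k : ℕ) + 1) = g k := by
      intro k hk
      rw [hc]
      simp only []
      rw [dif_pos ⟨by omega, by omega⟩]
      exact congrArg g (Fin.ext (by simp))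
    have hrow : ∀ z : V,
        (∑ l ∈ Finset.Icc 1 (d + 1), c l * M z (v l)) + t * M z u = 0 := by
      intro z
      have hgz := congrFun hg z
      rw [Finset.sum_apply, Pi.zero_apply] at hgz
      have hterm : ∀ k : Fin (d + 2),
          (g k • f (Pi.single (W k) (1 : ℝ))) z = g k * M z (W k) := by
        intro k
        rw [hf, Pi.smul_apply, Matrix.toLin'_apply, Matrix.mulVec_single]
        simp
      rw [Finset.sum_congr rfl fun k _ => hterm k, Fin.sum_univ_castSucc] at hgz
      have hlast : g (Fin.last (d + 1)) * M z (W (Fin.last (d + 1))) = t * M z u := by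
        rw [hWu (Fin.last (d + 1)) rfl, ht]
        exact congrArg (fun x => g x * M z u) (Fin.ext rfl)
      have hcast : ∀ k : Fin (d + 1),
          g (Fin.castSucc k) * M z (W (Fin.castSucc k))
            = c ((k : ℕ) + 1) * M z (v ((k : ℕ) + 1)) := by
        intro k
        rw [hWv (Fin.castSucc k) (by simp [k.isLt]), ← hcg (Fin.castSucc k) (by simp [k.isLt])]
        simp
      rw [Finset.sum_congr rfl fun k _ => hcast k, hlast] at hgz
      have hconv : ∑ k : Fin (d + 1), c ((k : ℕ) + 1) * M z (v ((k : ℕ) + 1))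
          = ∑ l ∈ Finset.Icc 1 (d + 1), c l * M z (v l) := by
        rw [Fin.sum_univ_eq_sum_range (fun l => c (l + 1) * M z (v (l + 1)))]
        exact sum_range_shift (fun l => c l * M z (v l)) d
      rw [hconv] at hgz
      exact hgz
    -- the structured equations
    have hE : ∀ k, 1 ≤ k → k ≤ d + 1 →
        c (k - 1) + c k + c (k + 1) + (if k = i ∨ k = i + 2 then t else 0) = 0 := by
      intro k h1 h2
      have h := hrow (v k)
      have hk' : k ∈ Finset.Icc 1 (d + 1) := Finset.mem_Icc.mpr ⟨h1, h2⟩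
      rw [Finset.sum_congr rfl fun l hl => by rw [hMvv k hk' l hl]] at h
      rw [tri_sum c d k h1 h2 hc0 hcm, hMvu k hk', mul_ite, mul_one, mul_zero] at h
      exact h
    have hiI' : i ∈ Finset.Icc 1 (d + 1) := Finset.mem_Icc.mpr ⟨hiI.1.1, hiI.1.2⟩
    have hjI' : i + 2 ∈ Finset.Icc 1 (d + 1) := Finset.mem_Icc.mpr ⟨hjI.1.1, hjI.1.2⟩
    have hF : c i + c (i + 2) + t = 0 := by
      have h := hrow u
      rw [Finset.sum_congr rfl fun l hl => by rw [hMuv l hl]] at h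
      have hsplit : ∀ l ∈ Finset.Icc 1 (d + 1),
          c l * (if l = i ∨ l = i + 2 then (1:ℝ) else 0)
            = c l * (if l = i then (1:ℝ) else 0) + c l * (if l = i + 2 then (1:ℝ) else 0) := by
        intro l _
        by_cases a1 : l = i
        · rw [if_pos (Or.inl a1), if_pos a1, if_neg (by omega)]
          ring
        · by_cases a2 : l = i + 2
          · rw [if_pos (Or.inr a2), if_neg a1, if_pos a2]
            ring
          · rw [if_neg (by tauto), if_neg a1, if_neg a2]
            ring
      rw [Finset.sum_congr rfl hsplit, Finset.sum_add_distrib, sum_single_ite, sum_single_ite,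
        if_pos hiI', if_pos hjI', hMuu, mul_one] at h
      exact h
    -- left recurrence
    have hbl : ∀ k, k ≤ i → c k = phiAux k * c 1 := by
      intro k
      induction k using Nat.strong_induction_on with
      | _ k ih =>
        rcases k with _ | _ | s
        · intro _
          rw [hc0, phiAux_zero, zero_mul]
        · intro _
          rw [phiAux_one, one_mul]
        · intro hk
          have e := hE (s + 1) (by omega) (by omega)
          rw [if_neg (by omega)] at e
          have h1 := ih s (by omega) (by omega)
          have h2 := ih (s + 1) (by omega) (by omega)
          have hphi : phiAux (s + 2) = -phiAux (s + 1) - phiAux s := by rw [phiAux]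
          have hidx : s + 1 - 1 = s := by omega
          rw [hidx] at e
          rw [hphi]
          linarith
    -- right recurrence
    have hbr : ∀ s, s ≤ d - i → c (d + 2 - s) = phiAux s * c (d + 1) := by
      intro s
      induction s using Nat.strong_induction_on with
      | _ s ih =>
        rcases s with _ | _ | s
        · intro _
          rw [Nat.sub_zero, hcm, phiAux_zero, zero_mul]
        · intro _
          have hidx : d + 2 - 1 = d + 1 := by omega
          rw [hidx, phiAux_one, one_mul]
        · intro hs
          have hd2 : i + 2 ≤ d + 1 := hjI.1.2
          have hi1 : 1 ≤ i := hiI.1.1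
          have e := hE (d + 1 - s) (by omega) (by omega)
          rw [if_neg (by omega)] at e
          have h1 := ih s (by omega) (by omega)
          have h2 := ih (s + 1) (by omega) (by omega)
          have hphi : phiAux (s + 2) = -phiAux (s + 1) - phiAux s := by rw [phiAux]
          have i1 : d + 1 - s - 1 = d + 2 - (s + 2) := by omega
          have i3 : d + 1 - s + 1 = d + 2 - s := by omega
          rw [i1, i3] at e
          have i2 : d + 1 - s = d + 2 - (s + 1) := by omega
          rw [i2] at e
          rw [hphi]
          linarith
    have hd2 : i + 2 ≤ d + 1 := hjI.1.2
    have hi1 : 1 ≤ i := hiI.1.1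
    -- middle value
    have hmid : c (i + 1) = t := by
      have e := hE (i + 1) (by omega) (by omega)
      rw [if_neg (by omega)] at e
      have hidx : i + 1 - 1 = i := by omega
      rw [hidx] at e
      linarith
    have e4 := hE i (by omega) (by omega)
    rw [if_pos (Or.inl rfl)] at e4
    have e5 := hE (i + 2) (by omega) (by omega)
    rw [if_pos (Or.inr rfl)] at e5
    have hidx5 : i + 2 - 1 = i + 1 := by omega
    rw [hidx5] at e5
    have ca := hbl i (le_refl i)
    have ca1 := hbl (i - 1) (by omega)
    have cb2 : c (i + 2) = phiAux (d - i) * c (d + 1) := by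
      have h := hbr (d - i) (le_refl _)
      have hidx : d + 2 - (d - i) = i + 2 := by omega
      rwa [hidx] at h
    have cb3 : c (i + 3) = phiAux (d - i - 1) * c (d + 1) := by
      have h := hbr (d - i - 1) (by omega)
      have hidx : d + 2 - (d - i - 1) = i + 3 := by omega
      rwa [hidx] at h
    -- the final case analysis on residues
    have hd3' : (d + 1) % 3 ≠ 2 := by omega
    have habt : c 1 = 0 ∧ c (d + 1) = 0 ∧ t = 0 := by
      have hval : ∀ r, r % 3 = 0 ∧ phiAux r = 0 ∨ r % 3 = 1 ∧ phiAux r = 1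
          ∨ r % 3 = 2 ∧ phiAux r = -1 := by
        intro r
        rcases (show r % 3 = 0 ∨ r % 3 = 1 ∨ r % 3 = 2 by omega) with h | h | h
        · exact Or.inl ⟨h, by rw [phiAux_mod, h, phiAux_zero]⟩
        · exact Or.inr (Or.inl ⟨h, by rw [phiAux_mod, h, phiAux_one]⟩)
        · exact Or.inr (Or.inr ⟨h, by rw [phiAux_mod, h, phiAux_two]⟩)
      rcases hval (i - 1) with ⟨hr1, hv1⟩ | ⟨hr1, hv1⟩ | ⟨hr1, hv1⟩ <;>
        rcases hval i with ⟨hr2, hv2⟩ | ⟨hr2, hv2⟩ | ⟨hr2, hv2⟩ <;>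
        rcases hval (d - i) with ⟨hr3, hv3⟩ | ⟨hr3, hv3⟩ | ⟨hr3, hv3⟩ <;>
        rcases hval (d - i - 1) with ⟨hr4, hv4⟩ | ⟨hr4, hv4⟩ | ⟨hr4, hv4⟩ <;>
        first
        | omega
        | (rw [hv1] at ca1
           rw [hv2] at ca
           rw [hv3] at cb2
           rw [hv4] at cb3
           refine ⟨?_, ?_, ?_⟩ <;> linarith [e4, e5, hF, hmid, ca, ca1, cb2, cb3])
    -- conclude g = 0
    intro k
    rcases Nat.lt_or_ge (k : ℕ) (d + 1) with hk | hk
    · rw [← hcg k hk]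
      by_cases h1 : (k : ℕ) + 1 ≤ i
      · rw [hbl _ h1, habt.1, mul_zero]
      · by_cases h2 : (k : ℕ) + 1 = i + 1
        · rw [h2, hmid]
          exact habt.2.2
        · have hs : d + 1 - (k : ℕ) ≤ d - i := by omega
          have h := hbr (d + 1 - (k : ℕ)) hs
          have hidx : d + 2 - (d + 1 - (k : ℕ)) = (k : ℕ) + 1 := by omega
          rw [hidx] at h
          rw [h, habt.2.1, mul_zero]
    · have hk' : k = ⟨d + 1, by omega⟩ := Fin.ext (by
        have := k.isLt
        simp only [Fin.val_mk]
        omega)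
      rw [hk', ← ht]
      exact habt.2.2
  -- deriving the contradiction from the multiplicity hypothesis
  have hn2 : d + 2 ≤ n := by
    have := Fintype.card_le_of_injective W hWinj
    rw [Fintype.card_fin, hcard] at this
    exact this
  have hspan : Submodule.span ℝ (Set.range (fun k : Fin (d + 2) => f (Pi.single (W k) (1 : ℝ))))
      ≤ LinearMap.range f := by
    rw [Submodule.span_le]
    rintro _ ⟨k, rfl⟩
    exact LinearMap.mem_range_self _ _
  have hrk1 : Module.finrank ℝ (Submodule.span ℝ
      (Set.range (fun k : Fin (d + 2) => f (Pi.single (W k) (1 : ℝ))))) = d + 2 := by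
    rw [finrank_span_eq_card hLI, Fintype.card_fin]
  have hrk2 : d + 2 ≤ Module.finrank ℝ (LinearMap.range f) := by
    rw [← hrk1]
    exact Submodule.finrank_mono hspan
  have hrn := LinearMap.finrank_range_add_finrank_ker f
  rw [Module.finrank_fintype_fun_eq_card, hcard] at hrn
  have hker : Module.finrank ℝ (LinearMap.ker f) = n - d - 1 := hmult
  omega
end

section
/- Let G be a finite simple connected C-canonical graph of order n and diameter d with d ≡ 2 (mod 3) and m_G(−1) = n − d − 1, and let P = v_1 v_2 ⋯ v_{d+1} be a diameter path of G. Then any two distinct vertices of G not on P are non-adjacent. -/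
attribute [local instance] Classical.propDecidable

/-! ### Arithmetic layer: the period-3 sequence and its combinatorics -/

/-- period-3 pattern `0, 1, -1` by residue mod 3. -/
def uZ (n : ℕ) : ℤ := if n % 3 = 1 then 1 else if n % 3 = 2 then -1 else 0

def aZ (S : Finset ℕ) : ℤ := -∑ j ∈ S, uZ (j - 1)

/-- the closed-form value at position `i` of the kernel vector determined by the
path-neighbour set `S` of an off-path vertex. -/
def gZ (S : Finset ℕ) (i : ℕ) : ℤ := aZ S * uZ i - ∑ j ∈ S, uZ (i - j)

/-- the possible "patterns" of a path-neighbour set (relative to its minimum). -/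
def pats : Finset (Finset ℕ) := {{0}, {0,1}, {0,2}, {0,1,2}}

lemma uZ_congr {m n : ℕ} (h : m % 3 = n % 3) : uZ m = uZ n := by simp only [uZ, h]

lemma uZ_sum3 (k : ℕ) : uZ k + uZ (k+1) + uZ (k+2) = 0 := by
  have h : k % 3 = 0 ∨ k % 3 = 1 ∨ k % 3 = 2 := by omega
  rcases h with h | h | h <;>
    rw [uZ_congr (m := k+1) (n := (k%3+1)) (by omega),
        uZ_congr (m := k+2) (n := (k%3+2)) (by omega),
        uZ_congr (m := k) (n := (k%3)) (by omega), h] <;> decide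

lemma uZ_rec3 (m j : ℕ) (_hj : 1 ≤ j) :
    uZ (m+2-j) + uZ (m+1-j) + uZ (m-j) = if j = m+1 then 1 else 0 := by
  rcases Nat.lt_trichotomy j (m+1) with h | h | h
  · rw [if_neg (by omega), show m+2-j = (m-j)+2 by omega, show m+1-j = (m-j)+1 by omega]
    have := uZ_sum3 (m-j); linarith
  · rw [if_pos h, show m+2-j = 1 by omega, show m+1-j = 0 by omega, show m-j = 0 by omega]
    decide
  · rw [if_neg (by omega), show m+2-j = 0 by omega, show m+1-j = 0 by omega,
      show m-j = 0 by omega]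
    decide

lemma uZ_bdry {d j : ℕ} (hd : d % 3 = 2) (hj1 : 1 ≤ j) (hj2 : j ≤ d+1) :
    uZ (d-j) + uZ (d+1-j) = uZ (j-1) + (if j = d+1 then 1 else 0) := by
  rcases Nat.eq_or_lt_of_le hj2 with h | h
  · rw [if_pos h, show d - j = 0 by omega, show d+1-j = 0 by omega,
      uZ_congr (m := j-1) (n := 2) (by omega)]
    decide
  · rw [if_neg (by omega)]
    have h3 : j % 3 = 0 ∨ j % 3 = 1 ∨ j % 3 = 2 := by omega
    rcases h3 with h3 | h3 | h3 <;>
      rw [uZ_congr (m := d-j) (n := (5 - j % 3) % 3) (by omega),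
          uZ_congr (m := d+1-j) (n := (6 - j % 3) % 3) (by omega),
          uZ_congr (m := j-1) (n := (j % 3 + 2) % 3) (by omega), h3] <;> decide

/-- canonicalization: a nonempty set of spread ≤ 2 is a shifted pattern. -/
lemma canon {S : Finset ℕ} (hne : S.Nonempty)
    (hsp : ∀ i ∈ S, ∀ j ∈ S, i ≤ j + 2) :
    ∃ p P, P ∈ pats ∧ S = P.image (p + ·) ∧ p ∈ S ∧ ∀ i ∈ S, p ≤ i := by
  set p := S.min' hne with hp
  have hpS : p ∈ S := S.min'_mem hne
  have hmin : ∀ i ∈ S, p ≤ i := fun i hi => S.min'_le i hi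
  refine ⟨p, (Finset.range 3).filter (fun a => p + a ∈ S), ?_, ?_, hpS, hmin⟩
  · have h0 : 0 ∈ (Finset.range 3).filter (fun a => p + a ∈ S) := by
      simp only [Finset.mem_filter, Finset.mem_range]; exact ⟨by omega, by simpa using hpS⟩
    have hsub : (Finset.range 3).filter (fun a => p + a ∈ S) ∈
        ({0,1,2} : Finset ℕ).powerset := by
      refine Finset.mem_powerset.2 (fun a ha => ?_)
      simp only [Finset.mem_filter, Finset.mem_range] at ha
      simp only [Finset.mem_insert, Finset.mem_singleton]; omega
    set P := (Finset.range 3).filter (fun a => p + a ∈ S) with hP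
    clear_value P
    fin_cases hsub <;> first | (exfalso; exact absurd h0 (by decide)) | decide
  · ext k
    simp only [Finset.mem_image, Finset.mem_filter, Finset.mem_range]
    constructor
    · intro hk
      exact ⟨k - p, ⟨by have := hsp k hk p hpS; have := hmin k hk; omega,
        by have := hmin k hk; simpa [Nat.add_sub_cancel' (hmin k hk)] using hk⟩,
        by have := hmin k hk; omega⟩
    · rintro ⟨a, ⟨_, haS⟩, rfl⟩; exact haS

lemma sum_image_shift (p : ℕ) (P : Finset ℕ) (f : ℕ → ℤ) :
    ∑ i ∈ P.image (p + ·), f i = ∑ a ∈ P, f (p + a) :=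
  Finset.sum_image (fun a _ b _ h => by omega)

/-- shifting both windows by a common mod-3 translation preserves all `gZ` sums. -/
lemma bridge {p q p' q' : ℕ} (hp : 1 ≤ p) (hp' : 1 ≤ p') (_hq : 1 ≤ q) (_hq' : 1 ≤ q')
    (hmod : p % 3 = p' % 3) (hδ : q + p' = q' + p) (P Q : Finset ℕ) :
    ∑ i ∈ Q.image (q + ·), gZ (P.image (p + ·)) i
      = ∑ i ∈ Q.image (q' + ·), gZ (P.image (p' + ·)) i := by
  have hqmod : q % 3 = q' % 3 := by omega
  have haZ : aZ (P.image (p + ·)) = aZ (P.image (p' + ·)) := by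
    unfold aZ
    rw [sum_image_shift, sum_image_shift]
    exact congrArg _ (Finset.sum_congr rfl fun a _ => uZ_congr (by omega))
  rw [sum_image_shift, sum_image_shift]
  refine Finset.sum_congr rfl fun b _ => ?_
  unfold gZ
  rw [haZ, sum_image_shift, sum_image_shift,
    uZ_congr (m := q + b) (n := q' + b) (by omega)]
  have : ∑ a ∈ P, uZ (q + b - (p + a)) = ∑ a ∈ P, uZ (q' + b - (p' + a)) :=
    Finset.sum_congr rfl fun a _ => by
      rw [show q + b - (p + a) = q' + b - (p' + a) by omega]
  rw [this]

set_option maxRecDepth 10000 in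
lemma core_main : ∀ p' ∈ ({6,7,8} : Finset ℕ), ∀ q' ∈ Finset.Icc (p'-3) (p'+3),
    ∀ P ∈ pats, ∀ Q ∈ pats,
    (∑ i ∈ P.image (p' + ·), gZ (P.image (p' + ·)) i = -1) →
    (∑ i ∈ Q.image (q' + ·), gZ (Q.image (q' + ·)) i = -1) →
    (∑ i ∈ Q.image (q' + ·), gZ (P.image (p' + ·)) i = -1) →
    (∑ i ∈ P.image (p' + ·), gZ (Q.image (q' + ·)) i = -1) →
    ((p' = q' ∧ P = Q) ∨ (P = {0,1,2} ∧ p'+1 ∈ Q.image (q' + ·))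
      ∨ (Q = {0,1,2} ∧ q'+1 ∈ P.image (p' + ·))) := by decide

set_option maxRecDepth 10000 in
lemma core_w_a : ∀ p' ∈ ({6,7,8} : Finset ℕ), ∀ q' ∈ Finset.Icc (p'-3) (p'+3), ∀ Q ∈ pats,
    (∑ i ∈ Q.image (q' + ·), gZ (Q.image (q' + ·)) i = -1) →
    (p'+1 ∈ Q.image (q' + ·)) →
    (∑ i ∈ Q.image (q' + ·), gZ (({0,1,2} : Finset ℕ).image (p' + ·)) i ≠ 0) := by decide

set_option maxRecDepth 10000 in
lemma core_w_b : ∀ p' ∈ ({6,7,8} : Finset ℕ), ∀ q' ∈ Finset.Icc (p'-3) (p'+3), ∀ Q ∈ pats,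
    (∑ i ∈ Q.image (q' + ·), gZ (Q.image (q' + ·)) i = -1) →
    (∑ i ∈ Q.image (q' + ·), gZ (({0,1,2} : Finset ℕ).image (p' + ·)) i = -1) →
    (∀ a ∈ ({0,1,2} : Finset ℕ), ∀ b ∈ Q, q' + b ≤ p' + a + 3 ∧ p' + a ≤ q' + b + 3) →
    (p'+1 ∈ Q.image (q' + ·)) := by decide

lemma triple_image (p : ℕ) : ({0,1,2} : Finset ℕ).image (p + ·) = {p, p+1, p+2} := by
  ext k
  simp only [Finset.mem_image, Finset.mem_insert, Finset.mem_singleton]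
  constructor
  · rintro ⟨a, ha, rfl⟩; omega
  · intro h; rcases h with h | h | h <;> exact ⟨k - p, by omega, by omega⟩

lemma sum_nonempty {S T : Finset ℕ} (h : ∑ i ∈ T, gZ S i = -1) : T.Nonempty := by
  rcases T.eq_empty_or_nonempty with rfl | hne
  · simp at h
  · exact hne

lemma main_arith {S T : Finset ℕ}
    (hS1 : ∀ i ∈ S, 1 ≤ i) (hT1 : ∀ i ∈ T, 1 ≤ i)
    (hSsp : ∀ i ∈ S, ∀ j ∈ S, i ≤ j + 2) (hTsp : ∀ i ∈ T, ∀ j ∈ T, i ≤ j + 2)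
    (hcross : ∀ i ∈ S, ∀ j ∈ T, i ≤ j + 3 ∧ j ≤ i + 3)
    (e1 : ∑ i ∈ S, gZ S i = -1) (e2 : ∑ i ∈ T, gZ T i = -1)
    (e3 : ∑ i ∈ T, gZ S i = -1) (e4 : ∑ i ∈ S, gZ T i = -1) :
    S = T ∨ (∃ p, S = {p, p+1, p+2} ∧ p+1 ∈ T) ∨ (∃ q, T = {q, q+1, q+2} ∧ q+1 ∈ S) := by
  obtain ⟨p, P, hPpats, hSP, hpS, hpmin⟩ := canon (sum_nonempty e1) hSsp
  obtain ⟨q, Q, hQpats, hTQ, hqT, hqmin⟩ := canon (sum_nonempty e2) hTsp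
  have hp1 : 1 ≤ p := hS1 p hpS
  have hq1 : 1 ≤ q := hT1 q hqT
  have hwin := hcross p hpS q hqT
  obtain ⟨p', q', hp'1, hq'1, hmod, hδ, hp'rng, hq'rng⟩ :
      ∃ p' q', 1 ≤ p' ∧ 1 ≤ q' ∧ p % 3 = p' % 3 ∧ q + p' = q' + p ∧
        (6 ≤ p' ∧ p' ≤ 8) ∧ (p' - 3 ≤ q' ∧ q' ≤ p' + 3) :=
    ⟨p % 3 + 6, p % 3 + 6 + q - p, by omega, by omega, by omega, by omega, by omega, by omega⟩
  have hp'mem : p' ∈ ({6,7,8} : Finset ℕ) := by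
    simp only [Finset.mem_insert, Finset.mem_singleton]; omega
  have hq'mem : q' ∈ Finset.Icc (p'-3) (p'+3) := by
    simp only [Finset.mem_Icc]; omega
  have b1 := bridge hp1 hp'1 hp1 hp'1 hmod (by omega) P P
  have b2 := bridge hq1 hq'1 hq1 hq'1 (by omega) (by omega) Q Q
  have b3 := bridge hp1 hp'1 hq1 hq'1 hmod hδ P Q
  have b4 := bridge hq1 hq'1 hp1 hp'1 (by omega) (by omega) Q P
  rw [hSP] at e1; rw [hTQ] at e2; rw [hSP, hTQ] at e3; rw [hSP, hTQ] at e4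
  rw [b1] at e1; rw [b2] at e2; rw [b3] at e3; rw [b4] at e4
  rcases core_main p' hp'mem q' hq'mem P hPpats Q hQpats e1 e2 e3 e4 with
    ⟨hpq, hPQ⟩ | ⟨hP, hmem⟩ | ⟨hQ, hmem⟩
  · left; rw [hSP, hTQ, hPQ, show q = p by omega]
  · right; left
    refine ⟨p, by rw [hSP, hP, triple_image], ?_⟩
    rw [Finset.mem_image] at hmem
    obtain ⟨b, hb, hqb⟩ := hmem
    have : p + 1 = q + b := by omega
    rw [this, hTQ]
    exact Finset.mem_image.2 ⟨b, hb, rfl⟩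
  · right; right
    refine ⟨q, by rw [hTQ, hQ, triple_image], ?_⟩
    rw [Finset.mem_image] at hmem
    obtain ⟨a, ha, hpa⟩ := hmem
    have : q + 1 = p + a := by omega
    rw [this, hSP]
    exact Finset.mem_image.2 ⟨a, ha, rfl⟩

lemma w_arith_a {p : ℕ} {T : Finset ℕ} (hp1 : 1 ≤ p)
    (hT1 : ∀ i ∈ T, 1 ≤ i) (hTsp : ∀ i ∈ T, ∀ j ∈ T, i ≤ j + 2)
    (e2 : ∑ i ∈ T, gZ T i = -1) (hmem : p + 1 ∈ T) :
    ∑ i ∈ T, gZ ({p, p+1, p+2} : Finset ℕ) i ≠ 0 := by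
  obtain ⟨q, Q, hQpats, hTQ, hqT, hqmin⟩ := canon (sum_nonempty e2) hTsp
  have hq1 : 1 ≤ q := hT1 q hqT
  have hwin1 : q ≤ p + 1 := hqmin _ hmem
  have hwin2 : p + 1 ≤ q + 2 := hTsp _ hmem q hqT
  obtain ⟨p', q', hp'1, hq'1, hmod, hmodq, hδ, hp'rng, hq'rng⟩ :
      ∃ p' q', 1 ≤ p' ∧ 1 ≤ q' ∧ p % 3 = p' % 3 ∧ q % 3 = q' % 3 ∧ q + p' = q' + p ∧
        (6 ≤ p' ∧ p' ≤ 8) ∧ (p' - 3 ≤ q' ∧ q' ≤ p' + 3) :=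
    ⟨p % 3 + 6, p % 3 + 6 + q - p, by omega, by omega, by omega, by omega, by omega,
      by omega, by omega⟩
  have b2 := bridge hq1 hq'1 hq1 hq'1 hmodq (by omega) Q Q
  have b3 := bridge hp1 hp'1 hq1 hq'1 hmod hδ ({0,1,2} : Finset ℕ) Q
  rw [hTQ] at e2 hmem ⊢
  rw [b2] at e2
  rw [← triple_image p, b3]
  have hmem' : p' + 1 ∈ Q.image (q' + ·) := by
    rw [Finset.mem_image] at hmem ⊢
    obtain ⟨b, hb, hqb⟩ := hmem
    exact ⟨b, hb, by omega⟩
  exact core_w_a p' (by simp only [Finset.mem_insert, Finset.mem_singleton]; omega)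
    q' (by simp only [Finset.mem_Icc]; omega) Q hQpats e2 hmem'

lemma w_arith_b {p : ℕ} {T : Finset ℕ} (hp1 : 1 ≤ p)
    (hT1 : ∀ i ∈ T, 1 ≤ i) (hTsp : ∀ i ∈ T, ∀ j ∈ T, i ≤ j + 2)
    (e2 : ∑ i ∈ T, gZ T i = -1)
    (e3 : ∑ i ∈ T, gZ ({p, p+1, p+2} : Finset ℕ) i = -1)
    (hwin : ∀ i ∈ ({p, p+1, p+2} : Finset ℕ), ∀ j ∈ T, i ≤ j + 3 ∧ j ≤ i + 3) :
    p + 1 ∈ T := by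
  obtain ⟨q, Q, hQpats, hTQ, hqT, hqmin⟩ := canon (sum_nonempty e2) hTsp
  have hq1 : 1 ≤ q := hT1 q hqT
  have hwin0 := hwin p (by simp) q hqT
  obtain ⟨p', q', hp'1, hq'1, hmod, hmodq, hδ, hp'rng, hq'rng⟩ :
      ∃ p' q', 1 ≤ p' ∧ 1 ≤ q' ∧ p % 3 = p' % 3 ∧ q % 3 = q' % 3 ∧ q + p' = q' + p ∧
        (6 ≤ p' ∧ p' ≤ 8) ∧ (p' - 3 ≤ q' ∧ q' ≤ p' + 3) :=
    ⟨p % 3 + 6, p % 3 + 6 + q - p, by omega, by omega, by omega, by omega, by omega,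
      by omega, by omega⟩
  have b2 := bridge hq1 hq'1 hq1 hq'1 hmodq (by omega) Q Q
  have b3 := bridge hp1 hp'1 hq1 hq'1 hmod hδ ({0,1,2} : Finset ℕ) Q
  rw [hTQ] at e2 e3
  rw [← triple_image p, b3] at e3
  rw [b2] at e2
  have hwin' : ∀ a ∈ ({0,1,2} : Finset ℕ), ∀ b ∈ Q,
      q' + b ≤ p' + a + 3 ∧ p' + a ≤ q' + b + 3 := by
    intro a ha b hb
    have hqb : q + b ∈ T := by rw [hTQ]; exact Finset.mem_image.2 ⟨b, hb, rfl⟩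
    have := hwin (p + a)
      (by simp only [Finset.mem_insert, Finset.mem_singleton] at ha ⊢; omega) (q+b) hqb
    omega
  have := core_w_b p' (by simp only [Finset.mem_insert, Finset.mem_singleton]; omega)
    q' (by simp only [Finset.mem_Icc]; omega) Q hQpats e2 e3 hwin'
  rw [Finset.mem_image] at this
  obtain ⟨b, hb, hqb⟩ := this
  have : p + 1 = q + b := by omega
  rw [this, hTQ]
  exact Finset.mem_image.2 ⟨b, hb, rfl⟩

/-! ### The closed form for kernel vectors along the path -/

lemma keyCF {d : ℕ} (hd : d % 3 = 2) {S : Finset ℕ} (hS : S ⊆ Finset.Icc 1 (d+1))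
    (g : ℕ → ℝ) (c : ℝ) (hg0 : g 0 = 0) (hgtop : g (d+2) = 0)
    (hrow : ∀ i, 1 ≤ i → i ≤ d+1 →
      g (i-1) + g i + g (i+1) + c * (if i ∈ S then 1 else 0) = 0) :
    ∀ k, k ≤ d+1 → g k = c * ((gZ S k : ℤ) : ℝ) := by
  have hd2 : 2 ≤ d := by omega
  have hj1 : ∀ j ∈ S, 1 ≤ j := fun j hj => (Finset.mem_Icc.1 (hS hj)).1
  have hjd : ∀ j ∈ S, j ≤ d+1 := fun j hj => (Finset.mem_Icc.1 (hS hj)).2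
  have step1 : ∀ k, k ≤ d+1 →
      g k = g 1 * ((uZ k : ℤ) : ℝ) - c * ((∑ j ∈ S, uZ (k - j) : ℤ) : ℝ) := by
    intro k
    induction k using Nat.strong_induction_on with
    | _ k ih =>
      match k with
      | 0 =>
        intro _
        have h1 : (uZ 0 : ℤ) = 0 := by decide
        have h2 : ∑ j ∈ S, uZ (0 - j) = 0 := by
          refine Finset.sum_eq_zero fun j hj => ?_
          rw [Nat.zero_sub]; decide
        rw [hg0, h1, h2]; push_cast; ring
      | 1 =>
        intro _
        have h1 : (uZ 1 : ℤ) = 1 := by decide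
        have h2 : ∑ j ∈ S, uZ (1 - j) = 0 := by
          refine Finset.sum_eq_zero fun j hj => ?_
          rw [show 1 - j = 0 by have := hj1 j hj; omega]; decide
        rw [h1, h2]; push_cast; ring
      | (m+2) =>
        intro hk
        have hrow' := hrow (m+1) (by omega) (by omega)
        rw [show m+1-1 = m by omega] at hrow'
        have ihm := ih m (by omega) (by omega)
        have ihm1 := ih (m+1) (by omega) (by omega)
        have hzsum : ∑ j ∈ S, uZ (m+2-j) + ∑ j ∈ S, uZ (m+1-j) + ∑ j ∈ S, uZ (m-j)
            = (if m+1 ∈ S then 1 else 0 : ℤ) := by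
          rw [← Finset.sum_add_distrib, ← Finset.sum_add_distrib]
          rw [Finset.sum_congr rfl (fun j hj => uZ_rec3 m j (hj1 j hj))]
          simp [Finset.sum_ite_eq' S (m+1) (fun _ => (1:ℤ))]
        have hcast : ((∑ j ∈ S, uZ (m+2-j) : ℤ) : ℝ)
            = (if m+1 ∈ S then 1 else 0 : ℝ)
              - ((∑ j ∈ S, uZ (m+1-j) : ℤ) : ℝ) - ((∑ j ∈ S, uZ (m-j) : ℤ) : ℝ) := by
          have := congrArg (fun z : ℤ => (z : ℝ)) hzsum
          push_cast at this ⊢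
          split_ifs at this ⊢ <;> linarith
        have hu : ((uZ (m+2) : ℤ) : ℝ) = -((uZ (m+1) : ℤ) : ℝ) - ((uZ m : ℤ) : ℝ) := by
          have := congrArg (fun z : ℤ => (z : ℝ)) (uZ_sum3 m)
          push_cast at this ⊢; linarith
        rw [ihm, ihm1] at hrow'
        rw [hcast, hu]
        split_ifs at hrow' ⊢ <;> linarith
  have hbd : g 1 = c * ((aZ S : ℤ) : ℝ) := by
    have hrow' := hrow (d+1) (by omega) (by omega)
    rw [show d+1-1 = d by omega, show d+1+1 = d+2 by omega, hgtop] at hrow'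
    rw [step1 d (by omega), step1 (d+1) (by omega)] at hrow'
    have hud : uZ d = -1 := by rw [uZ_congr (n := 2) (by omega)]; decide
    have hud1 : uZ (d+1) = 0 := by rw [uZ_congr (n := 0) (by omega)]; decide
    have hzsum : ∑ j ∈ S, uZ (d-j) + ∑ j ∈ S, uZ (d+1-j)
        = ∑ j ∈ S, uZ (j-1) + (if d+1 ∈ S then 1 else 0 : ℤ) := by
      rw [← Finset.sum_add_distrib]
      rw [Finset.sum_congr rfl (fun j hj => uZ_bdry hd (hj1 j hj) (hjd j hj))]
      rw [Finset.sum_add_distrib]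
      simp [Finset.sum_ite_eq' S (d+1) (fun _ => (1:ℤ))]
    have haz : ((aZ S : ℤ) : ℝ) = -((∑ j ∈ S, uZ (j-1) : ℤ) : ℝ) := by
      unfold aZ; push_cast; ring
    rw [hud, hud1] at hrow'
    rw [haz]
    have hc := congrArg (fun z : ℤ => (z : ℝ)) hzsum
    push_cast at hc hrow' ⊢
    split_ifs at hrow' hc <;> linear_combination (-1 : ℝ) * hrow' - c * hc
  intro k hk
  rw [step1 k hk, hbd]
  unfold gZ
  push_cast
  ring

/-! ### The main theorem -/

set_option maxHeartbeats 1000000 in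
theorem stmt_9 {V : Type*} [Fintype V] (G : SimpleGraph V) (n d : ℕ)
    (hconn : G.Connected)
    (hcard : Fintype.card V = n)
    (hcanon : ∀ a b : V, (∀ z : V, (z = a ∨ G.Adj a z) ↔ (z = b ∨ G.Adj b z)) → a = b)
    (hd3 : d % 3 = 2)
    (hdiam : ∀ a b : V, G.dist a b ≤ d)
    (v : ℕ → V)
    (hpath : ∀ i ∈ Finset.Icc 1 (d + 1), ∀ j ∈ Finset.Icc 1 (d + 1),
      G.dist (v i) (v j) = max i j - min i j)
    (hmult : multNegOne G = n - d - 1)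
    (x y : V) (hxy : x ≠ y) (hxP : ∀ i ∈ Finset.Icc 1 (d + 1), x ≠ v i) (hyP : ∀ i ∈ Finset.Icc 1 (d + 1), y ≠ v i) :
    ¬ G.Adj x y := by
  intro hadj
  have hd2 : 2 ≤ d := by omega
  set I := Finset.Icc 1 (d+1) with hI
  -- injectivity of the path
  have hvinj : ∀ i ∈ I, ∀ j ∈ I, v i = v j → i = j := by
    intro i hi j hj h
    have h1 := hpath i hi j hj
    rw [h, SimpleGraph.dist_self] at h1
    rw [Finset.mem_Icc] at hi hj
    omega
  -- adjacency along the path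
  have hadjP : ∀ i ∈ I, ∀ j ∈ I, (G.Adj (v i) (v j) ↔ (i = j+1 ∨ j = i+1)) := by
    intro i hi j hj
    rw [← SimpleGraph.dist_eq_one_iff_adj, hpath i hi j hj]
    rw [Finset.mem_Icc] at hi hj
    omega
  set pI := I.image v with hpI
  have hoff : ∀ z : V, z ∉ pI ↔ ∀ i ∈ I, z ≠ v i := by
    intro z
    constructor
    · intro h i hi hz
      exact h (Finset.mem_image.2 ⟨i, hi, hz.symm⟩)
    · intro h hz
      obtain ⟨i, hi, hvi⟩ := Finset.mem_image.1 hz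
      exact h i hi hvi.symm
  have hoffx : x ∉ pI := (hoff x).2 hxP
  have hoffy : y ∉ pI := (hoff y).2 hyP
  -- kernel membership gives row equations
  set M := G.adjMatrix ℝ + 1 with hM
  set K := LinearMap.ker (Matrix.toLin' M) with hK
  have hker : ∀ f : V → ℝ, f ∈ K → ∀ z : V,
      f z + ∑ w ∈ G.neighborFinset z, f w = 0 := by
    intro f hf z
    have h0 : Matrix.toLin' M f = 0 := LinearMap.mem_ker.1 hf
    have := congrFun h0 z
    rw [Matrix.toLin'_apply, hM, Matrix.add_mulVec, Matrix.one_mulVec] at this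
    simp only [Pi.add_apply, Pi.zero_apply, SimpleGraph.adjMatrix_mulVec_apply] at this
    linarith
  -- row decomposition: path part and off-path part
  have hrowD : ∀ f : V → ℝ, f ∈ K → ∀ z : V,
      f z + (∑ k ∈ I.filter (fun k => G.Adj z (v k)), f (v k))
        + (∑ w ∈ (G.neighborFinset z).filter (· ∉ pI), f w) = 0 := by
    intro f hf z
    have h0 := hker f hf z
    have hsplit : ∑ w ∈ G.neighborFinset z, f w
        = (∑ w ∈ (G.neighborFinset z).filter (· ∈ pI), f w)
          + (∑ w ∈ (G.neighborFinset z).filter (· ∉ pI), f w) :=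
      (Finset.sum_filter_add_sum_filter_not _ _ _).symm
    have hseteq : (G.neighborFinset z).filter (· ∈ pI)
        = (I.filter (fun k => G.Adj z (v k))).image v := by
      ext w
      simp only [Finset.mem_filter, SimpleGraph.mem_neighborFinset, Finset.mem_image, hpI]
      constructor
      · rintro ⟨hw, i, hi, rfl⟩
        exact ⟨i, ⟨hi, hw⟩, rfl⟩
      · rintro ⟨i, ⟨hi, hw⟩, rfl⟩
        exact ⟨hw, i, hi, rfl⟩
    have himg : ∑ w ∈ (I.filter (fun k => G.Adj z (v k))).image v, f w
        = ∑ k ∈ I.filter (fun k => G.Adj z (v k)), f (v k) :=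
      Finset.sum_image (fun i hi j hj h =>
        hvinj i (Finset.mem_of_mem_filter i hi) j (Finset.mem_of_mem_filter j hj) h)
    rw [hsplit, hseteq, himg] at h0
    linarith
  -- residual sums for delta-like vectors
  have hres : ∀ (f : V → ℝ) (w₀ : V), w₀ ∉ pI → f w₀ = 1 →
      (∀ z, z ∉ pI → z ≠ w₀ → f z = 0) → ∀ z : V,
      ∑ w ∈ (G.neighborFinset z).filter (· ∉ pI), f w
        = if G.Adj z w₀ then (1:ℝ) else 0 := by
    intro f w₀ hw₀ hf1 hf0 z
    by_cases hzw : G.Adj z w₀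
    · rw [if_pos hzw]
      have hmem : w₀ ∈ (G.neighborFinset z).filter (· ∉ pI) := by
        simp only [Finset.mem_filter, SimpleGraph.mem_neighborFinset]
        exact ⟨hzw, hw₀⟩
      rw [Finset.sum_eq_single_of_mem w₀ hmem]
      · exact hf1
      · intro w hw hne
        simp only [Finset.mem_filter, SimpleGraph.mem_neighborFinset] at hw
        exact hf0 w hw.2 hne
    · rw [if_neg hzw]
      refine Finset.sum_eq_zero fun w hw => ?_
      simp only [Finset.mem_filter, SimpleGraph.mem_neighborFinset] at hw
      exact hf0 w hw.2 fun h => hzw (h ▸ hw.1)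
  -- path-neighbour sums for path rows
  have hpathsum : ∀ (f : V → ℝ), ∀ i ∈ I,
      ∑ k ∈ I.filter (fun k => G.Adj (v i) (v k)), f (v k)
        = (if i-1 ∈ I then f (v (i-1)) else 0) + (if i+1 ∈ I then f (v (i+1)) else 0) := by
    intro f i hi
    have hi' := Finset.mem_Icc.1 hi
    have hseteq : I.filter (fun k => G.Adj (v i) (v k))
        = ({i-1, i+1} : Finset ℕ).filter (· ∈ I) := by
      ext k
      simp only [Finset.mem_filter, Finset.mem_insert, Finset.mem_singleton]
      constructor
      · rintro ⟨hk, hadjk⟩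
        rw [hadjP i hi k hk] at hadjk
        exact ⟨by omega, hk⟩
      · rintro ⟨hk, hkI⟩
        refine ⟨hkI, (hadjP i hi k hkI).2 ?_⟩
        have := Finset.mem_Icc.1 hkI
        omega
    rw [hseteq, Finset.sum_filter, Finset.sum_pair (by omega : i-1 ≠ i+1)]
  -- construct the delta kernel vectors
  have hexists : ∀ w₀ : V, w₀ ∉ pI → ∃ f : V → ℝ, f ∈ K ∧ f w₀ = 1 ∧
      (∀ z, z ∉ pI → z ≠ w₀ → f z = 0) := by
    intro w₀ hw₀
    have hcardP : pI.card = d + 1 := by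
      rw [hpI, Finset.card_image_of_injOn (fun i hi j hj h => hvinj i hi j hj h)]
      rw [hI, Nat.card_Icc]
      omega
    have hL : ∃ L : K →ₗ[ℝ] ({z : V // z ∉ pI} → ℝ),
        ∀ (F : K) (z : {z : V // z ∉ pI}), L F z = (F : V → ℝ) z.1 :=
      ⟨(LinearMap.funLeft ℝ ℝ (Subtype.val : {z : V // z ∉ pI} → V)).comp K.subtype,
        fun F z => rfl⟩
    obtain ⟨L, hLapp⟩ := hL
    have hLinj : Function.Injective L := by
      rw [← LinearMap.ker_eq_bot]
      refine (Submodule.eq_bot_iff _).2 fun F hF => ?_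
      have hF0 : ∀ z : V, z ∉ pI → (F : V → ℝ) z = 0 := by
        intro z hz
        have := congrFun (LinearMap.mem_ker.1 hF) ⟨z, hz⟩
        rwa [hLapp] at this
      set g : ℕ → ℝ := fun k => if k ∈ I then (F : V → ℝ) (v k) else 0 with hg
      have hrowg : ∀ i, 1 ≤ i → i ≤ d+1 →
          g (i-1) + g i + g (i+1) + (0:ℝ) * (if i ∈ (∅ : Finset ℕ) then 1 else 0) = 0 := by
        intro i hi1 hi2
        have hiI : i ∈ I := Finset.mem_Icc.2 ⟨hi1, hi2⟩
        have h0 := hrowD (F : V → ℝ) F.2 (v i)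
        have hres0 : ∑ w ∈ (G.neighborFinset (v i)).filter (· ∉ pI), (F : V → ℝ) w = 0 :=
          Finset.sum_eq_zero fun w hw => by
            simp only [Finset.mem_filter] at hw
            exact hF0 w hw.2
        rw [hpathsum (F : V → ℝ) i hiI, hres0] at h0
        simp only [hg, if_pos hiI, Finset.notMem_empty, if_false, mul_zero, add_zero]
        linarith [h0]
      have hCF := keyCF hd3 (Finset.empty_subset _) g 0
        (by have hnot : (0:ℕ) ∉ I := by rw [hI, Finset.mem_Icc]; omega
            simp [hg, hnot])
        (by have hnot : (d+2 : ℕ) ∉ I := by rw [hI, Finset.mem_Icc]; omega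
            simp [hg, hnot]) hrowg
      have hgz : ∀ k ∈ I, (F : V → ℝ) (v k) = 0 := by
        intro k hk
        have hk' := Finset.mem_Icc.1 hk
        have := hCF k (by omega)
        rw [hg] at this
        simp only [if_pos hk] at this
        simp [this]
      have : (F : V → ℝ) = 0 := by
        funext z
        by_cases hz : z ∈ pI
        · obtain ⟨k, hk, rfl⟩ := Finset.mem_image.1 hz
          exact hgz k hk
        · exact hF0 z hz
      exact Subtype.ext this
    have hrk : Module.finrank ℝ K = Module.finrank ℝ ({z : V // z ∉ pI} → ℝ) := by
      have h1 : Module.finrank ℝ K = n - d - 1 := hmult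
      have h2 : Fintype.card {z : V // z ∉ pI} = n - (d + 1) := by
        have hsub : Fintype.card {z : V // z ∉ pI}
            = (Finset.univ.filter (fun z : V => z ∉ pI)).card :=
          Fintype.card_subtype _
        have hadd := Finset.card_filter_add_card_filter_not
          (s := (Finset.univ : Finset V)) (p := fun z : V => z ∈ pI)
        have hmemc : (Finset.univ.filter (fun z : V => z ∈ pI)).card = pI.card := by
          congr 1
          exact Finset.filter_univ_mem pI
        rw [Finset.card_univ, hcard] at hadd
        rw [hsub]
        rw [hmemc, hcardP] at hadd
        omega
      rw [h1, Module.finrank_fintype_fun_eq_card, h2]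
      omega
    have hLsurj : Function.Surjective L :=
      (LinearMap.injective_iff_surjective_of_finrank_eq_finrank hrk).1 hLinj
    obtain ⟨F, hF⟩ := hLsurj (fun z => if z.1 = w₀ then 1 else 0)
    refine ⟨(F : V → ℝ), F.2, ?_, ?_⟩
    · have := congrFun hF ⟨w₀, hw₀⟩
      rw [hLapp] at this
      simpa using this
    · intro z hz hzw
      have := congrFun hF ⟨z, hz⟩
      rw [hLapp] at this
      simpa [hzw] using this
  -- master equation over ℤ
  have hmaster : ∀ w₀, w₀ ∉ pI → ∀ z, z ∉ pI →
      (if G.Adj z w₀ then (1:ℤ) else 0) + (if z = w₀ then (1:ℤ) else 0)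
        + ∑ k ∈ pathNbrs G d v z, gZ (pathNbrs G d v w₀) k = 0 := by
    intro w₀ hw₀ z hz
    obtain ⟨f, hfK, hf1, hf0⟩ := hexists w₀ hw₀
    set S := pathNbrs G d v w₀ with hS
    have hSI : S ⊆ I := Finset.filter_subset _ _
    set g : ℕ → ℝ := fun k => if k ∈ I then f (v k) else 0 with hg
    have hrowg : ∀ i, 1 ≤ i → i ≤ d+1 →
        g (i-1) + g i + g (i+1) + (1:ℝ) * (if i ∈ S then 1 else 0) = 0 := by
      intro i hi1 hi2
      have hiI : i ∈ I := Finset.mem_Icc.2 ⟨hi1, hi2⟩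
      have h0 := hrowD f hfK (v i)
      rw [hpathsum f i hiI, hres f w₀ hw₀ hf1 hf0 (v i)] at h0
      have hadjiff : G.Adj (v i) w₀ ↔ i ∈ S := by
        rw [hS]
        unfold pathNbrs
        rw [Finset.mem_filter]
        constructor
        · intro h; exact ⟨hiI, h.symm⟩
        · intro h; exact h.2.symm
      have : (if G.Adj (v i) w₀ then (1:ℝ) else 0) = (if i ∈ S then (1:ℝ) else 0) := by
        split_ifs with h1 h2
        · rfl
        · exact absurd (hadjiff.1 h1) h2
        · exact absurd (hadjiff.2 ‹_›) h1
        · rfl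
      rw [this] at h0
      simp only [hg, if_pos hiI]
      linarith
    have hCF := keyCF hd3 (hSI.trans (by rw [hI])) g 1
      (by have hnot : (0:ℕ) ∉ I := by rw [hI, Finset.mem_Icc]; omega
          simp [hg, hnot])
      (by have hnot : (d+2 : ℕ) ∉ I := by rw [hI, Finset.mem_Icc]; omega
          simp [hg, hnot]) hrowg
    have hgval : ∀ k ∈ I, f (v k) = ((gZ S k : ℤ) : ℝ) := by
      intro k hk
      have hk' := Finset.mem_Icc.1 hk
      have := hCF k (by omega)
      rw [hg] at this
      simp only [if_pos hk] at this
      simp [this]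
    -- row at z
    have h0 := hrowD f hfK z
    rw [hres f w₀ hw₀ hf1 hf0 z] at h0
    have hfilter : I.filter (fun k => G.Adj z (v k)) = pathNbrs G d v z := by
      unfold pathNbrs; rw [hI]
    rw [hfilter] at h0
    have hsum : ∑ k ∈ pathNbrs G d v z, f (v k)
        = ((∑ k ∈ pathNbrs G d v z, gZ S k : ℤ) : ℝ) := by
      push_cast
      refine Finset.sum_congr rfl fun k hk => ?_
      exact hgval k (Finset.mem_of_mem_filter k hk)
    have hfz : f z = if z = w₀ then (1:ℝ) else 0 := by
      split_ifs with h
      · rw [h]; exact hf1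
      · exact hf0 z hz h
    rw [hsum, hfz] at h0
    have : ((if G.Adj z w₀ then (1:ℤ) else 0) : ℝ) + ((if z = w₀ then (1:ℤ) else 0) : ℝ)
        + ((∑ k ∈ pathNbrs G d v z, gZ S k : ℤ) : ℝ) = 0 := by
      split_ifs at h0 ⊢ <;> push_cast at h0 ⊢ <;> linarith
    exact_mod_cast this
  -- derived equations
  have hself : ∀ w₀, w₀ ∉ pI →
      ∑ k ∈ pathNbrs G d v w₀, gZ (pathNbrs G d v w₀) k = -1 := by
    intro w₀ hw₀
    have := hmaster w₀ hw₀ w₀ hw₀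
    rw [if_neg (G.irrefl), if_pos rfl] at this
    linarith
  have hcrossEq : ∀ w₀, w₀ ∉ pI → ∀ z, z ∉ pI → z ≠ w₀ →
      (if G.Adj z w₀ then (1:ℤ) else 0)
        = -∑ k ∈ pathNbrs G d v z, gZ (pathNbrs G d v w₀) k := by
    intro w₀ hw₀ z hz hzw
    have := hmaster w₀ hw₀ z hz
    rw [if_neg hzw] at this
    linarith
  -- window facts
  have hmem1 : ∀ w₀ : V, ∀ i ∈ pathNbrs G d v w₀, 1 ≤ i := by
    intro w₀ i hi
    have := Finset.mem_Icc.1 (Finset.mem_of_mem_filter i hi)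
    omega
  have hadjmem : ∀ w₀ : V, ∀ i ∈ pathNbrs G d v w₀, G.Adj w₀ (v i) ∧ i ∈ I := by
    intro w₀ i hi
    unfold pathNbrs at hi
    rw [Finset.mem_filter] at hi
    exact ⟨hi.2, hi.1⟩
  have hdist1 : ∀ w₀ : V, ∀ i ∈ pathNbrs G d v w₀, G.dist (v i) w₀ = 1 := by
    intro w₀ i hi
    rw [SimpleGraph.dist_comm, SimpleGraph.dist_eq_one_iff_adj]
    exact (hadjmem w₀ i hi).1
  have hsp : ∀ w₀ : V, ∀ i ∈ pathNbrs G d v w₀, ∀ j ∈ pathNbrs G d v w₀, i ≤ j + 2 := by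
    intro w₀ i hi j hj
    have h1 := hconn.dist_triangle (u := v i) (v := w₀) (w := v j)
    rw [hdist1 w₀ i hi] at h1
    rw [show G.dist w₀ (v j) = 1 from by
      rw [SimpleGraph.dist_comm]; exact hdist1 w₀ j hj] at h1
    rw [hpath i (hadjmem w₀ i hi).2 j (hadjmem w₀ j hj).2] at h1
    omega
  have hcross3 : ∀ a b : V, G.Adj a b →
      ∀ i ∈ pathNbrs G d v a, ∀ j ∈ pathNbrs G d v b, i ≤ j + 3 ∧ j ≤ i + 3 := by
    intro a b hab i hi j hj
    have h1 := hconn.dist_triangle (u := v i) (v := a) (w := v j)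
    have h2 := hconn.dist_triangle (u := a) (v := b) (w := v j)
    rw [hdist1 a i hi] at h1
    have hab1 : G.dist a b = 1 := SimpleGraph.dist_eq_one_iff_adj.2 hab
    rw [hab1] at h2
    have hbj : G.dist b (v j) = 1 := by
      rw [SimpleGraph.dist_comm]; exact hdist1 b j hj
    rw [hbj] at h2
    rw [hpath i (hadjmem a i hi).2 j (hadjmem b j hj).2] at h1
    omega
  -- the four equations for x and y
  set Sx := pathNbrs G d v x with hSx
  set Sy := pathNbrs G d v y with hSy
  have e1 : ∑ i ∈ Sx, gZ Sx i = -1 := hself x hoffx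
  have e2 : ∑ i ∈ Sy, gZ Sy i = -1 := hself y hoffy
  have e3 : ∑ i ∈ Sy, gZ Sx i = -1 := by
    have := hcrossEq x hoffx y hoffy hxy.symm
    rw [if_pos hadj.symm] at this
    linarith
  have e4 : ∑ i ∈ Sx, gZ Sy i = -1 := by
    have := hcrossEq y hoffy x hoffx hxy
    rw [if_pos hadj] at this
    linarith
  -- adjacency with path vertices via pathNbrs
  have hadjvx : ∀ w₀ : V, ∀ i ∈ I, (G.Adj w₀ (v i) ↔ i ∈ pathNbrs G d v w₀) := by
    intro w₀ i hi
    unfold pathNbrs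
    rw [Finset.mem_filter]
    exact ⟨fun h => ⟨hi, h⟩, fun h => h.2⟩
  -- the common "triple neighbourhood" contradiction
  have hTriple : ∀ a b : V, a ∉ pI → b ∉ pI → G.Adj a b →
      (∀ i ∈ I, a ≠ v i) → ∀ p, pathNbrs G d v a = {p, p+1, p+2} →
      p + 1 ∈ pathNbrs G d v b → False := by
    intro a b ha hb hab haP p hSa hpb
    have hpmem : p ∈ pathNbrs G d v a := by
      rw [hSa]; exact Finset.mem_insert_self p {p+1, p+2}
    have hp2mem : p + 2 ∈ pathNbrs G d v a := by
      rw [hSa]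
      exact Finset.mem_insert_of_mem (Finset.mem_insert_of_mem (Finset.mem_singleton_self (p+2)))
    have hp1mem : p + 1 ∈ pathNbrs G d v a := by
      rw [hSa]; exact Finset.mem_insert_of_mem (Finset.mem_insert_self (p+1) {p+2})
    have hpI1 := Finset.mem_Icc.1 (hadjmem a p hpmem).2
    have hpI2 := Finset.mem_Icc.1 (hadjmem a (p+2) hp2mem).2
    have hp1I : p + 1 ∈ I := (hadjmem a (p+1) hp1mem).2
    -- N[v (p+1)] = N[a], contradiction with canonicity
    have heq : v (p+1) = a := by
      apply hcanon
      intro z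
      by_cases hzp : z ∈ pI
      · obtain ⟨i, hiI, rfl⟩ := Finset.mem_image.1 hzp
        have hlhs : (v i = v (p+1) ∨ G.Adj (v (p+1)) (v i)) ↔ i ∈ pathNbrs G d v a := by
          constructor
          · intro h
            rcases h with h | h
            · have : i = p + 1 := hvinj i hiI (p+1) hp1I h
              rw [this]; exact hp1mem
            · have := (hadjP (p+1) hp1I i hiI).1 h
              rw [hSa]
              simp only [Finset.mem_insert, Finset.mem_singleton]
              omega
          · intro h
            rw [hSa] at h
            simp only [Finset.mem_insert, Finset.mem_singleton] at h
            rcases h with h | h | h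
            · right; exact (hadjP (p+1) hp1I i hiI).2 (by omega)
            · left; exact congrArg v h
            · right; exact (hadjP (p+1) hp1I i hiI).2 (by omega)
        have hrhs : (v i = a ∨ G.Adj a (v i)) ↔ i ∈ pathNbrs G d v a := by
          constructor
          · intro h
            rcases h with h | h
            · exact absurd h.symm (haP i hiI)
            · exact (hadjvx a i hiI).1 h
          · intro h
            right; exact (hadjmem a i h).1
        rw [hlhs, hrhs]
      · -- z off path
        by_cases hza : z = a
        · subst hza
          constructor
          · intro _; left; rfl
          · intro _; right
            exact ((hadjvx z (p+1) hp1I).2 hp1mem).symm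
        · have hnvp : z ≠ v (p+1) := by
            intro h; exact hzp (h ▸ Finset.mem_image.2 ⟨p+1, hp1I, rfl⟩)
          have hiff : G.Adj (v (p+1)) z ↔ G.Adj a z := by
            have hcz := hcrossEq a ha z hzp hza
            have hselz := hself z hzp
            constructor
            · intro h
              have hmem : p + 1 ∈ pathNbrs G d v z := (hadjvx z (p+1) hp1I).1 h.symm
              have hne := w_arith_a (by omega : 1 ≤ p) (hmem1 z) (hsp z)
                hselz hmem
              rw [← hSa] at hne
              by_contra hnadj
              rw [if_neg (fun hh => hnadj hh.symm)] at hcz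
              exact hne (by linarith)
            · intro h
              rw [if_pos h.symm] at hcz
              have hwin := hcross3 z a h.symm
              rw [hSa] at hcz hwin
              have hmem := w_arith_b (by omega : 1 ≤ p) (hmem1 z) (hsp z)
                hselz (by linarith) (fun i hi j hj => (hwin j hj i hi).symm.imp id id)
              exact ((hadjvx z (p+1) hp1I).2 hmem).symm
          constructor
          · intro h
            rcases h with h | h
            · exact (hnvp h).elim
            · right; exact hiff.1 h
          · intro h
            rcases h with h | h
            · exact (hza h).elim
            · right; exact hiff.2 h
    exact (haP (p+1) hp1I) heq.symm
  -- apply main classification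
  rcases main_arith (hmem1 x) (hmem1 y) (hsp x) (hsp y) (hcross3 x y hadj)
    e1 e2 e3 e4 with hST | ⟨p, hSxp, hpT⟩ | ⟨q, hSyq, hqS⟩
  · -- Sx = Sy : closed neighbourhoods of x and y coincide
    apply hxy
    apply hcanon
    intro z
    by_cases hzp : z ∈ pI
    · obtain ⟨i, hiI, rfl⟩ := Finset.mem_image.1 hzp
      have h1 : ¬ (v i = x) := fun h => (hxP i hiI) h.symm
      have h2 : ¬ (v i = y) := fun h => (hyP i hiI) h.symm
      simp only [h1, h2, false_or]
      rw [hadjvx x i hiI, hadjvx y i hiI, hST]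
    · by_cases hzx : z = x
      · subst hzx
        simp only [eq_self_iff_true, true_or, true_iff]
        by_cases hzy : z = y
        · left; exact hzy
        · right; exact hadj.symm
      · by_cases hzy : z = y
        · subst hzy
          simp only [eq_self_iff_true, true_or, iff_true]
          right; exact hadj
        · have hcx := hcrossEq x hoffx z hzp hzx
          have hcy := hcrossEq y hoffy z hzp hzy
          rw [← hST] at hcy
          have hiff : G.Adj x z ↔ G.Adj y z := by
            rw [← hcy] at hcx
            constructor
            · intro h
              by_contra hn
              rw [if_pos h.symm, if_neg (fun hh => hn hh.symm)] at hcx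
              norm_num at hcx
            · intro h
              by_contra hn
              rw [if_pos h.symm, if_neg (fun hh => hn hh.symm)] at hcx
              norm_num at hcx
          simp only [hzx, hzy, false_or]
          exact hiff
  · exact hTriple x y hoffx hoffy hadj hxP p hSxp hpT
  · exact hTriple y x hoffy hoffx hadj.symm hyP q hSyq hqS
end

section
/- Let G be a finite simple connected C-canonical graph of order n and diameter d with d ≡ 0 (mod 3) and m_G(−1) = n − d − 1, and let P = v_1 v_2 ⋯ v_{d+1} be a diameter path of G. If a vertex x of G not on P has exactly one neighbor on P, namely v_m, then m ≡ 1 (mod 3). -/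
attribute [local instance] Classical.propDecidable

/-- forward 3-periodic vanishing -/
lemma per0 (z : ℕ → ℝ) (K : ℕ) (h0 : z 0 = 0)
    (hrec : ∀ i, i + 2 ≤ K → z i + z (i + 1) + z (i + 2) = 0) :
    ∀ t, 3 * t ≤ K → z (3 * t) = 0 := by
  intro t
  induction t with
  | zero => intro _; simpa using h0
  | succ t ih =>
    intro h
    have h1 := hrec (3 * t) (by omega)
    have h2 := hrec (3 * t + 1) (by omega)
    have h3 := ih (by omega)
    have e1 : 3 * t + 1 + 1 = 3 * t + 2 := by omega
    have e2 : 3 * t + 1 + 2 = 3 * (t + 1) := by omega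
    rw [e1, e2] at h2
    linarith

lemma keyzero (d : ℕ) (z : ℕ → ℝ) (hd3 : d % 3 = 0) (h0 : z 0 = 0) (htop : z (d + 2) = 0)
    (hrec : ∀ i, i + 2 ≤ d + 2 → z i + z (i + 1) + z (i + 2) = 0) :
    ∀ j, j ≤ d + 2 → z j = 0 := by
  have hrev : ∀ i, i + 2 ≤ d + 2 → z (d + 2 - i) + z (d + 2 - (i + 1)) + z (d + 2 - (i + 2)) = 0 := by
    intro i hi
    have h := hrec (d - i) (by omega)
    rw [show d + 2 - i = d - i + 2 by omega, show d + 2 - (i + 1) = d - i + 1 by omega,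
      show d + 2 - (i + 2) = d - i by omega]
    linarith
  have hres0 : ∀ j, j ≤ d + 2 → j % 3 = 0 → z j = 0 := by
    intro j hj hj3
    have := per0 z (d + 2) h0 hrec (j / 3) (by omega)
    rwa [show 3 * (j / 3) = j by omega] at this
  have hres2 : ∀ j, j ≤ d + 2 → j % 3 = 2 → z j = 0 := by
    intro j hj hj3
    have := per0 (fun i => z (d + 2 - i)) (d + 2) (by simpa using htop) hrev ((d + 2 - j) / 3)
      (by omega)
    rwa [show d + 2 - 3 * ((d + 2 - j) / 3) = j by omega] at this
  intro j hj
  rcases (by omega : j % 3 = 0 ∨ j % 3 = 1 ∨ j % 3 = 2) with h | h | h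
  · exact hres0 j hj h
  · obtain ⟨i, rfl⟩ : ∃ i, j = i + 1 := ⟨j - 1, by omega⟩
    have hr := hrec i (by omega)
    have z1 := hres0 i (by omega) (by omega)
    have z2 := hres2 (i + 2) (by omega) (by omega)
    linarith
  · exact hres2 j hj h

lemma keymain (d m : ℕ) (z : ℕ → ℝ) (hd3 : d % 3 = 0) (hm1 : 1 ≤ m) (hm2 : m ≤ d + 1)
    (h0 : z 0 = 0) (htop : z (d + 2) = 0)
    (hrec : ∀ i, i + 2 ≤ d + 2 → i + 1 ≠ m → z i + z (i + 1) + z (i + 2) = 0)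
    (hzm : z m = -1) : m % 3 = 1 := by
  have hne0 : m % 3 ≠ 0 := by
    intro h
    have := per0 z m h0 (fun i hi => hrec i (by omega) (by omega)) (m / 3) (by omega)
    rw [show 3 * (m / 3) = m by omega] at this
    linarith
  have hne2 : m % 3 ≠ 2 := by
    intro h
    have hrev : ∀ i, i + 2 ≤ d + 2 - m →
        z (d + 2 - i) + z (d + 2 - (i + 1)) + z (d + 2 - (i + 2)) = 0 := by
      intro i hi
      have hr := hrec (d - i) (by omega) (by omega)
      rw [show d + 2 - i = d - i + 2 by omega, show d + 2 - (i + 1) = d - i + 1 by omega,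
        show d + 2 - (i + 2) = d - i by omega]
      linarith
    have := per0 (fun i => z (d + 2 - i)) (d + 2 - m) (by simpa using htop) hrev
      ((d + 2 - m) / 3) (by omega)
    rw [show d + 2 - 3 * ((d + 2 - m) / 3) = m by omega] at this
    linarith
  omega

theorem stmt_10 {V : Type*} [Fintype V] (G : SimpleGraph V) (n d : ℕ)
    (hconn : G.Connected)
    (hcard : Fintype.card V = n)
    (hcanon : ∀ a b : V, (∀ z : V, (z = a ∨ G.Adj a z) ↔ (z = b ∨ G.Adj b z)) → a = b)
    (hd3 : d % 3 = 0)
    (hdiam : ∀ a b : V, G.dist a b ≤ d)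
    (v : ℕ → V)
    (hpath : ∀ i ∈ Finset.Icc 1 (d + 1), ∀ j ∈ Finset.Icc 1 (d + 1),
      G.dist (v i) (v j) = max i j - min i j)
    (hmult : multNegOne G = n - d - 1)
    (x : V) (hxP : ∀ i ∈ Finset.Icc 1 (d + 1), x ≠ v i) (m : ℕ) (hNP : pathNbrs G d v x = {m}) :
    m % 3 = 1 := by
  classical
  set M : Matrix V V ℝ := G.adjMatrix ℝ + 1 with hMdef
  -- membership facts for m
  have hmmem : m ∈ Finset.Icc 1 (d + 1) ∧ G.Adj x (v m) := by
    have h : m ∈ pathNbrs G d v x := by rw [hNP]; exact Finset.mem_singleton_self m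
    simpa [pathNbrs, Finset.mem_filter] using h
  have hm1 : 1 ≤ m := (Finset.mem_Icc.mp hmmem.1).1
  have hm2 : m ≤ d + 1 := (Finset.mem_Icc.mp hmmem.1).2
  have hadjx : ∀ i, i ∈ Finset.Icc 1 (d + 1) → (G.Adj x (v i) ↔ i = m) := by
    intro i hi
    constructor
    · intro ha
      have : i ∈ pathNbrs G d v x := by
        simp only [pathNbrs, Finset.mem_filter]; exact ⟨hi, ha⟩
      rw [hNP] at this
      simpa using this
    · rintro rfl; exact hmmem.2
  -- distinctness of path vertices
  have hvinj : ∀ i ∈ Finset.Icc 1 (d + 1), ∀ j ∈ Finset.Icc 1 (d + 1), i ≠ j → v i ≠ v j := by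
    intro i hi j hj hij heq
    have h := hpath i hi j hj
    rw [heq, SimpleGraph.dist_self] at h
    rw [Finset.mem_Icc] at hi hj
    omega
  -- adjacency among path vertices
  have hadjv : ∀ i ∈ Finset.Icc 1 (d + 1), ∀ j ∈ Finset.Icc 1 (d + 1),
      (G.Adj (v i) (v j) ↔ (i = j + 1 ∨ j = i + 1)) := by
    intro i hi j hj
    rw [← SimpleGraph.dist_eq_one_iff_adj, hpath i hi j hj]
    rw [Finset.mem_Icc] at hi hj
    omega
  -- matrix entries
  have hMentry : ∀ a b : V, M a b = (if G.Adj a b then 1 else 0) + (if a = b then 1 else 0) := by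
    intro a b
    simp [hMdef, Matrix.add_apply, SimpleGraph.adjMatrix_apply, Matrix.one_apply]
  -- the path as a finset
  set P : Finset V := (Finset.Icc 1 (d + 1)).image v with hPdef
  have hxnotP : x ∉ P := by
    intro hx
    rw [hPdef, Finset.mem_image] at hx
    obtain ⟨i, hi, hvi⟩ := hx
    exact hxP i hi hvi.symm
  have hcardP : P.card = d + 1 := by
    rw [hPdef, Finset.card_image_of_injOn (fun a ha b hb hab => by
      by_contra hne; exact hvinj a ha b hb hne hab)]
    simp
  -- the auxiliary sequence
  set Z : (V → ℝ) → ℕ → ℝ := fun y i => if i ∈ Finset.Icc 1 (d + 1) then y (v i) else 0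
    with hZdef
  have hZ0 : ∀ y, Z y 0 = 0 := by intro y; simp [hZdef]
  have hZtop : ∀ y, Z y (d + 2) = 0 := by
    intro y; simp only [hZdef]; rw [if_neg]; simp [Finset.mem_Icc]
  -- row computation
  have hrowlemma : ∀ y : V → ℝ, Matrix.toLin' M y = 0 → (∀ w, w ∉ P → w ≠ x → y w = 0) →
      (y x + Z y m = 0) ∧
      (∀ i, i + 2 ≤ d + 2 →
        (if i + 1 = m then y x else 0) + (Z y i + Z y (i + 1) + Z y (i + 2)) = 0) := by
    intro y hker hvan
    have hrow : ∀ u, ∑ w : V, M u w * y w = 0 := by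
      intro u
      have h2 : M.mulVec y = 0 := by rwa [Matrix.toLin'_apply] at hker
      simpa [Matrix.mulVec, dotProduct] using congrFun h2 u
    have hsum : ∀ u, M u x * y x + ∑ i ∈ Finset.Icc 1 (d + 1), M u (v i) * y (v i) = 0 := by
      intro u
      have h1 : ∑ w ∈ insert x P, M u w * y w = ∑ w : V, M u w * y w := by
        apply Finset.sum_subset (Finset.subset_univ _)
        intro w _ hw
        simp only [Finset.mem_insert, not_or] at hw
        rw [hvan w hw.2 hw.1, mul_zero]
      have h2 : ∑ w ∈ P, M u w * y w = ∑ i ∈ Finset.Icc 1 (d + 1), M u (v i) * y (v i) := by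
        rw [hPdef]
        apply Finset.sum_image
        intro a ha b hb hab
        by_contra hne; exact hvinj a ha b hb hne hab
      have h3 := hrow u
      rw [← h1, Finset.sum_insert hxnotP, h2] at h3
      exact h3
    constructor
    · -- row at x
      have h := hsum x
      have hMxx : M x x = 1 := by simp [hMentry]
      have hterm : ∀ i ∈ Finset.Icc 1 (d + 1), M x (v i) * y (v i)
          = if i = m then y (v i) else 0 := by
        intro i hi
        rw [hMentry]
        have hne : x ≠ v i := hxP i hi
        rw [if_neg hne]
        by_cases him : i = m
        · rw [if_pos ((hadjx i hi).mpr him), if_pos him]; ring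
        · rw [if_neg (fun ha => him ((hadjx i hi).mp ha)), if_neg him]; ring
      rw [Finset.sum_congr rfl hterm, Finset.sum_ite_eq', if_pos hmmem.1, hMxx, one_mul] at h
      have hZm : Z y m = y (v m) := by rw [hZdef]; simp only []; rw [if_pos hmmem.1]
      rw [hZm]; exact h
    · -- rows along the path
      intro i hi2
      have hj : i + 1 ∈ Finset.Icc 1 (d + 1) := by rw [Finset.mem_Icc]; omega
      have h := hsum (v (i + 1))
      have hMvx : M (v (i + 1)) x = if i + 1 = m then 1 else 0 := by
        rw [hMentry]
        have hne : v (i + 1) ≠ x := fun he => hxP (i + 1) hj he.symm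
        rw [if_neg hne]
        by_cases him : i + 1 = m
        · rw [if_pos (G.adj_symm ((hadjx (i + 1) hj).mpr him)), if_pos him]; ring
        · rw [if_neg (fun ha => him ((hadjx (i + 1) hj).mp (G.adj_symm ha))), if_neg him]; ring
      have hterm : ∀ jx ∈ Finset.Icc 1 (d + 1), M (v (i + 1)) (v jx) * y (v jx)
          = (if jx = i then y (v jx) else 0) + ((if jx = i + 1 then y (v jx) else 0)
            + (if jx = i + 2 then y (v jx) else 0)) := by
        intro jx hjx
        rw [hMentry]
        have hmem := Finset.mem_Icc.mp hjx
        by_cases h1 : jx = i + 1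
        · subst h1
          rw [if_neg (G.irrefl), if_pos rfl, if_neg (by omega), if_pos rfl, if_neg (by omega)]
          ring
        · have hnev : v (i + 1) ≠ v jx := hvinj (i + 1) hj jx hjx (fun he => h1 he.symm)
          rw [if_neg hnev]
          have hadj : G.Adj (v (i + 1)) (v jx) ↔ (i + 1 = jx + 1 ∨ jx = i + 1 + 1) :=
            hadjv (i + 1) hj jx hjx
          by_cases h2 : jx = i
          · have hi1 : 1 ≤ i := by omega
            rw [if_pos (hadj.mpr (by omega)), if_pos h2, if_neg (by omega), if_neg (by omega)]
            ring
          · by_cases h3 : jx = i + 2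
            · rw [if_pos (hadj.mpr (by omega)), if_neg h2, if_neg h1, if_pos h3]; ring
            · rw [if_neg (fun ha => by rcases hadj.mp ha with h | h <;> omega),
                if_neg h2, if_neg h1, if_neg h3]
              ring
      rw [Finset.sum_congr rfl hterm, Finset.sum_add_distrib, Finset.sum_add_distrib,
        Finset.sum_ite_eq', Finset.sum_ite_eq', Finset.sum_ite_eq', hMvx] at h
      have e1 : (if i ∈ Finset.Icc 1 (d + 1) then y (v i) else 0) = Z y i := by rw [hZdef]
      have e2 : (if i + 1 ∈ Finset.Icc 1 (d + 1) then y (v (i + 1)) else 0) = Z y (i + 1) := by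
        rw [hZdef]
      have e3 : (if i + 2 ∈ Finset.Icc 1 (d + 1) then y (v (i + 2)) else 0) = Z y (i + 2) := by
        rw [hZdef]
      rw [e1, e2, e3] at h
      by_cases him : i + 1 = m
      · rw [if_pos him] at h ⊢; rw [one_mul] at h; linarith
      · rw [if_neg him] at h ⊢; rw [zero_mul] at h; linarith
  -- kernel vectors vanishing off the path are zero
  have hker0 : ∀ y : V → ℝ, Matrix.toLin' M y = 0 → (∀ w, w ∉ P → y w = 0) → y = 0 := by
    intro y hker hvan
    have hr := hrowlemma y hker (fun w hw _ => hvan w hw)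
    have hyx : y x = 0 := hvan x hxnotP
    have hrec : ∀ i, i + 2 ≤ d + 2 → Z y i + Z y (i + 1) + Z y (i + 2) = 0 := by
      intro i hi
      have := hr.2 i hi
      by_cases him : i + 1 = m
      · rw [if_pos him, hyx] at this; linarith
      · rw [if_neg him] at this; linarith
    have hz := keyzero d (Z y) hd3 (hZ0 y) (hZtop y) hrec
    funext u
    by_cases hu : u ∈ P
    · rw [hPdef, Finset.mem_image] at hu
      obtain ⟨i, hi, rfl⟩ := hu
      have := hz i (by have := Finset.mem_Icc.mp hi; omega)
      rw [hZdef] at this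
      simp only [] at this
      rw [if_pos hi] at this
      simpa using this
    · simpa using hvan u hu
  -- dimension count and surjectivity
  have hfr1 : Module.finrank ℝ (LinearMap.ker (Matrix.toLin' M)) = n - d - 1 := hmult
  have hfr2 : Module.finrank ℝ ((Pᶜ : Finset V) → ℝ) = n - d - 1 := by
    rw [Module.finrank_pi ℝ, Fintype.card_coe, Finset.card_compl, hcardP, hcard]
    omega
  set π : (LinearMap.ker (Matrix.toLin' M)) →ₗ[ℝ] ((Pᶜ : Finset V) → ℝ) :=
    (LinearMap.funLeft ℝ ℝ (fun w : (Pᶜ : Finset V) => (w : V))).comp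
      (LinearMap.ker (Matrix.toLin' M)).subtype with hπdef
  have hπapp : ∀ (a : LinearMap.ker (Matrix.toLin' M)) (w : (Pᶜ : Finset V)),
      π a w = a.1 w := by intro a w; rfl
  have hπinj : Function.Injective π := by
    intro a b hab
    apply Subtype.ext
    have hk : Matrix.toLin' M (a.1 - b.1) = 0 := by
      rw [map_sub, LinearMap.mem_ker.mp a.2, LinearMap.mem_ker.mp b.2, sub_zero]
    have hv : ∀ w, w ∉ P → (a.1 - b.1) w = 0 := by
      intro w hw
      have := congrFun hab ⟨w, Finset.mem_compl.mpr hw⟩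
      rw [hπapp, hπapp] at this
      simp [this]
    have := hker0 _ hk hv
    have := sub_eq_zero.mp this
    exact this
  have hπsurj : Function.Surjective π :=
    (LinearMap.injective_iff_surjective_of_finrank_eq_finrank (by rw [hfr1, hfr2])).mp hπinj
  obtain ⟨y, hy⟩ := hπsurj (fun w => if (w : V) = x then 1 else 0)
  have hxc : x ∈ Pᶜ := Finset.mem_compl.mpr hxnotP
  have hyx : y.1 x = 1 := by
    have := congrFun hy ⟨x, hxc⟩
    rw [hπapp] at this
    simpa using this
  have hyvan : ∀ w, w ∉ P → w ≠ x → y.1 w = 0 := by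
    intro w hw hwx
    have := congrFun hy ⟨w, Finset.mem_compl.mpr hw⟩
    rw [hπapp] at this
    simpa [hwx] using this
  have hr := hrowlemma y.1 (LinearMap.mem_ker.mp y.2) hyvan
  have hzm : Z y.1 m = -1 := by have := hr.1; rw [hyx] at this; linarith
  have hrec : ∀ i, i + 2 ≤ d + 2 → i + 1 ≠ m → Z y.1 i + Z y.1 (i + 1) + Z y.1 (i + 2) = 0 := by
    intro i hi him
    have := hr.2 i hi
    rw [if_neg him] at this
    linarith
  exact keymain d m (Z y.1) hd3 hm1 hm2 (hZ0 y.1) (hZtop y.1) hrec hzm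
end
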